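/- arXiv:1501.04542 — 4 statements merged into one kernel-verified Lean document; each statement's English description precedes it below -/
import Mathlib

section
/- Let ζ₁,…,ζₙ be i.i.d. real random variables, S_i the random walk, σ = max{i ≤ n : S_i ≤ 0}. Define N⁺ = Σ_{i=1}^σ 1{S_i ≥ 0} and →G = max{i ≤ σ : S_i = max_{0≤j≤σ} S_j}. Then N⁺ and →G have the same distribution. -/
open Finset
open scoped ENNReal

namespace SA8

noncomputable section

def W (k : ℕ) (y : ℕ → ℝ) : ℝ := ∑ j ∈ Finset.range k, y j

def Nst (k : ℕ) (y : ℕ → ℝ) : ℕ :=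
  ∑ i ∈ Finset.Icc 1 k, if 0 ≤ W i y then 1 else 0

def Mx : ℕ → (ℕ → ℝ) → ℝ
  | 0, _ => 0
  | (k+1), y => max (W (k+1) y) (Mx k y)

def Gst : ℕ → (ℕ → ℝ) → ℕ
  | 0, _ => 0
  | (k+1), y => if Mx k y ≤ W (k+1) y then k+1 else Gst k y

lemma W_zero (y : ℕ → ℝ) : W 0 y = 0 := by simp [W]

lemma W_succ (k : ℕ) (y : ℕ → ℝ) : W (k+1) y = W k y + y k := by
  simp [W, Finset.sum_range_succ]

lemma Nst_zero (y : ℕ → ℝ) : Nst 0 y = 0 := by simp [Nst]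

lemma Nst_succ (k : ℕ) (y : ℕ → ℝ) :
    Nst (k+1) y = Nst k y + (if 0 ≤ W (k+1) y then 1 else 0) := by
  simp only [Nst]
  exact Finset.sum_Icc_succ_top (by omega) _

lemma Mx_nonneg (k : ℕ) (y : ℕ → ℝ) : 0 ≤ Mx k y := by
  induction k with
  | zero => simp [Mx]
  | succ k ih => simp only [Mx]; exact le_max_of_le_right ih

lemma W_le_Mx (k : ℕ) (y : ℕ → ℝ) : W k y ≤ Mx k y := by
  cases k with
  | zero => simp [Mx, W]
  | succ k => simp only [Mx]; exact le_max_left _ _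

-- congruence lemmas
lemma W_congr {k : ℕ} {y z : ℕ → ℝ} (h : ∀ m, m < k → y m = z m) : W k y = W k z :=
  Finset.sum_congr rfl (fun m hm => h m (Finset.mem_range.mp hm))

lemma Nst_congr {k : ℕ} {y z : ℕ → ℝ} (h : ∀ m, m < k → y m = z m) : Nst k y = Nst k z := by
  refine Finset.sum_congr rfl (fun i hi => ?_)
  have hik : i ≤ k := (Finset.mem_Icc.mp hi).2
  rw [W_congr (fun m hm => h m (lt_of_lt_of_le hm hik))]

lemma Mx_congr {k : ℕ} {y z : ℕ → ℝ} (h : ∀ m, m < k → y m = z m) : Mx k y = Mx k z := by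
  induction k with
  | zero => simp [Mx]
  | succ k ih =>
    simp only [Mx]
    rw [W_congr (fun m hm => h m hm), ih (fun m hm => h m (hm.trans (Nat.lt_succ_self k)))]

lemma Gst_congr {k : ℕ} {y z : ℕ → ℝ} (h : ∀ m, m < k → y m = z m) : Gst k y = Gst k z := by
  induction k with
  | zero => simp [Gst]
  | succ k ih =>
    simp only [Gst]
    rw [W_congr (fun m hm => h m hm),
      Mx_congr (fun m hm => h m (hm.trans (Nat.lt_succ_self k))),
      ih (fun m hm => h m (hm.trans (Nat.lt_succ_self k)))]

-- cons
def cons (c : ℝ) (y : ℕ → ℝ) : ℕ → ℝ := fun m => Nat.casesOn m c y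

@[simp] lemma cons_zero (c : ℝ) (y : ℕ → ℝ) : cons c y 0 = c := rfl
@[simp] lemma cons_succ (c : ℝ) (y : ℕ → ℝ) (m : ℕ) : cons c y (m+1) = y m := rfl

lemma W_cons (c : ℝ) (y : ℕ → ℝ) (i : ℕ) : W (i+1) (cons c y) = c + W i y := by
  induction i with
  | zero => simp [W_succ, W_zero]
  | succ i ih => rw [W_succ, ih, W_succ, cons_succ]; ring

lemma Mx_cons (c : ℝ) (y : ℕ → ℝ) (i : ℕ) :
    Mx (i+1) (cons c y) = max 0 (c + Mx i y) := by
  induction i with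
  | zero =>
    show max (W 1 (cons c y)) (Mx 0 (cons c y)) = max 0 (c + Mx 0 y)
    rw [show Mx 0 (cons c y) = 0 from rfl, show Mx 0 y = 0 from rfl, W_cons, W_zero, add_zero]
    exact max_comm c 0
  | succ i ih =>
    show max (W (i+2) (cons c y)) (Mx (i+1) (cons c y)) = max 0 (c + Mx (i+1) y)
    rw [W_cons, ih, show Mx (i+1) y = max (W (i+1) y) (Mx i y) from rfl, ← max_add_add_left]
    exact max_left_comm _ _ _

lemma Gst_cons (c : ℝ) (y : ℕ → ℝ) (i : ℕ) (h : 0 ≤ c + Mx i y) :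
    Gst (i+1) (cons c y) = Gst i y + 1 := by
  induction i with
  | zero =>
    have h0 : 0 ≤ c := by simpa [Mx] using h
    simp [Gst, Mx, W_cons, W_zero, h0]
  | succ i ih =>
    show (if Mx (i+1) (cons c y) ≤ W (i+2) (cons c y) then i+2 else Gst (i+1) (cons c y)) = _
    rw [W_cons, Mx_cons]
    by_cases hA : Mx i y ≤ W (i+1) y
    · have hmx : Mx (i+1) y = W (i+1) y := by
        simp only [Mx]; exact max_eq_left hA
      have h1 : 0 ≤ c + W (i+1) y := by rw [← hmx]; exact h
      have h2 : max 0 (c + Mx i y) ≤ c + W (i+1) y :=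
        max_le h1 (by linarith)
      rw [if_pos h2]
      have : Gst (i+1) y = i+1 := by simp only [Gst]; rw [if_pos hA]
      rw [this]
    · push_neg at hA
      have hmx : Mx (i+1) y = Mx i y := by
        simp only [Mx]; exact max_eq_right hA.le
      have h' : 0 ≤ c + Mx i y := by rw [← hmx]; exact h
      have h2 : ¬ (max 0 (c + Mx i y) ≤ c + W (i+1) y) := by
        push_neg
        calc c + W (i+1) y < c + Mx i y := by linarith
        _ ≤ max 0 (c + Mx i y) := le_max_right _ _
      rw [if_neg h2, ih h']
      have : Gst (i+1) y = Gst i y := by simp only [Gst]; rw [if_neg (by push_neg; exact hA)]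
      rw [this]





-- ### permutation machinery

def pe (k : ℕ) (π : Equiv.Perm (Fin k)) : ℕ → ℕ :=
  fun m => if h : m < k then (π ⟨m, h⟩ : ℕ) else m

lemma pe_lt {k m : ℕ} (π : Equiv.Perm (Fin k)) (h : m < k) : pe k π m = (π ⟨m, h⟩ : ℕ) :=
  dif_pos h

lemma pe_ge {k m : ℕ} (π : Equiv.Perm (Fin k)) (h : k ≤ m) : pe k π m = m :=
  dif_neg (by omega)

lemma W_pe_base (k : ℕ) (π : Equiv.Perm (Fin k)) (y : ℕ → ℝ) :
    W k (y ∘ pe k π) = W k y := by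
  unfold W
  rw [← Fin.sum_univ_eq_sum_range (fun m => (y ∘ pe k π) m) k,
      ← Fin.sum_univ_eq_sum_range (fun m => y m) k]
  rw [← Equiv.sum_comp π (fun i : Fin k => y (i : ℕ))]
  refine Finset.sum_congr rfl (fun i _ => ?_)
  simp only [Function.comp_apply]
  rw [pe_lt π i.isLt]

lemma W_pe (k : ℕ) (π : Equiv.Perm (Fin k)) (y : ℕ → ℝ) :
    ∀ i, k ≤ i → W i (y ∘ pe k π) = W i y := by
  intro i hi
  induction i, hi using Nat.le_induction with
  | base => exact W_pe_base k π y
  | succ i hi ih =>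
    rw [W_succ, W_succ, ih]
    simp only [Function.comp_apply]
    rw [pe_ge π (by omega)]

-- cyclic permutation: 0 ↦ last, m+1 ↦ castSucc m
def cyc (k : ℕ) : Equiv.Perm (Fin (k+1)) where
  toFun := Fin.cases (Fin.last k) Fin.castSucc
  invFun := Fin.lastCases 0 Fin.succ
  left_inv := by
    intro i
    induction i using Fin.cases with
    | zero => simp
    | succ m => simp
  right_inv := by
    intro i
    induction i using Fin.lastCases with
    | last => simp
    | cast m => simp

@[simp] lemma cyc_zero (k : ℕ) : cyc k 0 = Fin.last k := rfl

@[simp] lemma cyc_succ (k : ℕ) (m : Fin k) : cyc k m.succ = m.castSucc := by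
  simp [cyc]

def emb (k : ℕ) (p : Fin (k+1)) : ℕ → ℕ :=
  fun m => if h : m < k then (p.succAbove ⟨m, h⟩ : ℕ) else m

-- extension of a tuple
def ext (k : ℕ) (w : Fin k → ℝ) : ℕ → ℝ := fun m => if h : m < k then w ⟨m, h⟩ else 0

lemma exists_perm_factor {α β : Type*} {f g : α → β} (hf : Function.Injective f)
    (hg : Function.Injective g) (h : Set.range f = Set.range g) :
    ∃ τ : Equiv.Perm α, ∀ a, f a = g (τ a) := by
  refine ⟨(Equiv.ofInjective f hf).trans ((Equiv.setCongr h).trans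
    (Equiv.ofInjective g hg).symm), fun a => ?_⟩
  simp only [Equiv.trans_apply]
  rw [Equiv.apply_ofInjective_symm hg]
  rfl

lemma range_swap_succ (k : ℕ) (p : Fin (k+1)) :
    Set.range (fun m : Fin k => Equiv.swap 0 p m.succ) = {p}ᶜ := by
  ext b
  simp only [Set.mem_range, Set.mem_compl_iff, Set.mem_singleton_iff]
  constructor
  · rintro ⟨m, rfl⟩ hm
    exact Fin.succ_ne_zero m (Equiv.injective (Equiv.swap 0 p)
      (by rw [hm, Equiv.swap_apply_left]))
  · intro hb
    have ha : Equiv.swap 0 p b ≠ 0 := by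
      intro h0
      apply hb
      have := congrArg (Equiv.swap 0 p) h0
      rwa [Equiv.swap_apply_self, Equiv.swap_apply_left] at this
    obtain ⟨m, hm⟩ := Fin.exists_succ_eq_of_ne_zero ha
    exact ⟨m, by rw [hm, Equiv.swap_apply_self]⟩

lemma exists_tau (k : ℕ) (p : Fin (k+1)) :
    ∃ τ : Equiv.Perm (Fin k), ∀ m, Equiv.swap 0 p m.succ = p.succAbove (τ m) := by
  apply exists_perm_factor
  · intro a b hab
    exact Fin.succ_injective k (Equiv.injective _ hab)
  · exact Fin.succAbove_right_injective
  · rw [range_swap_succ, Fin.range_succAbove]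

lemma succ_decomp (k : ℕ) (x : ℕ → ℝ) (g : (Fin k → ℝ) → ℕ) :
    ∑ π : Equiv.Perm (Fin (k+1)), g (fun m => x ((π m.succ : Fin (k+1)) : ℕ))
      = ∑ p : Fin (k+1), ∑ e : Equiv.Perm (Fin k),
          g (fun m => x ((p.succAbove (e m) : Fin (k+1)) : ℕ)) := by
  rw [← Equiv.sum_comp Equiv.Perm.decomposeFin.symm
    (fun π : Equiv.Perm (Fin (k+1)) => g (fun m => x ((π m.succ : Fin (k+1)) : ℕ)))]
  rw [Fintype.sum_prod_type]
  refine Finset.sum_congr rfl (fun p _ => ?_)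
  obtain ⟨τ, hτ⟩ := exists_tau k p
  have : ∀ e : Equiv.Perm (Fin k),
      g (fun m => x ((Equiv.Perm.decomposeFin.symm (p, e) m.succ : Fin (k+1)) : ℕ))
        = g (fun m => x ((p.succAbove ((τ * e) m) : Fin (k+1)) : ℕ)) := by
    intro e
    congr 1
    funext m
    rw [Equiv.Perm.decomposeFin_symm_apply_succ, hτ]
    rfl
  rw [Finset.sum_congr rfl (fun e _ => this e)]
  exact Equiv.sum_comp (Equiv.mulLeft τ)
    (fun e : Equiv.Perm (Fin k) => g (fun m => x ((p.succAbove (e m) : Fin (k+1)) : ℕ)))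

lemma decomp (k : ℕ) (x : ℕ → ℝ) (F : (ℕ → ℝ) → ℕ)
    (hF : ∀ y z : ℕ → ℝ, (∀ m, m < k → y m = z m) → F y = F z) :
    ∑ π : Equiv.Perm (Fin (k+1)), F (x ∘ pe (k+1) π)
      = ∑ p : Fin (k+1), ∑ e : Equiv.Perm (Fin k), F ((x ∘ emb k p) ∘ pe k e) := by
  set Fk : (Fin k → ℝ) → ℕ := fun w => F (ext k w) with hFk
  -- step A
  have hA : ∀ π : Equiv.Perm (Fin (k+1)),
      F (x ∘ pe (k+1) π) = Fk (fun m : Fin k => x ((π m.castSucc : Fin (k+1)) : ℕ)) := by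
    intro π
    apply hF
    intro m hm
    simp only [Function.comp_apply, ext]
    rw [pe_lt π (by omega), dif_pos hm, Fin.castSucc_mk]
  -- step B
  have hB : ∀ (p : Fin (k+1)) (e : Equiv.Perm (Fin k)),
      F ((x ∘ emb k p) ∘ pe k e) = Fk (fun m : Fin k => x ((p.succAbove (e m) : Fin (k+1)) : ℕ)) := by
    intro p e
    apply hF
    intro m hm
    simp only [Function.comp_apply, ext]
    rw [pe_lt e hm, dif_pos hm, emb, dif_pos (e ⟨m, hm⟩).isLt]
  rw [Finset.sum_congr rfl (fun π _ => hA π)]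
  rw [Finset.sum_congr rfl (fun p _ => Finset.sum_congr rfl (fun e _ => hB p e))]
  -- step C : castSucc → rev.succ
  have hC : ∑ π : Equiv.Perm (Fin (k+1)), Fk (fun m => x ((π m.castSucc : Fin (k+1)) : ℕ))
      = ∑ π : Equiv.Perm (Fin (k+1)), Fk (fun m => x ((π (m.rev.succ) : Fin (k+1)) : ℕ)) := by
    rw [← Equiv.sum_comp (Equiv.mulRight (Fin.revPerm : Equiv.Perm (Fin (k+1))))
      (fun π : Equiv.Perm (Fin (k+1)) => Fk (fun m => x ((π m.castSucc : Fin (k+1)) : ℕ)))]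
    refine Finset.sum_congr rfl (fun π _ => ?_)
    congr 1
    funext m
    simp only [Equiv.coe_mulRight, Equiv.Perm.mul_apply, Fin.revPerm_apply, Fin.rev_castSucc]
  rw [hC]
  -- step D: succ_decomp with g := fun w => Fk (w ∘ Fin.rev)
  have hD := succ_decomp k x (fun w => Fk (fun m => w m.rev))
  rw [hD]
  -- step E: unreverse
  refine Finset.sum_congr rfl (fun p _ => ?_)
  rw [← Equiv.sum_comp (Equiv.mulRight (Fin.revPerm : Equiv.Perm (Fin k)))
    (fun e : Equiv.Perm (Fin k) => Fk (fun m => x ((p.succAbove (e m.rev) : Fin (k+1)) : ℕ)))]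
  refine Finset.sum_congr rfl (fun e _ => ?_)
  congr 1
  funext m
  simp only [Equiv.coe_mulRight, Equiv.Perm.mul_apply, Fin.revPerm_apply, Fin.rev_rev]


theorem main : ∀ (k : ℕ) (x : ℕ → ℝ) (j : ℕ),
    (∑ π : Equiv.Perm (Fin k), if Nst k (x ∘ pe k π) = j then (1:ℕ) else 0)
      = ∑ π : Equiv.Perm (Fin k), if Gst k (x ∘ pe k π) = j then (1:ℕ) else 0 := by
  intro k
  induction k with
  | zero =>
    intro x j
    refine Finset.sum_congr rfl (fun π _ => ?_)
    rw [Nst_zero, show Gst 0 (x ∘ pe 0 π) = 0 from rfl]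
  | succ k IH =>
    intro x j
    -- stepdown
    have hstep : ∀ j' : ℕ,
        (∑ π : Equiv.Perm (Fin (k+1)), if Nst k (x ∘ pe (k+1) π) = j' then (1:ℕ) else 0)
          = ∑ π : Equiv.Perm (Fin (k+1)), if Gst k (x ∘ pe (k+1) π) = j' then (1:ℕ) else 0 := by
      intro j'
      have hN := decomp k x (fun y => if Nst k y = j' then (1:ℕ) else 0)
        (fun y z h => by rw [Nst_congr h])
      have hG := decomp k x (fun y => if Gst k y = j' then (1:ℕ) else 0)
        (fun y z h => by rw [Gst_congr h])
      rw [hN, hG]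
      refine Finset.sum_congr rfl (fun p _ => ?_)
      exact IH (x ∘ emb k p) j'
    have hW : ∀ π : Equiv.Perm (Fin (k+1)),
        W (k+1) (x ∘ pe (k+1) π) = W (k+1) x := fun π => W_pe (k+1) π x (k+1) le_rfl
    by_cases hsign : 0 ≤ W (k+1) x
    · -- positive-sum case
      have hNterm : ∀ π : Equiv.Perm (Fin (k+1)),
          Nst (k+1) (x ∘ pe (k+1) π) = Nst k (x ∘ pe (k+1) π) + 1 := by
        intro π
        rw [Nst_succ, if_pos (by rw [hW π]; exact hsign)]
      have hGsum :
          (∑ π : Equiv.Perm (Fin (k+1)), if Gst (k+1) (x ∘ pe (k+1) π) = j then (1:ℕ) else 0)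
            = ∑ π : Equiv.Perm (Fin (k+1)),
                if Gst k (x ∘ pe (k+1) π) + 1 = j then (1:ℕ) else 0 := by
        rw [← Equiv.sum_comp (Equiv.mulRight (cyc k))
          (fun π : Equiv.Perm (Fin (k+1)) =>
            if Gst (k+1) (x ∘ pe (k+1) π) = j then (1:ℕ) else 0)]
        refine Finset.sum_congr rfl (fun π _ => ?_)
        have key : Gst (k+1) (x ∘ pe (k+1) (π * cyc k)) = Gst k (x ∘ pe (k+1) π) + 1 := by
          set y : ℕ → ℝ := x ∘ pe (k+1) π with hy
          set c : ℝ := x ((π (Fin.last k) : Fin (k+1)) : ℕ) with hc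
          have hcong : ∀ m, m < k+1 → (x ∘ pe (k+1) (π * cyc k)) m = cons c y m := by
            intro m hm
            cases m with
            | zero =>
              simp only [Function.comp_apply, cons_zero]
              rw [pe_lt (π * cyc k) hm]
              have h0 : (⟨0, hm⟩ : Fin (k+1)) = 0 := rfl
              rw [h0, Equiv.Perm.mul_apply, cyc_zero]
            | succ m' =>
              simp only [Function.comp_apply, cons_succ]
              rw [pe_lt (π * cyc k) hm, Equiv.Perm.mul_apply]
              have hm' : m' < k := by omega
              have hsm : (⟨m'+1, hm⟩ : Fin (k+1)) = Fin.succ ⟨m', hm'⟩ := rfl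
              rw [hsm, cyc_succ, hy]
              simp only [Function.comp_apply]
              rw [pe_lt π (by omega : m' < k+1), Fin.castSucc_mk]
          have hyk : y k = c := by
            rw [hy]
            simp only [Function.comp_apply]
            rw [pe_lt π (by omega : k < k+1)]
            rfl
          have hmx : 0 ≤ c + Mx k y := by
            have h1 : W (k+1) y = W k y + c := by rw [W_succ, hyk]
            have h2 : W (k+1) y = W (k+1) x := hW π
            have h3 := W_le_Mx k y
            have := hsign
            linarith
          rw [Gst_congr hcong, Gst_cons c y k hmx]
        rw [show (Equiv.mulRight (cyc k)) π = π * cyc k from rfl, key]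
      have eN : (∑ π : Equiv.Perm (Fin (k+1)),
          if Nst (k+1) (x ∘ pe (k+1) π) = j then (1:ℕ) else 0)
            = ∑ π : Equiv.Perm (Fin (k+1)),
                if Nst k (x ∘ pe (k+1) π) + 1 = j then (1:ℕ) else 0 :=
        Finset.sum_congr rfl (fun π _ => by rw [hNterm π])
      rw [hGsum, eN]
      cases j with
      | zero => simp
      | succ j' =>
        simp only [Nat.add_right_cancel_iff]
        exact hstep j'
    · -- negative-sum case
      push_neg at hsign
      have hNterm : ∀ π : Equiv.Perm (Fin (k+1)),
          Nst (k+1) (x ∘ pe (k+1) π) = Nst k (x ∘ pe (k+1) π) := by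
        intro π
        rw [Nst_succ, if_neg (by rw [hW π]; exact not_le.mpr hsign), add_zero]
      have hGterm : ∀ π : Equiv.Perm (Fin (k+1)),
          Gst (k+1) (x ∘ pe (k+1) π) = Gst k (x ∘ pe (k+1) π) := by
        intro π
        show (if Mx k (x ∘ pe (k+1) π) ≤ W (k+1) (x ∘ pe (k+1) π) then k+1
          else Gst k (x ∘ pe (k+1) π)) = _
        rw [if_neg]
        rw [hW π]
        exact not_le.mpr (lt_of_lt_of_le hsign (Mx_nonneg _ _))
      have eN : (∑ π : Equiv.Perm (Fin (k+1)),
          if Nst (k+1) (x ∘ pe (k+1) π) = j then (1:ℕ) else 0)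
            = ∑ π : Equiv.Perm (Fin (k+1)),
                if Nst k (x ∘ pe (k+1) π) = j then (1:ℕ) else 0 :=
        Finset.sum_congr rfl (fun π _ => by rw [hNterm π])
      have eG : (∑ π : Equiv.Perm (Fin (k+1)),
          if Gst (k+1) (x ∘ pe (k+1) π) = j then (1:ℕ) else 0)
            = ∑ π : Equiv.Perm (Fin (k+1)),
                if Gst k (x ∘ pe (k+1) π) = j then (1:ℕ) else 0 :=
        Finset.sum_congr rfl (fun π _ => by rw [hGterm π])
      rw [eN, eG]
      exact hstep j


-- ### probabilistic helpers

def scond (n k : ℕ) (y : ℕ → ℝ) : Prop :=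
  k ≤ n ∧ W k y ≤ 0 ∧ ∀ i, k < i → i ≤ n → 0 < W i y

section Meas

variable {δ : Type*} [MeasurableSpace δ] {f : δ → ℕ → ℝ}

lemma measurable_W (hf : ∀ m, Measurable fun d => f d m) (i : ℕ) :
    Measurable fun d => W i (f d) :=
  Finset.measurable_sum _ (fun m _ => hf m)

lemma measurable_Nst (hf : ∀ m, Measurable fun d => f d m) (k : ℕ) :
    Measurable fun d => Nst k (f d) := by
  unfold Nst
  refine Finset.measurable_sum _ (fun i _ => ?_)
  exact Measurable.ite (measurableSet_le measurable_const (measurable_W hf i))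
    measurable_const measurable_const

lemma measurable_Mx (hf : ∀ m, Measurable fun d => f d m) (k : ℕ) :
    Measurable fun d => Mx k (f d) := by
  induction k with
  | zero => simpa [Mx] using measurable_const
  | succ k ih =>
    show Measurable fun d => max (W (k+1) (f d)) (Mx k (f d))
    exact (measurable_W hf (k+1)).max ih

lemma measurable_Gst (hf : ∀ m, Measurable fun d => f d m) (k : ℕ) :
    Measurable fun d => Gst k (f d) := by
  induction k with
  | zero => simpa [Gst] using measurable_const
  | succ k ih =>
    show Measurable fun d => if Mx k (f d) ≤ W (k+1) (f d) then k+1 else Gst k (f d)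
    exact Measurable.ite (measurableSet_le (measurable_Mx hf k) (measurable_W hf (k+1)))
      measurable_const ih

lemma measurableSet_scond (hf : ∀ m, Measurable fun d => f d m) (n k : ℕ) :
    MeasurableSet {d | scond n k (f d)} := by
  have : {d | scond n k (f d)} =
      ({d | k ≤ n} ∩ {d | W k (f d) ≤ 0}) ∩
        ⋂ (i : ℕ), ⋂ (_ : k < i), ⋂ (_ : i ≤ n), {d | 0 < W i (f d)} := by
    ext d
    simp only [scond, Set.mem_setOf_eq, Set.mem_inter_iff, Set.mem_iInter]
    tauto
  rw [this]
  refine (MeasurableSet.inter (MeasurableSet.const _)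
    (measurableSet_le (measurable_W hf k) measurable_const)).inter ?_
  refine MeasurableSet.iInter (fun i => MeasurableSet.iInter (fun _ =>
    MeasurableSet.iInter (fun _ => ?_)))
  exact measurableSet_lt measurable_const (measurable_W hf i)

end Meas

lemma scond_pe {n k : ℕ} (y : ℕ → ℝ) (π : Equiv.Perm (Fin k)) :
    scond n k (y ∘ pe k π) ↔ scond n k y := by
  have h1 : W k (y ∘ pe k π) = W k y := W_pe k π y k le_rfl
  constructor <;> rintro ⟨ha, hb, hc⟩
  · refine ⟨ha, by rwa [h1] at hb, fun i hki hin => ?_⟩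
    rw [← W_pe k π y i (le_of_lt hki)]
    exact hc i hki hin
  · refine ⟨ha, by rwa [h1], fun i hki hin => ?_⟩
    rw [W_pe k π y i (le_of_lt hki)]
    exact hc i hki hin

lemma scond_congr {n k : ℕ} {y z : ℕ → ℝ} (h : ∀ m, m < n → y m = z m) :
    scond n k y ↔ scond n k z := by
  have hw : ∀ i, i ≤ n → W i y = W i z :=
    fun i hi => W_congr (fun m hm => h m (by omega))
  unfold scond
  constructor <;> rintro ⟨ha, hb, hc⟩
  · exact ⟨ha, by rwa [hw k ha] at hb, fun i h1 h2 => by rw [← hw i h2]; exact hc i h1 h2⟩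
  · exact ⟨ha, by rwa [hw k ha], fun i h1 h2 => by rw [hw i h2]; exact hc i h1 h2⟩

lemma nat_sSup_eq_iff {n : ℕ} {A : Set ℕ} (h0 : 0 ∈ A) (hb : ∀ i ∈ A, i ≤ n) {k : ℕ} :
    sSup A = k ↔ (k ∈ A ∧ ∀ i ∈ A, i ≤ k) := by
  have hbdd : BddAbove A := ⟨n, fun i hi => hb i hi⟩
  constructor
  · rintro rfl
    exact ⟨Nat.sSup_mem ⟨0, h0⟩ hbdd, fun i hi => le_csSup hbdd hi⟩
  · rintro ⟨hk, hub⟩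
    exact le_antisymm (csSup_le ⟨0, h0⟩ hub) (le_csSup hbdd hk)

lemma Mx_eq_sSup (k : ℕ) (y : ℕ → ℝ) :
    Mx k y = sSup ((fun j => W j y) '' Set.Iic k) := by
  induction k with
  | zero =>
    have : (fun j => W j y) '' Set.Iic 0 = {W 0 y} := by
      ext r
      simp only [Set.mem_image, Set.mem_Iic, Set.mem_singleton_iff, Nat.le_zero]
      constructor
      · rintro ⟨i, rfl, rfl⟩; rfl
      · rintro rfl; exact ⟨0, rfl, rfl⟩
    rw [this, csSup_singleton, W_zero]
    rfl
  | succ k ih =>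
    have hIic : Set.Iic (k+1) = insert (k+1) (Set.Iic k) := by
      ext i
      simp only [Set.mem_Iic, Set.mem_insert_iff]
      omega
    rw [hIic, Set.image_insert_eq, csSup_insert
      (((Set.finite_Iic k).image _).bddAbove) ⟨W 0 y, ⟨0, by simp⟩⟩]
    show max (W (k+1) y) (Mx k y) = _
    rw [ih]

lemma Gst_eq_sSup (k : ℕ) (y : ℕ → ℝ) :
    Gst k y = sSup {i | i ≤ k ∧ W i y = Mx k y} := by
  induction k with
  | zero =>
    have : {i | i ≤ 0 ∧ W i y = Mx 0 y} = {0} := by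
      ext i
      simp only [Set.mem_setOf_eq, Set.mem_singleton_iff, Nat.le_zero]
      constructor
      · rintro ⟨rfl, _⟩; rfl
      · rintro rfl; exact ⟨rfl, rfl⟩
    rw [this, csSup_singleton]
    rfl
  | succ k ih =>
    by_cases h : Mx k y ≤ W (k+1) y
    · have hmx : Mx (k+1) y = W (k+1) y := max_eq_left h
      have hG : Gst (k+1) y = k+1 := by
        show (if Mx k y ≤ W (k+1) y then k+1 else Gst k y) = k+1
        rw [if_pos h]
      rw [hG, hmx]
      have hmem : (k+1) ∈ {i | i ≤ k+1 ∧ W i y = W (k+1) y} := ⟨le_rfl, rfl⟩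
      refine (le_antisymm (csSup_le ⟨k+1, hmem⟩ (fun i hi => hi.1))
        (le_csSup ⟨k+1, fun i hi => hi.1⟩ hmem)).symm
    · push_neg at h
      have hmx : Mx (k+1) y = Mx k y := max_eq_right (le_of_lt h)
      have hG : Gst (k+1) y = Gst k y := by
        show (if Mx k y ≤ W (k+1) y then k+1 else Gst k y) = Gst k y
        rw [if_neg (not_le.mpr h)]
      have hset : {i | i ≤ k+1 ∧ W i y = Mx (k+1) y} = {i | i ≤ k ∧ W i y = Mx k y} := by
        ext i
        simp only [Set.mem_setOf_eq, hmx]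
        constructor
        · rintro ⟨h1, h2⟩
          refine ⟨?_, h2⟩
          rcases Nat.lt_succ_iff_lt_or_eq.mp (Nat.lt_succ_of_le h1) with h3 | h3
          · omega
          · exfalso; rw [h3] at h2; exact absurd h2 (ne_of_lt h)
        · rintro ⟨h1, h2⟩; exact ⟨by omega, h2⟩
      rw [hG, hset, ih]


-- ### joint law of iid tuples

open MeasureTheory ProbabilityTheory in
lemma map_tuple_eq_pi {Ω : Type*} [MeasurableSpace Ω] (μ : Measure Ω) [IsProbabilityMeasure μ]
    (ζ : ℕ → Ω → ℝ) (hmeas : ∀ i, Measurable (ζ i))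
    (hindep : ProbabilityTheory.iIndepFun ζ μ)
    (hident : ∀ i, μ.map (ζ i) = μ.map (ζ 0))
    (n : ℕ) (g : Fin n → ℕ) (hg : Function.Injective g) :
    μ.map (fun ω (i : Fin n) => ζ (g i) ω) = Measure.pi (fun _ => μ.map (ζ 0)) := by
  haveI hpm : IsProbabilityMeasure (μ.map (ζ 0)) :=
    Measure.isProbabilityMeasure_map (hmeas 0).aemeasurable
  have hTm : Measurable (fun ω (i : Fin n) => ζ (g i) ω) :=
    measurable_pi_lambda _ (fun i => hmeas (g i))
  refine (Measure.pi_eq (fun s hs => ?_)).symm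
  rw [Measure.map_apply hTm (MeasurableSet.univ_pi hs)]
  have hpre : (fun ω (i : Fin n) => ζ (g i) ω) ⁻¹' (Set.pi Set.univ s)
      = ⋂ i ∈ Finset.univ (α := Fin n), ζ (g i) ⁻¹' s i := by
    ext ω
    simp [Set.mem_pi]
  rw [hpre]
  classical
  set sets : ℕ → Set ℝ := Function.extend g s (fun _ => Set.univ) with hsets
  have hsg : ∀ i, sets (g i) = s i := fun i => hg.extend_apply _ _ i
  have h1 : (⋂ m ∈ Finset.univ.image g, ζ m ⁻¹' sets m)
      = ⋂ i ∈ Finset.univ (α := Fin n), ζ (g i) ⁻¹' s i := by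
    rw [Finset.set_biInter_finset_image]
    exact Set.iInter₂_congr (fun i _ => by rw [hsg])
  rw [← h1]
  have hmeas' : ∀ m, m ∈ Finset.univ.image g → MeasurableSet (sets m) := by
    intro m hm
    rw [Finset.mem_image] at hm
    obtain ⟨i, _, rfl⟩ := hm
    rw [hsg]
    exact hs i
  rw [hindep.measure_inter_preimage_eq_mul (Finset.univ.image g) hmeas']
  rw [Finset.prod_image (fun i _ j _ h => hg h)]
  refine Finset.prod_congr rfl (fun i _ => ?_)
  rw [hsg, ← Measure.map_apply (hmeas (g i)) (hs i), hident (g i)]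

open MeasureTheory ProbabilityTheory in
lemma measure_preimage_tuple_eq {Ω : Type*} [MeasurableSpace Ω] (μ : Measure Ω)
    [IsProbabilityMeasure μ]
    (ζ : ℕ → Ω → ℝ) (hmeas : ∀ i, Measurable (ζ i))
    (hindep : ProbabilityTheory.iIndepFun ζ μ)
    (hident : ∀ i, μ.map (ζ i) = μ.map (ζ 0))
    (n : ℕ) (g : Fin n → ℕ) (hg : Function.Injective g)
    {B : Set (Fin n → ℝ)} (hB : MeasurableSet B) :
    μ ((fun ω (i : Fin n) => ζ (g i) ω) ⁻¹' B)
      = μ ((fun ω (i : Fin n) => ζ (i : ℕ) ω) ⁻¹' B) := by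
  have hTm : Measurable (fun ω (i : Fin n) => ζ (g i) ω) :=
    measurable_pi_lambda _ (fun i => hmeas (g i))
  have hTm' : Measurable (fun ω (i : Fin n) => ζ (i : ℕ) ω) :=
    measurable_pi_lambda _ (fun i => hmeas i)
  rw [← Measure.map_apply hTm hB, ← Measure.map_apply hTm' hB,
    map_tuple_eq_pi μ ζ hmeas hindep hident n g hg,
    map_tuple_eq_pi μ ζ hmeas hindep hident n (fun i => (i : ℕ)) Fin.val_injective]


open MeasureTheory ProbabilityTheory in
lemma key_measure_eq {Ω : Type*} [MeasurableSpace Ω] (μ : Measure Ω) [IsProbabilityMeasure μ]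
    (ζ : ℕ → Ω → ℝ) (hmeas : ∀ i, Measurable (ζ i))
    (hindep : ProbabilityTheory.iIndepFun ζ μ)
    (hident : ∀ i, μ.map (ζ i) = μ.map (ζ 0))
    (n k j : ℕ) (hk : k ≤ n) :
    μ {ω | scond n k (fun m => ζ m ω) ∧ Nst k (fun m => ζ m ω) = j}
      = μ {ω | scond n k (fun m => ζ m ω) ∧ Gst k (fun m => ζ m ω) = j} := by
  classical
  have hext : ∀ m : ℕ, Measurable fun v : Fin n → ℝ => ext n v m := by
    intro m
    by_cases h : m < n
    · have : (fun v : Fin n → ℝ => ext n v m) = fun v => v ⟨m, h⟩ :=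
        funext fun v => dif_pos h
      rw [this]
      exact measurable_pi_apply _
    · have : (fun v : Fin n → ℝ => ext n v m) = fun _ => 0 :=
        funext fun v => dif_neg h
      rw [this]
      exact measurable_const
  set BN : Set (Fin n → ℝ) := {v | scond n k (ext n v) ∧ Nst k (ext n v) = j} with hBNdef
  set BG : Set (Fin n → ℝ) := {v | scond n k (ext n v) ∧ Gst k (ext n v) = j} with hBGdef
  have hBN : MeasurableSet BN :=
    (measurableSet_scond hext n k).inter (measurable_Nst hext k (measurableSet_singleton j))
  have hBG : MeasurableSet BG :=
    (measurableSet_scond hext n k).inter (measurable_Gst hext k (measurableSet_singleton j))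
  set gp : Equiv.Perm (Fin k) → Fin n → ℕ := fun π i => pe k π (i : ℕ) with hgp
  have hplt : ∀ (π : Equiv.Perm (Fin k)) (m : ℕ) (h : m < k), pe k π m < k := by
    intro π m h
    rw [pe_lt π h]
    exact (π ⟨m, h⟩).isLt
  have hginj : ∀ π : Equiv.Perm (Fin k), Function.Injective (gp π) := by
    intro π a b hab
    simp only [hgp] at hab
    have hval : (a : ℕ) = (b : ℕ) := by
      by_cases ha : (a : ℕ) < k <;> by_cases hb : (b : ℕ) < k
      · rw [pe_lt π ha, pe_lt π hb] at hab
        exact Fin.mk_eq_mk.mp (π.injective (Fin.val_injective hab))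
      · exfalso
        rw [pe_lt π ha, pe_ge π (by omega)] at hab
        have := (π ⟨a, ha⟩).isLt
        omega
      · exfalso
        rw [pe_ge π (by omega), pe_lt π hb] at hab
        have := (π ⟨b, hb⟩).isLt
        omega
      · rwa [pe_ge π (by omega), pe_ge π (by omega)] at hab
    exact Fin.val_injective hval
  set T : Equiv.Perm (Fin k) → Ω → (Fin n → ℝ) := fun π ω i => ζ (gp π i) ω with hT
  have hTmeas : ∀ π, Measurable (T π) :=
    fun π => measurable_pi_lambda _ (fun i => hmeas _)
  -- membership characterizations
  have hagree : ∀ (π : Equiv.Perm (Fin k)) (ω : Ω) (m : ℕ), m < n →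
      ext n (T π ω) m = ((fun m' => ζ m' ω) ∘ pe k π) m := by
    intro π ω m hm
    simp only [ext, hT]
    rw [dif_pos hm]
    rfl
  have hmemN : ∀ (π : Equiv.Perm (Fin k)) (ω : Ω),
      ω ∈ T π ⁻¹' BN ↔
        (scond n k ((fun m => ζ m ω) ∘ pe k π) ∧ Nst k ((fun m => ζ m ω) ∘ pe k π) = j) := by
    intro π ω
    show (scond n k (ext n (T π ω)) ∧ Nst k (ext n (T π ω)) = j) ↔ _
    rw [scond_congr (fun m hm => hagree π ω m hm),
      Nst_congr (fun m hm => hagree π ω m (lt_of_lt_of_le hm hk))]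
  have hmemG : ∀ (π : Equiv.Perm (Fin k)) (ω : Ω),
      ω ∈ T π ⁻¹' BG ↔
        (scond n k ((fun m => ζ m ω) ∘ pe k π) ∧ Gst k ((fun m => ζ m ω) ∘ pe k π) = j) := by
    intro π ω
    show (scond n k (ext n (T π ω)) ∧ Gst k (ext n (T π ω)) = j) ↔ _
    rw [scond_congr (fun m hm => hagree π ω m hm),
      Gst_congr (fun m hm => hagree π ω m (lt_of_lt_of_le hm hk))]
  have hpe1 : ∀ y : ℕ → ℝ, y ∘ pe k (1 : Equiv.Perm (Fin k)) = y := by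
    intro y
    funext m
    simp only [Function.comp_apply, pe]
    split_ifs with h
    · rfl
    · rfl
  -- law invariance
  have hinvN : ∀ π : Equiv.Perm (Fin k), μ (T π ⁻¹' BN) = μ (T 1 ⁻¹' BN) := by
    intro π
    rw [measure_preimage_tuple_eq μ ζ hmeas hindep hident n (gp π) (hginj π) hBN,
      measure_preimage_tuple_eq μ ζ hmeas hindep hident n (gp 1) (hginj 1) hBN]
  have hinvG : ∀ π : Equiv.Perm (Fin k), μ (T π ⁻¹' BG) = μ (T 1 ⁻¹' BG) := by
    intro π
    rw [measure_preimage_tuple_eq μ ζ hmeas hindep hident n (gp π) (hginj π) hBG,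
      measure_preimage_tuple_eq μ ζ hmeas hindep hident n (gp 1) (hginj 1) hBG]
  -- counting identity
  have hcast : ∀ (b : Equiv.Perm (Fin k) → ℕ),
      (∑ π : Equiv.Perm (Fin k), if b π = j then (1:ℝ≥0∞) else 0)
        = (Nat.cast (∑ π : Equiv.Perm (Fin k), (if b π = j then 1 else 0 : ℕ)) : ℝ≥0∞) := by
    intro b
    rw [Nat.cast_sum]
    refine Finset.sum_congr rfl (fun π _ => ?_)
    split_ifs <;> simp
  have hsum : ∑ π : Equiv.Perm (Fin k), μ (T π ⁻¹' BN)
      = ∑ π : Equiv.Perm (Fin k), μ (T π ⁻¹' BG) := by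
    have hiN : ∀ π ∈ Finset.univ (α := Equiv.Perm (Fin k)),
        μ (T π ⁻¹' BN) = ∫⁻ ω, (T π ⁻¹' BN).indicator (fun _ => (1:ℝ≥0∞)) ω ∂μ :=
      fun π _ => (lintegral_indicator_one ((hTmeas π) hBN)).symm
    have hiG : ∀ π ∈ Finset.univ (α := Equiv.Perm (Fin k)),
        μ (T π ⁻¹' BG) = ∫⁻ ω, (T π ⁻¹' BG).indicator (fun _ => (1:ℝ≥0∞)) ω ∂μ :=
      fun π _ => (lintegral_indicator_one ((hTmeas π) hBG)).symm
    rw [Finset.sum_congr rfl hiN, Finset.sum_congr rfl hiG,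
      ← lintegral_finset_sum _ (fun π _ =>
        (measurable_const.indicator ((hTmeas π) hBN))),
      ← lintegral_finset_sum _ (fun π _ =>
        (measurable_const.indicator ((hTmeas π) hBG)))]
    refine lintegral_congr (fun ω => ?_)
    by_cases hsc : scond n k (fun m => ζ m ω)
    · have hN : ∀ π : Equiv.Perm (Fin k),
          (T π ⁻¹' BN).indicator (fun _ => (1:ℝ≥0∞)) ω
            = if Nst k ((fun m => ζ m ω) ∘ pe k π) = j then (1:ℝ≥0∞) else 0 := by
        intro π
        rw [Set.indicator_apply]
        refine if_congr ?_ rfl rfl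
        rw [hmemN π ω]
        have : scond n k ((fun m => ζ m ω) ∘ pe k π) := (scond_pe _ π).mpr hsc
        tauto
      have hGi : ∀ π : Equiv.Perm (Fin k),
          (T π ⁻¹' BG).indicator (fun _ => (1:ℝ≥0∞)) ω
            = if Gst k ((fun m => ζ m ω) ∘ pe k π) = j then (1:ℝ≥0∞) else 0 := by
        intro π
        rw [Set.indicator_apply]
        refine if_congr ?_ rfl rfl
        rw [hmemG π ω]
        have : scond n k ((fun m => ζ m ω) ∘ pe k π) := (scond_pe _ π).mpr hsc
        tauto
      rw [Finset.sum_congr rfl (fun π _ => hN π), Finset.sum_congr rfl (fun π _ => hGi π)]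
      exact (hcast _).trans
        ((congrArg (Nat.cast : ℕ → ℝ≥0∞) (main k (fun m => ζ m ω) j)).trans (hcast _).symm)
    · have hN0 : ∀ π : Equiv.Perm (Fin k),
          (T π ⁻¹' BN).indicator (fun _ => (1:ℝ≥0∞)) ω = 0 := by
        intro π
        apply Set.indicator_of_notMem
        rw [hmemN π ω]
        rintro ⟨h1, -⟩
        exact hsc ((scond_pe _ π).mp h1)
      have hG0 : ∀ π : Equiv.Perm (Fin k),
          (T π ⁻¹' BG).indicator (fun _ => (1:ℝ≥0∞)) ω = 0 := by
        intro π
        apply Set.indicator_of_notMem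
        rw [hmemG π ω]
        rintro ⟨h1, -⟩
        exact hsc ((scond_pe _ π).mp h1)
      rw [Finset.sum_congr rfl (fun π _ => hN0 π), Finset.sum_congr rfl (fun π _ => hG0 π)]
  -- cancel the factorial
  have hbase : μ (T 1 ⁻¹' BN) = μ (T 1 ⁻¹' BG) := by
    have h1 : ∑ π : Equiv.Perm (Fin k), μ (T π ⁻¹' BN)
        = (Fintype.card (Equiv.Perm (Fin k))) • μ (T 1 ⁻¹' BN) := by
      rw [Finset.sum_congr rfl (fun π _ => hinvN π), Finset.sum_const, Finset.card_univ]
    have h2 : ∑ π : Equiv.Perm (Fin k), μ (T π ⁻¹' BG)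
        = (Fintype.card (Equiv.Perm (Fin k))) • μ (T 1 ⁻¹' BG) := by
      rw [Finset.sum_congr rfl (fun π _ => hinvG π), Finset.sum_const, Finset.card_univ]
    have h3 := hsum
    rw [h1, h2, nsmul_eq_mul, nsmul_eq_mul] at h3
    exact (ENNReal.mul_right_inj
      (by exact_mod_cast Fintype.card_ne_zero) (ENNReal.natCast_ne_top _)).mp h3
  -- identify the base events
  have hN1 : T 1 ⁻¹' BN = {ω | scond n k (fun m => ζ m ω) ∧ Nst k (fun m => ζ m ω) = j} := by
    ext ω
    rw [Set.mem_setOf_eq, hmemN 1 ω, hpe1]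
  have hG1 : T 1 ⁻¹' BG = {ω | scond n k (fun m => ζ m ω) ∧ Gst k (fun m => ζ m ω) = j} := by
    ext ω
    rw [Set.mem_setOf_eq, hmemG 1 ω, hpe1]
  rw [← hN1, ← hG1]
  exact hbase

end

end SA8

open MeasureTheory ProbabilityTheory Finset

/-- N⁺ = Σ_{i=1}^σ 1{S_i ≥ 0} and →G = max{i ≤ σ : S_i = max_{j ≤ σ} S_j} have the
same distribution. -/
theorem stmt_8 {Ω : Type*} [MeasurableSpace Ω] (μ : Measure Ω) [IsProbabilityMeasure μ]
    (n : ℕ) (ζ : ℕ → Ω → ℝ)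
    (hmeas : ∀ i, Measurable (ζ i))
    (hindep : ProbabilityTheory.iIndepFun ζ μ)
    (hident : ∀ i, μ.map (ζ i) = μ.map (ζ 0))
    (S : ℕ → Ω → ℝ) (hS : ∀ i ω, S i ω = ∑ j ∈ Finset.range i, ζ j ω)
    (σ : Ω → ℕ) (hσ : ∀ ω, σ ω = sSup {i | i ≤ n ∧ S i ω ≤ 0})
    (Nplus G : Ω → ℕ)
    (hNplus : ∀ ω, Nplus ω = ∑ i ∈ Finset.Icc 1 (σ ω), if 0 ≤ S i ω then 1 else 0)
    (hG : ∀ ω, G ω = sSup {i | i ≤ σ ω ∧ S i ω = sSup ((fun j => S j ω) '' Set.Iic (σ ω))}) :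
    μ.map Nplus = μ.map G := by
  classical
  set Y : Ω → ℕ → ℝ := fun ω m => ζ m ω with hY
  have hSW : ∀ i ω, S i ω = SA8.W i (Y ω) := fun i ω => hS i ω
  -- characterization of σ
  have hσ_iff : ∀ ω k, σ ω = k ↔ SA8.scond n k (Y ω) := by
    intro ω k
    rw [hσ ω]
    have h0 : 0 ∈ {i | i ≤ n ∧ S i ω ≤ 0} :=
      ⟨Nat.zero_le n, by rw [hS 0 ω]; simp⟩
    rw [SA8.nat_sSup_eq_iff h0 (fun i hi => hi.1)]
    constructor
    · rintro ⟨⟨h1, h2⟩, h3⟩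
      refine ⟨h1, by rwa [← hSW], fun i hki hin => ?_⟩
      by_contra hcon
      push_neg at hcon
      have hmem : i ∈ {i | i ≤ n ∧ S i ω ≤ 0} := ⟨hin, by rw [hSW]; exact hcon⟩
      have := h3 i hmem
      omega
    · rintro ⟨h1, h2, h3⟩
      refine ⟨⟨h1, by rwa [hSW]⟩, fun i hi => ?_⟩
      by_contra hcon
      push_neg at hcon
      have h4 := h3 i hcon hi.1
      have h5 : SA8.W i (Y ω) ≤ 0 := by rw [← hSW]; exact hi.2
      linarith
  have hσ_le : ∀ ω, σ ω ≤ n := fun ω => ((hσ_iff ω (σ ω)).mp rfl).1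
  have hNplusW : ∀ ω, Nplus ω = SA8.Nst (σ ω) (Y ω) := by
    intro ω
    rw [hNplus ω]
    refine Finset.sum_congr rfl (fun i _ => ?_)
    rw [hSW i ω]
  have hGW : ∀ ω, G ω = SA8.Gst (σ ω) (Y ω) := by
    intro ω
    rw [hG ω]
    have hset : {i | i ≤ σ ω ∧ S i ω = sSup ((fun j => S j ω) '' Set.Iic (σ ω))}
        = {i | i ≤ σ ω ∧ SA8.W i (Y ω) = SA8.Mx (σ ω) (Y ω)} := by
      ext i
      simp only [Set.mem_setOf_eq]
      have hfun : (fun j => S j ω) = fun j => SA8.W j (Y ω) := funext (fun j => hSW j ω)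
      rw [hSW i ω, hfun, ← SA8.Mx_eq_sSup]
    rw [hset, ← SA8.Gst_eq_sSup]
  have hYmeas : ∀ m, Measurable fun ω => Y ω m := fun m => hmeas m
  have hsetσ : ∀ k, MeasurableSet {ω | σ ω = k} := by
    intro k
    have : {ω | σ ω = k} = {ω | SA8.scond n k (Y ω)} := Set.ext (fun ω => hσ_iff ω k)
    rw [this]
    exact SA8.measurableSet_scond hYmeas n k
  -- fiber decompositions
  have hNfiber : ∀ j : ℕ, Nplus ⁻¹' {j} =
      ⋃ k ∈ Finset.range (n+1), {ω | SA8.scond n k (Y ω) ∧ SA8.Nst k (Y ω) = j} := by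
    intro j
    ext ω
    simp only [Set.mem_preimage, Set.mem_singleton_iff, Set.mem_iUnion, Set.mem_setOf_eq,
      Finset.mem_range]
    constructor
    · intro h
      exact ⟨σ ω, by have := hσ_le ω; omega,
        (hσ_iff ω (σ ω)).mp rfl, by rw [← hNplusW ω]; exact h⟩
    · rintro ⟨k, -, hsc, hNst⟩
      have hk : σ ω = k := (hσ_iff ω k).mpr hsc
      rw [hNplusW ω, hk]
      exact hNst
  have hGfiber : ∀ j : ℕ, G ⁻¹' {j} =
      ⋃ k ∈ Finset.range (n+1), {ω | SA8.scond n k (Y ω) ∧ SA8.Gst k (Y ω) = j} := by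
    intro j
    ext ω
    simp only [Set.mem_preimage, Set.mem_singleton_iff, Set.mem_iUnion, Set.mem_setOf_eq,
      Finset.mem_range]
    constructor
    · intro h
      exact ⟨σ ω, by have := hσ_le ω; omega,
        (hσ_iff ω (σ ω)).mp rfl, by rw [← hGW ω]; exact h⟩
    · rintro ⟨k, -, hsc, hGst⟩
      have hk : σ ω = k := (hσ_iff ω k).mpr hsc
      rw [hGW ω, hk]
      exact hGst
  have hNsetmeas : ∀ k j : ℕ, MeasurableSet {ω | SA8.scond n k (Y ω) ∧ SA8.Nst k (Y ω) = j} :=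
    fun k j => (SA8.measurableSet_scond hYmeas n k).inter
      (SA8.measurable_Nst hYmeas k (measurableSet_singleton j))
  have hGsetmeas : ∀ k j : ℕ, MeasurableSet {ω | SA8.scond n k (Y ω) ∧ SA8.Gst k (Y ω) = j} :=
    fun k j => (SA8.measurableSet_scond hYmeas n k).inter
      (SA8.measurable_Gst hYmeas k (measurableSet_singleton j))
  have hNm : Measurable Nplus := by
    refine measurable_to_countable' (fun j => ?_)
    rw [hNfiber j]
    exact (Finset.range (n+1)).measurableSet_biUnion (fun k _ => hNsetmeas k j)
  have hGm : Measurable G := by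
    refine measurable_to_countable' (fun j => ?_)
    rw [hGfiber j]
    exact (Finset.range (n+1)).measurableSet_biUnion (fun k _ => hGsetmeas k j)
  -- per-singleton equality
  have perj : ∀ j : ℕ, μ (Nplus ⁻¹' {j}) = μ (G ⁻¹' {j}) := by
    intro j
    rw [hNfiber j, hGfiber j]
    have hdisj : ∀ (A : ℕ → (ℕ → ℝ) → ℕ),
        Set.PairwiseDisjoint ↑(Finset.range (n+1))
          (fun k => {ω | SA8.scond n k (Y ω) ∧ A k (Y ω) = j}) := by
      intro A k _ l _ hkl
      refine Set.disjoint_left.mpr (fun ω h1 h2 => hkl ?_)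
      have e1 : σ ω = k := (hσ_iff ω k).mpr h1.1
      have e2 : σ ω = l := (hσ_iff ω l).mpr h2.1
      omega
    rw [measure_biUnion_finset (hdisj SA8.Nst) (fun k _ => hNsetmeas k j),
      measure_biUnion_finset (hdisj SA8.Gst) (fun k _ => hGsetmeas k j)]
    refine Finset.sum_congr rfl (fun k hk => ?_)
    exact SA8.key_measure_eq μ ζ hmeas hindep hident n k j
      (by have := Finset.mem_range.mp hk; omega)
  -- conclude
  refine Measure.ext (fun s hs => ?_)
  rw [Measure.map_apply hNm hs, Measure.map_apply hGm hs]
  have hdN : Nplus ⁻¹' s = ⋃ j ∈ s, Nplus ⁻¹' {j} := by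
    ext ω
    simp
  have hdG : G ⁻¹' s = ⋃ j ∈ s, G ⁻¹' {j} := by
    ext ω
    simp
  have hpdN : s.PairwiseDisjoint (fun j => Nplus ⁻¹' {j}) := by
    intro a _ b _ hab
    refine Set.disjoint_left.mpr (fun ω h1 h2 => hab ?_)
    simp only [Set.mem_preimage, Set.mem_singleton_iff] at h1 h2
    omega
  have hpdG : s.PairwiseDisjoint (fun j => G ⁻¹' {j}) := by
    intro a _ b _ hab
    refine Set.disjoint_left.mpr (fun ω h1 h2 => hab ?_)
    simp only [Set.mem_preimage, Set.mem_singleton_iff] at h1 h2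
    omega
  rw [hdN, hdG,
    measure_biUnion s.to_countable hpdN (fun j _ => hNm (measurableSet_singleton j)),
    measure_biUnion s.to_countable hpdG (fun j _ => hGm (measurableSet_singleton j))]
  exact tsum_congr (fun j => perj j)
end

section
/- Let ζ₁,…,ζₙ be i.i.d. real random variables, S_i the random walk, σ = max{i ≤ n : S_i ≤ 0}. The four random variables N⁻ = Σ_{i=1}^σ 1{S_i ≤ 0}, Ñ⁺ = Σ_{i=0}^{σ−1} 1{S_i ≥ S_σ}, →F = max{i ≤ σ : S_i = min_{j≤σ} S_j}, and ←G = σ − min{i ≤ σ : S_i = max_{j≤σ} S_j} all have the same distribution. -/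
open MeasureTheory ProbabilityTheory Finset
open scoped ENNReal NNReal

namespace SA

/-- partial sum of the first `i` coordinates -/
def psum {k : ℕ} (x : Fin k → ℝ) (i : ℕ) : ℝ := ∑ j : Fin k, if (j : ℕ) < i then x j else 0

lemma psum_zero {k} (x : Fin k → ℝ) : psum x 0 = 0 := by simp [psum]

lemma psum_total {k} (x : Fin k → ℝ) {i : ℕ} (hi : k ≤ i) : psum x i = ∑ j, x j := by
  unfold psum
  exact Finset.sum_congr rfl fun j _ => if_pos (lt_of_lt_of_le j.2 hi)

lemma psum_comp_perm {k} (x : Fin k → ℝ) (e : Equiv.Perm (Fin k)) {i} (hi : k ≤ i) :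
    psum (x ∘ e) i = psum x i := by
  rw [psum_total _ hi, psum_total _ hi]
  exact Equiv.sum_comp e x

lemma psum_cons {k} (a : ℝ) (w : Fin k → ℝ) (i : ℕ) :
    psum (Fin.cons a w) (i + 1) = a + psum w i := by
  unfold psum
  rw [Fin.sum_univ_succ]
  simp only [Fin.cons_zero, Fin.cons_succ, Fin.val_succ, Fin.val_zero]
  rw [if_pos (Nat.succ_pos i)]
  congr 1
  exact Finset.sum_congr rfl fun j _ => by
    simp [Nat.succ_lt_succ_iff]

lemma psum_snoc {k} (w : Fin k → ℝ) (a : ℝ) (i : ℕ) :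
    psum (Fin.snoc w a) i = psum w i + (if k < i then a else 0) := by
  unfold psum
  rw [Fin.sum_univ_castSucc]
  simp [Fin.snoc_castSucc]

lemma psum_snoc_le {k} (w : Fin k → ℝ) (a : ℝ) {i : ℕ} (hi : i ≤ k) :
    psum (Fin.snoc w a) i = psum w i := by
  rw [psum_snoc, if_neg (by omega), add_zero]

/-- number of nonpositive partial sums -/
noncomputable def Ncnt {k : ℕ} (x : Fin k → ℝ) : ℕ := ∑ i ∈ Icc 1 k, if psum x i ≤ 0 then 1 else 0

/-- set of (last) argmins of the partial-sum walk -/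
def AminSet {k : ℕ} (x : Fin k → ℝ) : Set ℕ := {i | i ≤ k ∧ ∀ j ≤ k, psum x i ≤ psum x j}

/-- last argmin -/
noncomputable def Fst {k : ℕ} (x : Fin k → ℝ) : ℕ := sSup (AminSet x)

lemma aminSet_nonempty {k} (x : Fin k → ℝ) : (AminSet x).Nonempty := by
  obtain ⟨i, hi, hmin⟩ := Finset.exists_min_image (Finset.Iic k) (psum x) ⟨0, by simp⟩
  exact ⟨i, Finset.mem_Iic.mp hi, fun j hj => hmin j (Finset.mem_Iic.mpr hj)⟩

lemma aminSet_bddAbove {k} (x : Fin k → ℝ) : BddAbove (AminSet x) :=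
  ⟨k, fun i hi => hi.1⟩

lemma Fst_mem {k} (x : Fin k → ℝ) : Fst x ∈ AminSet x :=
  Nat.sSup_mem (aminSet_nonempty x) (aminSet_bddAbove x)

lemma Fst_le {k} (x : Fin k → ℝ) : Fst x ≤ k := (Fst_mem x).1

lemma le_Fst {k} (x : Fin k → ℝ) {i : ℕ} (hi : i ∈ AminSet x) : i ≤ Fst x :=
  le_csSup (aminSet_bddAbove x) hi

/-- L1 : recursion for Ncnt under snoc -/
lemma Ncnt_snoc {k} (w : Fin k → ℝ) (a : ℝ) :
    Ncnt (Fin.snoc w a) = Ncnt w + (if (∑ j, w j) + a ≤ 0 then 1 else 0) := by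
  unfold Ncnt
  have h : Icc 1 (k + 1) = insert (k + 1) (Icc 1 k) := by
    ext i; simp [Finset.mem_Icc, Finset.mem_insert]; omega
  rw [h, Finset.sum_insert (by simp)]
  rw [add_comm]
  congr 1
  · exact Finset.sum_congr rfl fun i hi => by
      rw [psum_snoc_le w a (Finset.mem_Icc.mp hi).2]
  · rw [psum_snoc, if_pos (Nat.lt_succ_self k), psum_total w (Nat.le_succ k)]

/-- L2 : Fst is unchanged by snoc when total > 0 -/
lemma Fst_snoc {k} (w : Fin k → ℝ) (a : ℝ) (hT : 0 < (∑ j, w j) + a) :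
    Fst (Fin.snoc w a) = Fst w := by
  have hps : ∀ i ≤ k, psum (Fin.snoc w a) i = psum w i := fun i hi => psum_snoc_le w a hi
  have hlast : psum (Fin.snoc w a) (k + 1) = (∑ j, w j) + a := by
    rw [psum_snoc, if_pos (Nat.lt_succ_self k), psum_total w (Nat.le_succ k)]
  have hset : AminSet (Fin.snoc w a) = AminSet w := by
    ext i
    constructor
    · rintro ⟨hik, hmin⟩
      have hik' : i ≤ k := by
        rcases Nat.lt_succ_iff_lt_or_eq.mp (Nat.lt_succ_of_le hik) with h | h
        · omega
        · exfalso
          have := hmin 0 (Nat.zero_le _)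
          rw [h, hlast, psum_zero] at this
          linarith
      refine ⟨hik', fun j hj => ?_⟩
      have := hmin j (le_trans hj (Nat.le_succ k))
      rwa [hps i hik', hps j hj] at this
    · rintro ⟨hik, hmin⟩
      refine ⟨le_trans hik (Nat.le_succ k), fun j hj => ?_⟩
      rcases Nat.lt_succ_iff_lt_or_eq.mp (Nat.lt_succ_of_le hj) with h | h
      · rw [hps i hik, hps j (by omega)]
        exact hmin j (by omega)
      · rw [hps i hik, h, hlast]
        have h0 := hmin 0 (Nat.zero_le _)
        rw [psum_zero] at h0
        linarith
  rw [Fst, hset, Fst]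

/-- L3 : Fst increases by one under cons when total ≤ 0 -/
lemma Fst_cons {k} (a : ℝ) (w : Fin k → ℝ) (hT : a + (∑ j, w j) ≤ 0) :
    Fst (Fin.cons a w) = Fst w + 1 := by
  have key : ∀ i ≤ k, (i + 1 ∈ AminSet (Fin.cons a w) ↔ i ∈ AminSet w) := by
    intro i hik
    constructor
    · rintro ⟨_, hmin⟩
      refine ⟨hik, fun j hj => ?_⟩
      have := hmin (j + 1) (by omega)
      rw [psum_cons, psum_cons] at this
      linarith
    · rintro ⟨_, hmin⟩
      refine ⟨by omega, fun j hj => ?_⟩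
      rcases j with _ | j'
      · rw [psum_zero, psum_cons]
        have h1 := hmin k le_rfl
        rw [psum_total w le_rfl] at h1
        linarith
      · rw [psum_cons, psum_cons]
        have := hmin j' (by omega)
        linarith
  have hmem : Fst w + 1 ∈ AminSet (Fin.cons a w) :=
    (key (Fst w) (Fst_le w)).mpr (Fst_mem w)
  refine le_antisymm (csSup_le ⟨_, hmem⟩ ?_) (le_csSup (aminSet_bddAbove _) hmem)
  rintro (_ | b) hb
  · omega
  · have hbk : b ≤ k := by
      have := hb.1; omega
    exact Nat.succ_le_succ (le_Fst w ((key b hbk).mp hb))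

/-! ### Decomposition of sums over permutations -/

/-- remove the `p`-th entry -/
def rm {k : ℕ} (y : Fin (k + 1) → ℝ) (p : Fin (k + 1)) : Fin k → ℝ :=
  fun i => y (Equiv.swap 0 p i.succ)

lemma rm_sum {k} (y : Fin (k + 1) → ℝ) (p : Fin (k + 1)) :
    ∑ i, rm y p i = (∑ j, y j) - y p := by
  have h1 : ∑ j, y (Equiv.swap 0 p j) = ∑ j, y j := Equiv.sum_comp _ y
  rw [Fin.sum_univ_succ] at h1
  rw [Equiv.swap_apply_left] at h1
  unfold rm
  linarith

lemma comp_decomposeFin {k} (y : Fin (k + 1) → ℝ) (p : Fin (k + 1)) (e : Equiv.Perm (Fin k)) :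
    y ∘ (Equiv.Perm.decomposeFin.symm (p, e)) = Fin.cons (y p) (rm y p ∘ e) := by
  funext i
  induction i using Fin.cases with
  | zero => simp [Equiv.Perm.decomposeFin_symm_apply_zero]
  | succ j => simp [Equiv.Perm.decomposeFin_symm_apply_succ, rm]

lemma consDecomp {k : ℕ} {M : Type*} [AddCommMonoid M] (y : Fin (k + 1) → ℝ)
    (g : (Fin (k + 1) → ℝ) → M) :
    ∑ π : Equiv.Perm (Fin (k + 1)), g (y ∘ π)
      = ∑ p : Fin (k + 1), ∑ e : Equiv.Perm (Fin k), g (Fin.cons (y p) (rm y p ∘ e)) := by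
  rw [← Fintype.sum_equiv (Equiv.Perm.decomposeFin.symm)
      (fun pe => g (y ∘ (Equiv.Perm.decomposeFin.symm pe)))
      (fun π => g (y ∘ π)) (fun pe => rfl)]
  rw [Fintype.sum_prod_type]
  exact Finset.sum_congr rfl fun p _ => Finset.sum_congr rfl fun e _ => by
    rw [comp_decomposeFin]

lemma cons_comp_rev {k : ℕ} (a : ℝ) (w : Fin k → ℝ) :
    (Fin.cons a w : Fin (k + 1) → ℝ) ∘ Fin.rev = Fin.snoc (w ∘ Fin.rev) a := by
  funext i
  induction i using Fin.lastCases with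
  | last => simp [Fin.rev_last]
  | cast j => simp [Fin.rev_castSucc]

lemma sum_comp_rev {k : ℕ} {M : Type*} [AddCommMonoid M] (f : (Fin k → ℝ) → M)
    (y : Fin k → ℝ) :
    ∑ e : Equiv.Perm (Fin k), f (y ∘ e) = ∑ e : Equiv.Perm (Fin k), f ((y ∘ e) ∘ Fin.rev) := by
  rw [← Equiv.sum_comp (Equiv.mulRight (Fin.revPerm : Equiv.Perm (Fin k)))
    (fun e : Equiv.Perm (Fin k) => f (y ∘ e))]
  refine Finset.sum_congr rfl fun e _ => ?_
  congr 1

lemma snocDecomp {k : ℕ} {M : Type*} [AddCommMonoid M] (y : Fin (k + 1) → ℝ)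
    (g : (Fin (k + 1) → ℝ) → M) :
    ∑ π : Equiv.Perm (Fin (k + 1)), g (y ∘ π)
      = ∑ p : Fin (k + 1), ∑ e : Equiv.Perm (Fin k), g (Fin.snoc (rm y p ∘ e) (y p)) := by
  rw [sum_comp_rev (fun x => g x) y]
  rw [consDecomp y (fun x => g (x ∘ Fin.rev))]
  refine Finset.sum_congr rfl fun p _ => ?_
  rw [sum_comp_rev (fun x => g (Fin.snoc x (y p))) (rm y p)]
  refine Finset.sum_congr rfl fun e _ => ?_
  rw [cons_comp_rev]

/-! ### The main counting identity -/

theorem main_count : ∀ (k : ℕ) (y : Fin k → ℝ) (c : ℕ),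
    (∑ π : Equiv.Perm (Fin k), if Ncnt (y ∘ π) = c then (1 : ℕ) else 0)
      = ∑ π : Equiv.Perm (Fin k), if Fst (y ∘ π) = c then 1 else 0 := by
  intro k
  induction k with
  | zero =>
    intro y c
    refine Finset.sum_congr rfl fun π _ => ?_
    have h1 : Ncnt (y ∘ π) = 0 := by simp [Ncnt]
    have h2 : Fst (y ∘ π) = 0 := Nat.le_zero.mp (Fst_le _)
    rw [h1, h2]
  | succ k ih =>
    intro y c
    set T : ℝ := ∑ j, y j with hT
    have hTot : ∀ (p : Fin (k + 1)) (e : Equiv.Perm (Fin k)),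
        (∑ j, (rm y p ∘ e) j) + y p = T := by
      intro p e
      have : ∑ j, (rm y p ∘ e) j = ∑ j, rm y p j := Equiv.sum_comp e (rm y p)
      rw [this, rm_sum]; ring
    rw [snocDecomp y (fun x => if Ncnt x = c then 1 else 0)]
    by_cases hTle : T ≤ 0
    · -- use cons decomposition on the Fst side
      rw [consDecomp y (fun x => if Fst x = c then 1 else 0)]
      refine Finset.sum_congr rfl fun p _ => ?_
      have hN : ∀ e : Equiv.Perm (Fin k),
          Ncnt (Fin.snoc (rm y p ∘ e) (y p)) = Ncnt (rm y p ∘ e) + 1 := by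
        intro e
        rw [Ncnt_snoc, hTot p e, if_pos hTle]
      have hF : ∀ e : Equiv.Perm (Fin k),
          Fst (Fin.cons (y p) (rm y p ∘ e)) = Fst (rm y p ∘ e) + 1 := by
        intro e
        refine Fst_cons _ _ ?_
        have := hTot p e
        linarith
      rcases c with _ | c'
      · simp [hN, hF]
      · calc ∑ e : Equiv.Perm (Fin k),
              (if Ncnt (Fin.snoc (rm y p ∘ e) (y p)) = c' + 1 then (1:ℕ) else 0)
            = ∑ e : Equiv.Perm (Fin k), if Ncnt (rm y p ∘ e) = c' then 1 else 0 := by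
              refine Finset.sum_congr rfl fun e _ => ?_
              rw [hN e]
              simp
          _ = ∑ e : Equiv.Perm (Fin k), if Fst (rm y p ∘ e) = c' then 1 else 0 := ih _ _
          _ = _ := by
              refine Finset.sum_congr rfl fun e _ => ?_
              rw [hF e]
              simp
    · -- use snoc decomposition on the Fst side
      rw [snocDecomp y (fun x => if Fst x = c then 1 else 0)]
      refine Finset.sum_congr rfl fun p _ => ?_
      calc ∑ e : Equiv.Perm (Fin k),
              (if Ncnt (Fin.snoc (rm y p ∘ e) (y p)) = c then (1:ℕ) else 0)
          = ∑ e : Equiv.Perm (Fin k), if Ncnt (rm y p ∘ e) = c then 1 else 0 := by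
            refine Finset.sum_congr rfl fun e _ => ?_
            rw [Ncnt_snoc, hTot p e, if_neg hTle, add_zero]
        _ = ∑ e : Equiv.Perm (Fin k), if Fst (rm y p ∘ e) = c then 1 else 0 := ih _ _
        _ = _ := by
            refine Finset.sum_congr rfl fun e _ => ?_
            rw [Fst_snoc _ _ (by rw [hTot p e]; exact lt_of_not_ge hTle)]

/-! ### Part B : statistics of the walk attached to an `n`-tuple -/

variable {n : ℕ}

/-- restriction to the first `k` coordinates -/
def res {k : ℕ} (hk : k ≤ n) (x : Fin n → ℝ) : Fin k → ℝ := fun i => x (Fin.castLE hk i)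

lemma psum_res {k : ℕ} (hk : k ≤ n) (x : Fin n → ℝ) {i : ℕ} (hi : i ≤ k) :
    psum (res hk x) i = psum x i := by
  classical
  set f : ℕ → ℝ := fun j => if j < i then (if h : j < n then x ⟨j, h⟩ else 0) else 0 with hf
  have h1 : psum x i = ∑ j ∈ Finset.range n, f j := by
    rw [psum, ← Fin.sum_univ_eq_sum_range]
    exact Finset.sum_congr rfl fun j _ => by
      by_cases hj : (j : ℕ) < i
      · simp [f, hj, j.2]
      · simp [f, hj]
  have h2 : psum (res hk x) i = ∑ j ∈ Finset.range k, f j := by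
    rw [psum, ← Fin.sum_univ_eq_sum_range]
    refine Finset.sum_congr rfl fun j _ => ?_
    by_cases hj : (j : ℕ) < i
    · have hjn : (j : ℕ) < n := lt_of_lt_of_le j.2 hk
      simp [f, hj, hjn, res, Fin.castLE]
    · simp [f, hj]
  rw [h1, h2]
  have hz : ∀ j ∈ Finset.range n, j ∉ Finset.range k → f j = 0 := by
    intro j _ hj
    have : ¬ j < i := fun h => hj (Finset.mem_range.mpr (lt_of_lt_of_le h hi))
    simp [f, this]
  exact Finset.sum_subset (Finset.range_subset_range.mpr hk) hz

/-- the subtype equiv used to extend a permutation of the first `k` coordinates -/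
def emb {k : ℕ} (hk : k ≤ n) : Fin k ≃ {i : Fin n // (i : ℕ) < k} where
  toFun i := ⟨Fin.castLE hk i, i.2⟩
  invFun j := ⟨(j.1 : ℕ), j.2⟩
  left_inv i := rfl
  right_inv j := rfl

/-- extend a permutation of the first `k` coordinates to `Fin n`, fixing the rest -/
def extPerm {k : ℕ} (hk : k ≤ n) (π : Equiv.Perm (Fin k)) : Equiv.Perm (Fin n) :=
  π.extendDomain (emb hk)

lemma extPerm_lt {k : ℕ} (hk : k ≤ n) (π : Equiv.Perm (Fin k)) (i : Fin k) :
    extPerm hk π (Fin.castLE hk i) = Fin.castLE hk (π i) := by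
  have : Fin.castLE hk i = (emb hk i : Fin n) := rfl
  rw [extPerm, this, Equiv.Perm.extendDomain_apply_image]
  rfl

lemma extPerm_ge {k : ℕ} (hk : k ≤ n) (π : Equiv.Perm (Fin k)) (j : Fin n)
    (hj : ¬ (j : ℕ) < k) : extPerm hk π j = j :=
  Equiv.Perm.extendDomain_apply_not_subtype _ _ hj

lemma extPerm_lt_iff {k : ℕ} (hk : k ≤ n) (π : Equiv.Perm (Fin k)) (j : Fin n) :
    ((extPerm hk π j : Fin n) : ℕ) < k ↔ (j : ℕ) < k := by
  by_cases hj : (j : ℕ) < k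
  · have h2 : j = Fin.castLE hk ⟨(j : ℕ), hj⟩ := rfl
    rw [h2, extPerm_lt]
    simp [hj, (π ⟨(j : ℕ), hj⟩).2]
  · rw [extPerm_ge hk π j hj]

lemma res_comp_extPerm {k : ℕ} (hk : k ≤ n) (π : Equiv.Perm (Fin k)) (x : Fin n → ℝ) :
    res hk (x ∘ extPerm hk π) = res hk x ∘ π := by
  funext i
  simp only [res, Function.comp_apply]
  rw [extPerm_lt]

lemma psum_comp_extPerm {k : ℕ} (hk : k ≤ n) (π : Equiv.Perm (Fin k)) (x : Fin n → ℝ)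
    {i : ℕ} (hi : k ≤ i) : psum (x ∘ extPerm hk π) i = psum x i := by
  unfold psum
  calc ∑ j : Fin n, (if (j : ℕ) < i then (x ∘ extPerm hk π) j else 0)
      = ∑ j : Fin n, (if ((extPerm hk π j : Fin n) : ℕ) < i then x (extPerm hk π j) else 0) := by
        refine Finset.sum_congr rfl fun j _ => ?_
        congr 1
        by_cases hj : (j : ℕ) < k
        · simp [lt_of_lt_of_le hj hi, lt_of_lt_of_le ((extPerm_lt_iff hk π j).mpr hj) hi]
        · rw [extPerm_ge hk π j hj]
    _ = ∑ j : Fin n, (if (j : ℕ) < i then x j else 0) :=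
        Equiv.sum_comp (extPerm hk π) (fun j => if (j : ℕ) < i then x j else 0)

/-! ### the stopping index σ and the four statistics -/

noncomputable def sigh (x : Fin n → ℝ) : ℕ := sSup {i | i ≤ n ∧ psum x i ≤ 0}

lemma sigh_set_nonempty (x : Fin n → ℝ) : {i | i ≤ n ∧ psum x i ≤ 0}.Nonempty :=
  ⟨0, Nat.zero_le n, le_of_eq (psum_zero x)⟩

lemma sigh_set_bdd (x : Fin n → ℝ) : BddAbove {i | i ≤ n ∧ psum x i ≤ 0} :=
  ⟨n, fun i hi => hi.1⟩

lemma sigh_le (x : Fin n → ℝ) : sigh x ≤ n :=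
  csSup_le (sigh_set_nonempty x) fun i hi => hi.1

lemma sigh_spec (x : Fin n → ℝ) : psum x (sigh x) ≤ 0 :=
  (Nat.sSup_mem (sigh_set_nonempty x) (sigh_set_bdd x)).2

lemma sigh_eq_iff (x : Fin n → ℝ) (k : ℕ) :
    sigh x = k ↔ k ≤ n ∧ psum x k ≤ 0 ∧ ∀ i, k < i → i ≤ n → 0 < psum x i := by
  constructor
  · rintro rfl
    refine ⟨sigh_le x, sigh_spec x, fun i hi hin => ?_⟩
    by_contra h
    exact absurd (le_csSup (sigh_set_bdd x) ⟨hin, not_lt.mp h⟩) (not_le.mpr hi)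
  · rintro ⟨hkn, hk0, hgt⟩
    refine le_antisymm (csSup_le (sigh_set_nonempty x) ?_) (le_csSup (sigh_set_bdd x) ⟨hkn, hk0⟩)
    rintro i ⟨hin, hi0⟩
    by_contra h
    exact absurd hi0 (not_le.mpr (hgt i (not_le.mp h) hin))

lemma sigh_comp_extPerm {k : ℕ} (hk : k ≤ n) (π : Equiv.Perm (Fin k)) (x : Fin n → ℝ) :
    sigh (x ∘ extPerm hk π) = k ↔ sigh x = k := by
  rw [sigh_eq_iff, sigh_eq_iff, psum_comp_extPerm hk π x le_rfl]
  constructor <;> rintro ⟨h1, h2, h3⟩ <;> refine ⟨h1, h2, fun i hi hin => ?_⟩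
  · have := h3 i hi hin
    rwa [psum_comp_extPerm hk π x (le_of_lt hi)] at this
  · have := h3 i hi hin
    rwa [← psum_comp_extPerm hk π x (le_of_lt hi)] at this

noncomputable def Nh (x : Fin n → ℝ) : ℕ :=
  ∑ i ∈ Icc 1 (sigh x), if psum x i ≤ 0 then 1 else 0

noncomputable def Th (x : Fin n → ℝ) : ℕ :=
  ∑ i ∈ range (sigh x), if psum x (sigh x) ≤ psum x i then 1 else 0

noncomputable def Fh (x : Fin n → ℝ) : ℕ :=
  sSup {i | i ≤ sigh x ∧ psum x i = sInf ((fun j => psum x j) '' Set.Iic (sigh x))}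

noncomputable def Gh (x : Fin n → ℝ) : ℕ :=
  sigh x - sInf {i | i ≤ sigh x ∧ psum x i = sSup ((fun j => psum x j) '' Set.Iic (sigh x))}

/-! ### min/max characterizations -/

lemma sInf_image_iff (x : Fin n → ℝ) (k : ℕ) {i : ℕ} (hi : i ≤ k) :
    psum x i = sInf ((fun j => psum x j) '' Set.Iic k) ↔ ∀ j ≤ k, psum x i ≤ psum x j := by
  have hfin : ((fun j => psum x j) '' Set.Iic k).Finite := (Set.finite_Iic k).image _
  have hne : ((fun j => psum x j) '' Set.Iic k).Nonempty := ⟨psum x 0, 0, Nat.zero_le k, rfl⟩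
  constructor
  · intro h j hj
    rw [h]
    exact csInf_le hfin.bddBelow ⟨j, hj, rfl⟩
  · intro h
    refine le_antisymm (le_csInf hne ?_) (csInf_le hfin.bddBelow ⟨i, hi, rfl⟩)
    rintro b ⟨j, hj, rfl⟩
    exact h j hj

lemma sSup_image_iff (x : Fin n → ℝ) (k : ℕ) {i : ℕ} (hi : i ≤ k) :
    psum x i = sSup ((fun j => psum x j) '' Set.Iic k) ↔ ∀ j ≤ k, psum x j ≤ psum x i := by
  have hfin : ((fun j => psum x j) '' Set.Iic k).Finite := (Set.finite_Iic k).image _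
  have hne : ((fun j => psum x j) '' Set.Iic k).Nonempty := ⟨psum x 0, 0, Nat.zero_le k, rfl⟩
  constructor
  · intro h j hj
    rw [h]
    exact le_csSup hfin.bddAbove ⟨j, hj, rfl⟩
  · intro h
    refine le_antisymm (le_csSup hfin.bddAbove ⟨i, hi, rfl⟩) (csSup_le hne ?_)
    rintro b ⟨j, hj, rfl⟩
    exact h j hj

/-! ### transfer to the restricted tuple, on the event `sigh x = k` -/

lemma Nh_eq_Ncnt {k : ℕ} (hk : k ≤ n) (x : Fin n → ℝ) (hx : sigh x = k) :
    Nh x = Ncnt (res hk x) := by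
  rw [Nh, hx, Ncnt]
  exact Finset.sum_congr rfl fun i hi => by
    rw [psum_res hk x (Finset.mem_Icc.mp hi).2]

lemma Fh_eq_Fst {k : ℕ} (hk : k ≤ n) (x : Fin n → ℝ) (hx : sigh x = k) :
    Fh x = Fst (res hk x) := by
  rw [Fh, hx, Fst]
  congr 1
  ext i
  simp only [Set.mem_setOf_eq, AminSet]
  constructor
  · rintro ⟨hik, h⟩
    refine ⟨hik, fun j hj => ?_⟩
    rw [psum_res hk x hik, psum_res hk x hj]
    exact ((sInf_image_iff x k hik).mp h) j hj
  · rintro ⟨hik, h⟩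
    refine ⟨hik, (sInf_image_iff x k hik).mpr fun j hj => ?_⟩
    have := h j hj
    rwa [psum_res hk x hik, psum_res hk x hj] at this

/-! ### reversal -/

lemma psum_comp_rev {k : ℕ} (u : Fin k → ℝ) {i : ℕ} (hi : i ≤ k) :
    psum (u ∘ Fin.rev) i = psum u k - psum u (k - i) := by
  unfold psum
  have h1 : ∑ j : Fin k, (if (j : ℕ) < i then (u ∘ Fin.rev) j else 0)
      = ∑ j : Fin k, (if ((Fin.rev j : Fin k) : ℕ) < i then u j else 0) := by
    rw [← Equiv.sum_comp (Fin.revPerm : Equiv.Perm (Fin k))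
      (fun j => if ((Fin.rev j : Fin k) : ℕ) < i then u j else 0)]
    refine Finset.sum_congr rfl fun j _ => ?_
    simp [Fin.rev_rev]
  rw [h1]
  have h2 : ∀ j : Fin k, (if ((Fin.rev j : Fin k) : ℕ) < i then u j else 0)
      = u j - (if (j : ℕ) < k - i then u j else 0) := by
    intro j
    have hj := j.2
    have hrev : ((Fin.rev j : Fin k) : ℕ) = k - ((j : ℕ) + 1) := Fin.val_rev j
    by_cases hcase : (j : ℕ) < k - i
    · rw [if_pos hcase, if_neg (by omega), sub_self]
    · rw [if_pos (by omega), if_neg hcase, sub_zero]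
  rw [Finset.sum_congr rfl fun j _ => h2 j, Finset.sum_sub_distrib]
  congr 1
  exact (psum_total u le_rfl).symm

lemma res_rev {k : ℕ} (hk : k ≤ n) (x : Fin n → ℝ) :
    res hk (x ∘ extPerm hk (Fin.revPerm : Equiv.Perm (Fin k))) = res hk x ∘ Fin.rev := by
  rw [res_comp_extPerm]
  rfl

lemma Th_rev {k : ℕ} (hk : k ≤ n) (x : Fin n → ℝ) (hx : sigh x = k) :
    Th (x ∘ extPerm hk (Fin.revPerm : Equiv.Perm (Fin k))) = Ncnt (res hk x) := by
  set u : Fin k → ℝ := res hk x with hu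
  set x' : Fin n → ℝ := x ∘ extPerm hk (Fin.revPerm : Equiv.Perm (Fin k)) with hx'def
  have hx' : sigh x' = k := (sigh_comp_extPerm hk _ x).mpr hx
  have hps : ∀ i ≤ k, psum x' i = psum u k - psum u (k - i) := by
    intro i hi
    rw [← psum_res hk x' hi, res_rev hk x, psum_comp_rev _ hi]
  have hpk : psum x' k = psum u k := by
    rw [hps k le_rfl, Nat.sub_self, psum_zero, sub_zero]
  have hTh : Th x' = ∑ i ∈ range k, if psum u k ≤ psum x' i then 1 else 0 := by
    rw [Th, hx', hpk]
  rw [hTh, Ncnt]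
  refine Finset.sum_nbij' (fun i => k - i) (fun j => k - j) ?_ ?_ ?_ ?_ ?_
  · intro i hi
    have := Finset.mem_range.mp hi
    simp only [Finset.mem_Icc]
    omega
  · intro j hj
    have := Finset.mem_Icc.mp hj
    simp only [Finset.mem_range]
    omega
  · intro i hi
    have := Finset.mem_range.mp hi
    omega
  · intro j hj
    have := Finset.mem_Icc.mp hj
    omega
  · intro i hi
    have hik : i < k := Finset.mem_range.mp hi
    rw [hps i (le_of_lt hik)]
    have hcond : (psum u k ≤ psum u k - psum u (k - i)) ↔ psum u (k - i) ≤ 0 := by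
      constructor <;> intro h <;> linarith
    by_cases hc : psum u (k - i) ≤ 0
    · rw [if_pos (hcond.mpr hc), if_pos hc]
    · rw [if_neg (fun h => hc (hcond.mp h)), if_neg hc]

lemma Gh_rev {k : ℕ} (hk : k ≤ n) (x : Fin n → ℝ) (hx : sigh x = k) :
    Gh (x ∘ extPerm hk (Fin.revPerm : Equiv.Perm (Fin k))) = Fst (res hk x) := by
  set u : Fin k → ℝ := res hk x with hu
  set x' : Fin n → ℝ := x ∘ extPerm hk (Fin.revPerm : Equiv.Perm (Fin k)) with hx'def
  have hx' : sigh x' = k := (sigh_comp_extPerm hk _ x).mpr hx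
  have hps : ∀ i ≤ k, psum x' i = psum u k - psum u (k - i) := by
    intro i hi
    rw [← psum_res hk x' hi, res_rev hk x, psum_comp_rev _ hi]
  have hB : {i | i ≤ k ∧ psum x' i
      = sSup ((fun j => psum x' j) '' Set.Iic k)}
      = {i | i ≤ k ∧ (k - i) ∈ AminSet u} := by
    ext i
    simp only [Set.mem_setOf_eq]
    constructor
    · rintro ⟨hik, hmax⟩
      refine ⟨hik, Nat.sub_le k i, fun j' hj' => ?_⟩
      have := (sSup_image_iff x' k hik).mp hmax (k - j') (Nat.sub_le k j')
      rw [hps i hik, hps (k - j') (Nat.sub_le k j')] at this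
      have hkk : k - (k - j') = j' := by omega
      rw [hkk] at this
      linarith
    · rintro ⟨hik, _, hmin⟩
      refine ⟨hik, (sSup_image_iff x' k hik).mpr fun j hj => ?_⟩
      rw [hps i hik, hps j hj]
      have := hmin (k - j) (Nat.sub_le k j)
      linarith
  have hmemB : (k - Fst u) ∈ {i | i ≤ k ∧ (k - i) ∈ AminSet u} := by
    refine ⟨Nat.sub_le k (Fst u), ?_⟩
    have hfk : Fst u ≤ k := Fst_le u
    have : k - (k - Fst u) = Fst u := by omega
    rw [this]
    exact Fst_mem u
  have hInf : sInf {i | i ≤ k ∧ (k - i) ∈ AminSet u} = k - Fst u := by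
    refine le_antisymm (Nat.sInf_le hmemB) (le_csInf ⟨_, hmemB⟩ ?_)
    rintro b ⟨hbk, hbmem⟩
    have := le_Fst u hbmem
    omega
  rw [Gh, hx', hB, hInf]
  have := Fst_le u
  omega

lemma extPerm_rev_invol {k : ℕ} (hk : k ≤ n) (x : Fin n → ℝ) :
    (x ∘ extPerm hk (Fin.revPerm : Equiv.Perm (Fin k)))
      ∘ extPerm hk (Fin.revPerm : Equiv.Perm (Fin k)) = x := by
  funext j
  simp only [Function.comp_apply]
  by_cases hj : (j : ℕ) < k
  · have h2 : j = Fin.castLE hk ⟨(j : ℕ), hj⟩ := rfl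
    rw [h2, extPerm_lt, extPerm_lt]
    simp [Fin.rev_rev]
  · rw [extPerm_ge hk _ j hj, extPerm_ge hk _ j hj]

lemma Gh_eq {k : ℕ} (hk : k ≤ n) (x : Fin n → ℝ) (hx : sigh x = k) :
    Gh x = Fst (res hk (x ∘ extPerm hk (Fin.revPerm : Equiv.Perm (Fin k)))) := by
  set x' : Fin n → ℝ := x ∘ extPerm hk (Fin.revPerm : Equiv.Perm (Fin k)) with hx'def
  have hx' : sigh x' = k := (sigh_comp_extPerm hk _ x).mpr hx
  have := Gh_rev hk x' hx'
  rwa [hx'def, extPerm_rev_invol hk x] at this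

/-! ### measurability -/

lemma measurable_psum (i : ℕ) : Measurable (fun x : Fin n → ℝ => psum x i) := by
  unfold psum
  refine Finset.measurable_sum _ fun j _ => ?_
  by_cases hj : (j : ℕ) < i
  · simpa [hj] using measurable_pi_apply j
  · simp only [hj, if_false]
    exact measurable_const

lemma measurable_psum_res {k : ℕ} (hk : k ≤ n) (i : ℕ) :
    Measurable (fun x : Fin n → ℝ => psum (res hk x) i) := by
  unfold psum res
  refine Finset.measurable_sum _ fun j _ => ?_
  by_cases hj : (j : ℕ) < i
  · simpa [hj] using measurable_pi_apply (Fin.castLE hk j)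
  · simp only [hj, if_false]
    exact measurable_const

lemma measurableSet_sigh_eq (k : ℕ) :
    MeasurableSet {x : Fin n → ℝ | sigh x = k} := by
  have : {x : Fin n → ℝ | sigh x = k}
      = {x | k ≤ n ∧ psum x k ≤ 0 ∧ ∀ i, k < i → i ≤ n → 0 < psum x i} := by
    ext x; exact sigh_eq_iff x k
  rw [this]
  by_cases hkn : k ≤ n
  · have : {x : Fin n → ℝ | k ≤ n ∧ psum x k ≤ 0 ∧ ∀ i, k < i → i ≤ n → 0 < psum x i}
        = {x | psum x k ≤ 0} ∩ ⋂ (i : ℕ), {x | k < i → i ≤ n → 0 < psum x i} := by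
      ext x
      simp only [Set.mem_setOf_eq, Set.mem_inter_iff, Set.mem_iInter]
      tauto
    rw [this]
    refine MeasurableSet.inter (measurableSet_le (measurable_psum k) measurable_const) ?_
    refine MeasurableSet.iInter fun i => ?_
    by_cases hi : k < i ∧ i ≤ n
    · have : {x : Fin n → ℝ | k < i → i ≤ n → 0 < psum x i} = {x | 0 < psum x i} := by
        ext x; simp [hi.1, hi.2]
      rw [this]
      exact measurableSet_lt measurable_const (measurable_psum i)
    · have : {x : Fin n → ℝ | k < i → i ≤ n → 0 < psum x i} = Set.univ := by
        ext x
        simp only [Set.mem_setOf_eq, Set.mem_univ, iff_true]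
        intro h1 h2
        exact absurd ⟨h1, h2⟩ hi
      rw [this]
      exact MeasurableSet.univ
  · have : {x : Fin n → ℝ | k ≤ n ∧ psum x k ≤ 0 ∧ ∀ i, k < i → i ≤ n → 0 < psum x i}
        = ∅ := by
      ext x; simp only [Set.mem_setOf_eq, Set.mem_empty_iff_false, iff_false, not_and]
      intro h; exact absurd h hkn
    rw [this]
    exact MeasurableSet.empty

lemma measurableSet_amin {k : ℕ} (hk : k ≤ n) (i : ℕ) :
    MeasurableSet {x : Fin n → ℝ | i ∈ AminSet (res hk x)} := by
  have : {x : Fin n → ℝ | i ∈ AminSet (res hk x)}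
      = {x | i ≤ k} ∩ ⋂ (j : ℕ), {x | j ≤ k → psum (res hk x) i ≤ psum (res hk x) j} := by
    ext x
    simp only [AminSet, Set.mem_setOf_eq, Set.mem_inter_iff, Set.mem_iInter]
  rw [this]
  refine MeasurableSet.inter ?_ (MeasurableSet.iInter fun j => ?_)
  · by_cases hik : i ≤ k
    · simp [hik]
    · simp [hik]
  · by_cases hjk : j ≤ k
    · have : {x : Fin n → ℝ | j ≤ k → psum (res hk x) i ≤ psum (res hk x) j}
          = {x | psum (res hk x) i ≤ psum (res hk x) j} := by
        ext x; simp [hjk]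
      rw [this]
      exact measurableSet_le (measurable_psum_res hk i) (measurable_psum_res hk j)
    · have : {x : Fin n → ℝ | j ≤ k → psum (res hk x) i ≤ psum (res hk x) j}
          = Set.univ := by
        ext x; simp [hjk]
      rw [this]
      exact MeasurableSet.univ

lemma Nat_sSup_eq_iff {A : Set ℕ} (hne : A.Nonempty) (hb : BddAbove A) {m : ℕ} :
    sSup A = m ↔ m ∈ A ∧ ∀ i ∈ A, i ≤ m := by
  constructor
  · rintro rfl
    exact ⟨Nat.sSup_mem hne hb, fun i hi => le_csSup hb hi⟩
  · rintro ⟨hm, hub⟩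
    exact le_antisymm (csSup_le hne hub) (le_csSup hb hm)

lemma measurableSet_FstRes {k : ℕ} (hk : k ≤ n) (m : ℕ) :
    MeasurableSet {x : Fin n → ℝ | Fst (res hk x) = m} := by
  have : {x : Fin n → ℝ | Fst (res hk x) = m}
      = {x | m ∈ AminSet (res hk x)}
        ∩ ⋂ (i : ℕ), {x | i ∈ AminSet (res hk x)}ᶜ ∪ {x | i ≤ m} := by
    ext x
    simp only [Fst, Set.mem_setOf_eq, Set.mem_inter_iff, Set.mem_iInter, Set.mem_union,
      Set.mem_compl_iff]
    rw [Nat_sSup_eq_iff (aminSet_nonempty _) (aminSet_bddAbove _)]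
    constructor
    · rintro ⟨h1, h2⟩
      exact ⟨h1, fun i => by
        by_cases hi : i ∈ AminSet (res hk x)
        · exact Or.inr (h2 i hi)
        · exact Or.inl hi⟩
    · rintro ⟨h1, h2⟩
      refine ⟨h1, fun i hi => ?_⟩
      rcases h2 i with h | h
      · exact absurd hi h
      · exact h
  rw [this]
  refine MeasurableSet.inter (measurableSet_amin hk m) (MeasurableSet.iInter fun i => ?_)
  refine MeasurableSet.union (measurableSet_amin hk i).compl ?_
  by_cases him : i ≤ m
  · simp [him]
  · simp [him]

lemma measurable_NcntRes {k : ℕ} (hk : k ≤ n) :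
    Measurable (fun x : Fin n → ℝ => Ncnt (res hk x)) := by
  unfold Ncnt
  refine Finset.measurable_sum _ fun i _ => ?_
  exact Measurable.ite (measurableSet_le (measurable_psum_res hk i) measurable_const)
    measurable_const measurable_const

lemma measurable_comp_extPerm {k : ℕ} (hk : k ≤ n) (π : Equiv.Perm (Fin k)) :
    Measurable (fun x : Fin n → ℝ => x ∘ extPerm hk π) :=
  measurable_pi_lambda _ fun i => measurable_pi_apply _

/-- a ℕ-valued function is measurable iff all its level sets are -/
lemma measurable_of_levels {f : (Fin n → ℝ) → ℕ}
    (h : ∀ m, MeasurableSet {x | f x = m}) : Measurable f :=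
  measurable_to_countable' fun m => h m

lemma levelset_Nh (m : ℕ) :
    {x : Fin n → ℝ | Nh x = m}
      = ⋃ (k : ℕ) (hk : k ≤ n), {x | sigh x = k} ∩ {x | Ncnt (res hk x) = m} := by
  ext x
  simp only [Set.mem_setOf_eq, Set.mem_iUnion, Set.mem_inter_iff]
  constructor
  · rintro rfl
    exact ⟨sigh x, sigh_le x, rfl, (Nh_eq_Ncnt (sigh_le x) x rfl).symm⟩
  · rintro ⟨k, hk, hxk, hcnt⟩
    rw [Nh_eq_Ncnt hk x hxk, hcnt]

lemma measurable_Nh : Measurable (Nh : (Fin n → ℝ) → ℕ) := by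
  refine measurable_of_levels fun m => ?_
  rw [levelset_Nh m]
  refine MeasurableSet.iUnion fun k => MeasurableSet.iUnion fun hk => ?_
  exact (measurableSet_sigh_eq k).inter
    ((measurable_NcntRes hk) (measurableSet_singleton m))

lemma levelset_Fh (m : ℕ) :
    {x : Fin n → ℝ | Fh x = m}
      = ⋃ (k : ℕ) (hk : k ≤ n), {x | sigh x = k} ∩ {x | Fst (res hk x) = m} := by
  ext x
  simp only [Set.mem_setOf_eq, Set.mem_iUnion, Set.mem_inter_iff]
  constructor
  · rintro rfl
    exact ⟨sigh x, sigh_le x, rfl, (Fh_eq_Fst (sigh_le x) x rfl).symm⟩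
  · rintro ⟨k, hk, hxk, hcnt⟩
    rw [Fh_eq_Fst hk x hxk, hcnt]

lemma measurable_Fh : Measurable (Fh : (Fin n → ℝ) → ℕ) := by
  refine measurable_of_levels fun m => ?_
  rw [levelset_Fh m]
  refine MeasurableSet.iUnion fun k => MeasurableSet.iUnion fun hk => ?_
  exact (measurableSet_sigh_eq k).inter (measurableSet_FstRes hk m)

lemma Th_eq_on {k : ℕ} (hk : k ≤ n) (x : Fin n → ℝ) (hx : sigh x = k) :
    Th x = ∑ i ∈ range k, if psum x k ≤ psum x i then 1 else 0 := by
  rw [Th, hx]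

lemma levelset_Th (m : ℕ) :
    {x : Fin n → ℝ | Th x = m}
      = ⋃ (k : ℕ) (hk : k ≤ n), {x | sigh x = k}
          ∩ {x | (∑ i ∈ range k, if psum x k ≤ psum x i then 1 else 0) = m} := by
  ext x
  simp only [Set.mem_setOf_eq, Set.mem_iUnion, Set.mem_inter_iff]
  constructor
  · rintro rfl
    exact ⟨sigh x, sigh_le x, rfl, (Th_eq_on (sigh_le x) x rfl).symm⟩
  · rintro ⟨k, hk, hxk, hcnt⟩
    rw [Th_eq_on hk x hxk, hcnt]

lemma measurable_Th : Measurable (Th : (Fin n → ℝ) → ℕ) := by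
  refine measurable_of_levels fun m => ?_
  rw [levelset_Th m]
  refine MeasurableSet.iUnion fun k => MeasurableSet.iUnion fun hk => ?_
  refine (measurableSet_sigh_eq k).inter ?_
  have : Measurable (fun x : Fin n → ℝ =>
      ∑ i ∈ range k, if psum x k ≤ psum x i then (1 : ℕ) else 0) := by
    refine Finset.measurable_sum _ fun i _ => ?_
    exact Measurable.ite (measurableSet_le (measurable_psum k) (measurable_psum i))
      measurable_const measurable_const
  exact this (measurableSet_singleton m)

lemma levelset_Gh (m : ℕ) :
    {x : Fin n → ℝ | Gh x = m}
      = ⋃ (k : ℕ) (hk : k ≤ n), {x | sigh x = k}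
          ∩ ((fun x => x ∘ extPerm hk (Fin.revPerm : Equiv.Perm (Fin k))) ⁻¹'
              {x | Fst (res hk x) = m}) := by
  ext x
  simp only [Set.mem_setOf_eq, Set.mem_iUnion, Set.mem_inter_iff, Set.mem_preimage]
  constructor
  · rintro rfl
    exact ⟨sigh x, sigh_le x, rfl, (Gh_eq (sigh_le x) x rfl).symm⟩
  · rintro ⟨k, hk, hxk, hcnt⟩
    rw [Gh_eq hk x hxk]
    exact hcnt
lemma measurable_Gh : Measurable (Gh : (Fin n → ℝ) → ℕ) := by
  refine measurable_of_levels fun m => ?_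
  rw [levelset_Gh m]
  refine MeasurableSet.iUnion fun k => MeasurableSet.iUnion fun hk => ?_
  exact (measurableSet_sigh_eq k).inter
    ((measurable_comp_extPerm hk _) (measurableSet_FstRes hk m))

/-! ### Part C : the measure-theoretic argument -/

open MeasureTheory ProbabilityTheory

section Measure

variable {Ω : Type*} [MeasurableSpace Ω] (μ : Measure Ω) [IsProbabilityMeasure μ]
  (ζ : ℕ → Ω → ℝ)

/-- the vector of the first `n` increments -/
def vec (n : ℕ) (ζ : ℕ → Ω → ℝ) (ω : Ω) : Fin n → ℝ := fun i => ζ i ω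

lemma measurable_vec (hmeas : ∀ i, Measurable (ζ i)) : Measurable (vec n ζ) :=
  measurable_pi_lambda _ fun i => hmeas i

lemma map_vec_eq_pi (hmeas : ∀ i, Measurable (ζ i))
    (hindep : ProbabilityTheory.iIndepFun ζ μ)
    (hident : ∀ i, μ.map (ζ i) = μ.map (ζ 0)) :
    μ.map (vec n ζ) = Measure.pi (fun _ : Fin n => μ.map (ζ 0)) := by
  haveI : IsProbabilityMeasure (μ.map (ζ 0)) :=
    Measure.isProbabilityMeasure_map (hmeas 0).aemeasurable
  symm
  apply Measure.pi_eq
  intro s hs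
  rw [Measure.map_apply (measurable_vec ζ hmeas) (MeasurableSet.univ_pi hs)]
  classical
  set s' : ℕ → Set ℝ := fun i => if h : i < n then s ⟨i, h⟩ else Set.univ with hs'
  have hpre : vec n ζ ⁻¹' (Set.pi Set.univ s) = ⋂ i ∈ Finset.range n, ζ i ⁻¹' s' i := by
    ext ω
    simp only [Set.mem_preimage, Set.mem_pi, Set.mem_univ, forall_true_left, Set.mem_iInter,
      Finset.mem_range, vec]
    constructor
    · intro h i hi
      simpa [s', hi] using h ⟨i, hi⟩
    · intro h j
      have := h (j : ℕ) j.2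
      simpa [s', j.2] using this
  rw [hpre]
  have hmul := (ProbabilityTheory.iIndepFun_iff_measure_inter_preimage_eq_mul.mp hindep)
    (Finset.range n) (sets := s') (fun i _ => by
      by_cases hi : i < n
      · simpa [s', hi] using hs ⟨i, hi⟩
      · simp [s', hi])
  rw [hmul]
  rw [← Fin.prod_univ_eq_prod_range (fun i => μ (ζ i ⁻¹' s' i)) n]
  refine Finset.prod_congr rfl fun i _ => ?_
  have h1 : μ (ζ (i : ℕ) ⁻¹' s' (i : ℕ)) = (μ.map (ζ (i : ℕ))) (s' (i : ℕ)) := by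
    rw [Measure.map_apply (hmeas _) (by
      by_cases hi : (i : ℕ) < n
      · simpa [s', hi] using hs ⟨(i : ℕ), hi⟩
      · simp [s', hi])]
  rw [h1, hident]
  congr 1
  simp [s', i.2]

lemma measurable_compPerm (τ : Equiv.Perm (Fin n)) :
    Measurable (fun x : Fin n → ℝ => x ∘ τ) :=
  measurable_pi_lambda _ fun i => measurable_pi_apply _

lemma pi_perm_invariant (m0 : Measure ℝ) [IsProbabilityMeasure m0] (τ : Equiv.Perm (Fin n)) :
    (Measure.pi (fun _ : Fin n => m0)).map (fun x => x ∘ τ)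
      = Measure.pi (fun _ : Fin n => m0) := by
  symm
  apply Measure.pi_eq
  intro s hs
  rw [Measure.map_apply (measurable_compPerm τ) (MeasurableSet.univ_pi hs)]
  have hpre : (fun x : Fin n → ℝ => x ∘ τ) ⁻¹' (Set.pi Set.univ s)
      = Set.pi Set.univ (fun j => s (τ.symm j)) := by
    ext x
    simp only [Set.mem_preimage, Set.mem_pi, Set.mem_univ, forall_true_left,
      Function.comp_apply]
    constructor
    · intro h j
      have := h (τ.symm j)
      rwa [Equiv.apply_symm_apply] at this
    · intro h i
      have := h (τ i)
      rwa [Equiv.symm_apply_apply] at this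
  rw [hpre, Measure.pi_pi]
  exact Fintype.prod_equiv τ.symm _ _ fun j => rfl

end Measure

section Core

variable (ν : Measure (Fin n → ℝ)) [IsProbabilityMeasure ν]

lemma meas_preimage (hinv : ∀ τ : Equiv.Perm (Fin n), ν.map (fun x => x ∘ τ) = ν)
    (τ : Equiv.Perm (Fin n)) {A : Set (Fin n → ℝ)} (hA : MeasurableSet A) :
    ν ((fun x => x ∘ τ) ⁻¹' A) = ν A := by
  rw [← Measure.map_apply (measurable_compPerm τ) hA, hinv]

lemma step_NT (hinv : ∀ τ : Equiv.Perm (Fin n), ν.map (fun x => x ∘ τ) = ν)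
    {k : ℕ} (hk : k ≤ n) (m : ℕ) :
    ν ({x | sigh x = k} ∩ {x | Nh x = m}) = ν ({x | sigh x = k} ∩ {x | Th x = m}) := by
  have hNset : {x : Fin n → ℝ | sigh x = k} ∩ {x | Nh x = m}
      = {x | sigh x = k} ∩ {x | Ncnt (res hk x) = m} := by
    ext x
    simp only [Set.mem_inter_iff, Set.mem_setOf_eq]
    constructor
    · rintro ⟨h1, h2⟩
      exact ⟨h1, by rw [← Nh_eq_Ncnt hk x h1]; exact h2⟩
    · rintro ⟨h1, h2⟩
      exact ⟨h1, by rw [Nh_eq_Ncnt hk x h1]; exact h2⟩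
  have hpre : (fun x : Fin n → ℝ => x ∘ extPerm hk (Fin.revPerm : Equiv.Perm (Fin k))) ⁻¹'
      ({x | sigh x = k} ∩ {x | Th x = m})
      = {x | sigh x = k} ∩ {x | Ncnt (res hk x) = m} := by
    ext x
    simp only [Set.mem_preimage, Set.mem_inter_iff, Set.mem_setOf_eq]
    constructor
    · rintro ⟨h1, h2⟩
      have hx : sigh x = k := (sigh_comp_extPerm hk _ x).mp h1
      exact ⟨hx, by rw [← Th_rev hk x hx]; exact h2⟩
    · rintro ⟨h1, h2⟩
      exact ⟨(sigh_comp_extPerm hk _ x).mpr h1, by rw [Th_rev hk x h1]; exact h2⟩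
  have hmeasT : MeasurableSet ({x : Fin n → ℝ | sigh x = k} ∩ {x | Th x = m}) :=
    (measurableSet_sigh_eq k).inter (measurable_Th (measurableSet_singleton m))
  rw [hNset, ← hpre, meas_preimage ν hinv _ hmeasT]

lemma step_GF (hinv : ∀ τ : Equiv.Perm (Fin n), ν.map (fun x => x ∘ τ) = ν)
    {k : ℕ} (hk : k ≤ n) (m : ℕ) :
    ν ({x | sigh x = k} ∩ {x | Gh x = m}) = ν ({x | sigh x = k} ∩ {x | Fh x = m}) := by
  have hFset : {x : Fin n → ℝ | sigh x = k} ∩ {x | Fh x = m}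
      = {x | sigh x = k} ∩ {x | Fst (res hk x) = m} := by
    ext x
    simp only [Set.mem_inter_iff, Set.mem_setOf_eq]
    constructor
    · rintro ⟨h1, h2⟩
      exact ⟨h1, by rw [← Fh_eq_Fst hk x h1]; exact h2⟩
    · rintro ⟨h1, h2⟩
      exact ⟨h1, by rw [Fh_eq_Fst hk x h1]; exact h2⟩
  have hpre : (fun x : Fin n → ℝ => x ∘ extPerm hk (Fin.revPerm : Equiv.Perm (Fin k))) ⁻¹'
      ({x | sigh x = k} ∩ {x | Gh x = m})
      = {x | sigh x = k} ∩ {x | Fst (res hk x) = m} := by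
    ext x
    simp only [Set.mem_preimage, Set.mem_inter_iff, Set.mem_setOf_eq]
    constructor
    · rintro ⟨h1, h2⟩
      have hx : sigh x = k := (sigh_comp_extPerm hk _ x).mp h1
      exact ⟨hx, by rw [← Gh_rev hk x hx]; exact h2⟩
    · rintro ⟨h1, h2⟩
      exact ⟨(sigh_comp_extPerm hk _ x).mpr h1, by rw [Gh_rev hk x h1]; exact h2⟩
  have hmeasG : MeasurableSet ({x : Fin n → ℝ | sigh x = k} ∩ {x | Gh x = m}) :=
    (measurableSet_sigh_eq k).inter (measurable_Gh (measurableSet_singleton m))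
  rw [hFset, ← hpre, meas_preimage ν hinv _ hmeasG]

lemma step_NF (hinv : ∀ τ : Equiv.Perm (Fin n), ν.map (fun x => x ∘ τ) = ν)
    {k : ℕ} (hk : k ≤ n) (m : ℕ) :
    ν ({x | sigh x = k} ∩ {x | Nh x = m}) = ν ({x | sigh x = k} ∩ {x | Fh x = m}) := by
  classical
  set A : Equiv.Perm (Fin k) → Set (Fin n → ℝ) :=
    fun π => {x | sigh x = k ∧ Ncnt (res hk x ∘ π) = m} with hA
  set B : Equiv.Perm (Fin k) → Set (Fin n → ℝ) :=
    fun π => {x | sigh x = k ∧ Fst (res hk x ∘ π) = m} with hB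
  have hA1 : A 1 = {x | sigh x = k} ∩ {x | Ncnt (res hk x) = m} := by
    ext x; simp [A, Set.mem_inter_iff]
  have hB1 : B 1 = {x | sigh x = k} ∩ {x | Fst (res hk x) = m} := by
    ext x; simp [B, Set.mem_inter_iff]
  have hA1meas : MeasurableSet (A 1) := by
    rw [hA1]
    exact (measurableSet_sigh_eq k).inter (measurable_NcntRes hk (measurableSet_singleton m))
  have hB1meas : MeasurableSet (B 1) := by
    rw [hB1]
    exact (measurableSet_sigh_eq k).inter (measurableSet_FstRes hk m)
  have hApre : ∀ π : Equiv.Perm (Fin k),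
      (fun x : Fin n → ℝ => x ∘ extPerm hk π) ⁻¹' (A 1) = A π := by
    intro π
    ext x
    simp only [Set.mem_preimage, hA1, Set.mem_inter_iff, Set.mem_setOf_eq, A]
    rw [sigh_comp_extPerm hk π x, res_comp_extPerm hk π x]
  have hBpre : ∀ π : Equiv.Perm (Fin k),
      (fun x : Fin n → ℝ => x ∘ extPerm hk π) ⁻¹' (B 1) = B π := by
    intro π
    ext x
    simp only [Set.mem_preimage, hB1, Set.mem_inter_iff, Set.mem_setOf_eq, B]
    rw [sigh_comp_extPerm hk π x, res_comp_extPerm hk π x]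
  have hAmeas : ∀ π : Equiv.Perm (Fin k), MeasurableSet (A π) := by
    intro π
    rw [← hApre π]
    exact (measurable_comp_extPerm hk π) hA1meas
  have hBmeas : ∀ π : Equiv.Perm (Fin k), MeasurableSet (B π) := by
    intro π
    rw [← hBpre π]
    exact (measurable_comp_extPerm hk π) hB1meas
  have hνA : ∀ π : Equiv.Perm (Fin k), ν (A π) = ν (A 1) := by
    intro π
    rw [← hApre π, meas_preimage ν hinv _ hA1meas]
  have hνB : ∀ π : Equiv.Perm (Fin k), ν (B π) = ν (B 1) := by
    intro π
    rw [← hBpre π, meas_preimage ν hinv _ hB1meas]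
  have hsum : ∑ π : Equiv.Perm (Fin k), ν (A π) = ∑ π : Equiv.Perm (Fin k), ν (B π) := by
    have hAi : ∑ π : Equiv.Perm (Fin k), ν (A π)
        = ∫⁻ x, ∑ π : Equiv.Perm (Fin k), (A π).indicator 1 x ∂ν := by
      rw [lintegral_finset_sum _ fun π _ => (measurable_one.indicator (hAmeas π))]
      exact Finset.sum_congr rfl fun π _ => (lintegral_indicator_one (hAmeas π)).symm
    have hBi : ∑ π : Equiv.Perm (Fin k), ν (B π)
        = ∫⁻ x, ∑ π : Equiv.Perm (Fin k), (B π).indicator 1 x ∂ν := by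
      rw [lintegral_finset_sum _ fun π _ => (measurable_one.indicator (hBmeas π))]
      exact Finset.sum_congr rfl fun π _ => (lintegral_indicator_one (hBmeas π)).symm
    rw [hAi, hBi]
    refine lintegral_congr fun x => ?_
    by_cases hx : sigh x = k
    · have hAx : ∀ π : Equiv.Perm (Fin k),
          (A π).indicator (1 : (Fin n → ℝ) → ℝ≥0∞) x
            = if Ncnt (res hk x ∘ π) = m then 1 else 0 := by
        intro π
        by_cases hmem : Ncnt (res hk x ∘ π) = m
        · rw [Set.indicator_of_mem (by exact ⟨hx, hmem⟩), if_pos hmem]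
          rfl
        · rw [Set.indicator_of_notMem (fun hc => hmem hc.2), if_neg hmem]
      have hBx : ∀ π : Equiv.Perm (Fin k),
          (B π).indicator (1 : (Fin n → ℝ) → ℝ≥0∞) x
            = if Fst (res hk x ∘ π) = m then 1 else 0 := by
        intro π
        by_cases hmem : Fst (res hk x ∘ π) = m
        · rw [Set.indicator_of_mem (by exact ⟨hx, hmem⟩), if_pos hmem]
          rfl
        · rw [Set.indicator_of_notMem (fun hc => hmem hc.2), if_neg hmem]
      rw [Finset.sum_congr rfl fun π _ => hAx π, Finset.sum_congr rfl fun π _ => hBx π]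
      have hnat := main_count k (res hk x) m
      exact_mod_cast hnat
    · have hz : ∀ π : Equiv.Perm (Fin k),
          (A π).indicator (1 : (Fin n → ℝ) → ℝ≥0∞) x = 0 ∧
          (B π).indicator (1 : (Fin n → ℝ) → ℝ≥0∞) x = 0 := by
        intro π
        exact ⟨Set.indicator_of_notMem (fun hc => hx hc.1) _,
          Set.indicator_of_notMem (fun hc => hx hc.1) _⟩
      rw [Finset.sum_congr rfl fun π _ => (hz π).1, Finset.sum_congr rfl fun π _ => (hz π).2]
  have hcard : ∀ C : Equiv.Perm (Fin k) → Set (Fin n → ℝ),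
      (∀ π, ν (C π) = ν (C 1)) →
      ∑ π : Equiv.Perm (Fin k), ν (C π) = (Fintype.card (Equiv.Perm (Fin k))) • ν (C 1) := by
    intro C hC
    rw [Finset.sum_congr rfl fun π _ => hC π, Finset.sum_const, Finset.card_univ]
  rw [hcard A hνA, hcard B hνB] at hsum
  have hcard0 : (Fintype.card (Equiv.Perm (Fin k)) : ℝ≥0∞) ≠ 0 := by
    simp [Fintype.card_ne_zero]
  have hcardtop : (Fintype.card (Equiv.Perm (Fin k)) : ℝ≥0∞) ≠ ⊤ := ENNReal.natCast_ne_top _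
  rw [nsmul_eq_mul, nsmul_eq_mul] at hsum
  have hfinal : ν (A 1) = ν (B 1) := by
    have h1 := congrArg (fun z => (Fintype.card (Equiv.Perm (Fin k)) : ℝ≥0∞)⁻¹ * z) hsum
    simpa [← mul_assoc, ENNReal.inv_mul_cancel hcard0 hcardtop, one_mul] using h1
  have hNset : {x : Fin n → ℝ | sigh x = k} ∩ {x | Nh x = m} = A 1 := by
    rw [hA1]
    ext x
    simp only [Set.mem_inter_iff, Set.mem_setOf_eq]
    constructor
    · rintro ⟨h1, h2⟩
      exact ⟨h1, by rw [← Nh_eq_Ncnt hk x h1]; exact h2⟩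
    · rintro ⟨h1, h2⟩
      exact ⟨h1, by rw [Nh_eq_Ncnt hk x h1]; exact h2⟩
  have hFset : {x : Fin n → ℝ | sigh x = k} ∩ {x | Fh x = m} = B 1 := by
    rw [hB1]
    ext x
    simp only [Set.mem_inter_iff, Set.mem_setOf_eq]
    constructor
    · rintro ⟨h1, h2⟩
      exact ⟨h1, by rw [← Fh_eq_Fst hk x h1]; exact h2⟩
    · rintro ⟨h1, h2⟩
      exact ⟨h1, by rw [Fh_eq_Fst hk x h1]; exact h2⟩
  rw [hNset, hFset, hfinal]

lemma glue (f g : (Fin n → ℝ) → ℕ) (hf : Measurable f) (hg : Measurable g)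
    (h : ∀ k, k ≤ n → ∀ m, ν ({x | sigh x = k} ∩ {x | f x = m})
      = ν ({x | sigh x = k} ∩ {x | g x = m})) :
    ν.map f = ν.map g := by
  refine Measure.ext_of_singleton fun m => ?_
  rw [Measure.map_apply hf (measurableSet_singleton m),
    Measure.map_apply hg (measurableSet_singleton m)]
  have hpart : ∀ (u : (Fin n → ℝ) → ℕ),
      (u ⁻¹' {m}) = ⋃ k ∈ Finset.range (n + 1), ({x | sigh x = k} ∩ {x | u x = m}) := by
    intro u
    ext x
    simp only [Set.mem_preimage, Set.mem_singleton_iff, Set.mem_iUnion, Set.mem_inter_iff,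
      Set.mem_setOf_eq, Finset.mem_range]
    constructor
    · intro hu
      exact ⟨sigh x, Nat.lt_succ_of_le (sigh_le x), rfl, hu⟩
    · rintro ⟨k, _, _, hu⟩
      exact hu
  rw [hpart f, hpart g]
  have hdisj : ∀ (u : (Fin n → ℝ) → ℕ), Set.Pairwise ↑(Finset.range (n + 1))
      (Function.onFun Disjoint fun k => {x | sigh x = k} ∩ {x | u x = m}) := by
    intro u k _ l _ hkl
    refine Set.disjoint_left.mpr ?_
    rintro x ⟨h1, _⟩ ⟨h2, _⟩
    exact hkl (h1 ▸ h2 ▸ rfl)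
  rw [measure_biUnion_finset (hdisj f)
    (fun k _ => (measurableSet_sigh_eq k).inter (hf (measurableSet_singleton m))),
    measure_biUnion_finset (hdisj g)
    (fun k _ => (measurableSet_sigh_eq k).inter (hg (measurableSet_singleton m)))]
  refine Finset.sum_congr rfl fun k hk => ?_
  exact h k (Nat.lt_succ_iff.mp (Finset.mem_range.mp hk)) m

end Core

end SA


/-- The four random variables N⁻, Ñ⁺, →F and ←G all have the same distribution. -/
theorem stmt_9 {Ω : Type*} [MeasurableSpace Ω] (μ : Measure Ω) [IsProbabilityMeasure μ]
    (n : ℕ) (ζ : ℕ → Ω → ℝ)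
    (hmeas : ∀ i, Measurable (ζ i))
    (hindep : ProbabilityTheory.iIndepFun ζ μ)
    (hident : ∀ i, μ.map (ζ i) = μ.map (ζ 0))
    (S : ℕ → Ω → ℝ) (hS : ∀ i ω, S i ω = ∑ j ∈ Finset.range i, ζ j ω)
    (σ : Ω → ℕ) (hσ : ∀ ω, σ ω = sSup {i | i ≤ n ∧ S i ω ≤ 0})
    (Nminus Ntildeplus F G' : Ω → ℕ)
    (hNminus : ∀ ω, Nminus ω = ∑ i ∈ Finset.Icc 1 (σ ω), if S i ω ≤ 0 then 1 else 0)
    (hNtildeplus : ∀ ω, Ntildeplus ω =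
      ∑ i ∈ Finset.range (σ ω), if S (σ ω) ω ≤ S i ω then 1 else 0)
    (hF : ∀ ω, F ω = sSup {i | i ≤ σ ω ∧ S i ω = sInf ((fun j => S j ω) '' Set.Iic (σ ω))})
    (hG' : ∀ ω, G' ω =
      σ ω - sInf {i | i ≤ σ ω ∧ S i ω = sSup ((fun j => S j ω) '' Set.Iic (σ ω))}) :
    μ.map Nminus = μ.map Ntildeplus ∧ μ.map Nminus = μ.map F ∧ μ.map Nminus = μ.map G' := by
  classical
  -- identification of `S` and `σ` with the hat versions
  have hSv : ∀ (ω : Ω) (i : ℕ), i ≤ n → S i ω = SA.psum (SA.vec n ζ ω) i := by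
    intro ω i hi
    rw [hS]
    unfold SA.psum SA.vec
    set f : ℕ → ℝ := fun j => if j < i then ζ j ω else 0 with hf
    have h1 : ∑ j : Fin n, (if ((j : Fin n) : ℕ) < i then ζ (j : ℕ) ω else 0)
        = ∑ j ∈ Finset.range n, f j := by
      rw [← Fin.sum_univ_eq_sum_range f n]
    have h2 : ∑ j ∈ Finset.range n, f j = ∑ j ∈ Finset.range i, f j := by
      symm
      refine Finset.sum_subset (Finset.range_subset_range.mpr hi) fun j _ hj => ?_
      have : ¬ j < i := fun h => hj (Finset.mem_range.mpr h)
      simp [f, this]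
    have h3 : ∑ j ∈ Finset.range i, f j = ∑ j ∈ Finset.range i, ζ j ω := by
      refine Finset.sum_congr rfl fun j hj => ?_
      simp [f, Finset.mem_range.mp hj]
    rw [h1, h2, h3]
  have hσv : ∀ ω : Ω, σ ω = SA.sigh (SA.vec n ζ ω) := by
    intro ω
    rw [hσ, SA.sigh]
    congr 1
    ext i
    simp only [Set.mem_setOf_eq, and_congr_right_iff]
    intro hi
    rw [hSv ω i hi]
  have hσn : ∀ ω : Ω, σ ω ≤ n := fun ω => (hσv ω) ▸ SA.sigh_le _
  -- identification of the four statistics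
  have hNv : Nminus = SA.Nh ∘ SA.vec n ζ := by
    funext ω
    rw [Function.comp_apply, hNminus, SA.Nh, ← hσv ω]
    refine Finset.sum_congr rfl fun i hi => ?_
    rw [hSv ω i (le_trans (Finset.mem_Icc.mp hi).2 (hσn ω))]
  have hTv : Ntildeplus = SA.Th ∘ SA.vec n ζ := by
    funext ω
    rw [Function.comp_apply, hNtildeplus, SA.Th, ← hσv ω]
    refine Finset.sum_congr rfl fun i hi => ?_
    rw [hSv ω i (le_trans (le_of_lt (Finset.mem_range.mp hi)) (hσn ω)),
      hSv ω (σ ω) (hσn ω)]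
  have himg : ∀ ω : Ω, (fun j => S j ω) '' Set.Iic (σ ω)
      = (fun j => SA.psum (SA.vec n ζ ω) j) '' Set.Iic (σ ω) := by
    intro ω
    refine Set.image_congr fun j hj => ?_
    exact hSv ω j (le_trans (Set.mem_Iic.mp hj) (hσn ω))
  have hFv : F = SA.Fh ∘ SA.vec n ζ := by
    funext ω
    rw [Function.comp_apply, hF, SA.Fh, ← hσv ω]
    congr 1
    ext i
    simp only [Set.mem_setOf_eq, and_congr_right_iff]
    intro hi
    rw [hSv ω i (le_trans hi (hσn ω)), himg ω]
  have hGv : G' = SA.Gh ∘ SA.vec n ζ := by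
    funext ω
    rw [Function.comp_apply, hG', SA.Gh, ← hσv ω]
    congr 2
    ext i
    simp only [Set.mem_setOf_eq, and_congr_right_iff]
    intro hi
    rw [hSv ω i (le_trans hi (hσn ω)), himg ω]
  -- the joint law and its invariance
  haveI hm0 : IsProbabilityMeasure (μ.map (ζ 0)) :=
    Measure.isProbabilityMeasure_map (hmeas 0).aemeasurable
  set ν : Measure (Fin n → ℝ) := μ.map (SA.vec n ζ) with hνdef
  have hν : ν = Measure.pi (fun _ : Fin n => μ.map (ζ 0)) :=
    SA.map_vec_eq_pi μ ζ hmeas hindep hident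
  haveI : IsProbabilityMeasure ν :=
    Measure.isProbabilityMeasure_map (SA.measurable_vec ζ hmeas).aemeasurable
  have hinv : ∀ τ : Equiv.Perm (Fin n), ν.map (fun x => x ∘ τ) = ν := by
    intro τ
    rw [hν]
    exact SA.pi_perm_invariant (μ.map (ζ 0)) τ
  -- pushforward identifications
  have hmapN : μ.map Nminus = ν.map SA.Nh := by
    rw [hNv, hνdef, Measure.map_map SA.measurable_Nh (SA.measurable_vec ζ hmeas)]
  have hmapT : μ.map Ntildeplus = ν.map SA.Th := by
    rw [hTv, hνdef, Measure.map_map SA.measurable_Th (SA.measurable_vec ζ hmeas)]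
  have hmapF : μ.map F = ν.map SA.Fh := by
    rw [hFv, hνdef, Measure.map_map SA.measurable_Fh (SA.measurable_vec ζ hmeas)]
  have hmapG : μ.map G' = ν.map SA.Gh := by
    rw [hGv, hνdef, Measure.map_map SA.measurable_Gh (SA.measurable_vec ζ hmeas)]
  refine ⟨?_, ?_, ?_⟩
  · rw [hmapN, hmapT]
    exact SA.glue ν SA.Nh SA.Th SA.measurable_Nh SA.measurable_Th
      (fun k hk m => SA.step_NT ν hinv hk m)
  · rw [hmapN, hmapF]
    exact SA.glue ν SA.Nh SA.Fh SA.measurable_Nh SA.measurable_Fh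
      (fun k hk m => SA.step_NF ν hinv hk m)
  · rw [hmapN, hmapG]
    exact SA.glue ν SA.Nh SA.Gh SA.measurable_Nh SA.measurable_Gh
      (fun k hk m => (SA.step_NF ν hinv hk m).trans (SA.step_GF ν hinv hk m).symm)
end

section
/- Let ζ₁,…,ζₙ be i.i.d. real random variables, S_i the random walk, σ = max{i ≤ n : S_i ≤ 0}. The four random variables N⁺ = Σ_{i=1}^σ 1{S_i ≥ 0}, Ñ⁻ = Σ_{i=0}^{σ−1} 1{S_i ≤ S_σ}, ←F = σ − min{i ≤ σ : S_i = min_{j≤σ} S_j}, and →G = max{i ≤ σ : S_i = max_{j≤σ} S_j} all have the same distribution. -/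
open MeasureTheory ProbabilityTheory Finset

namespace SA10

/-- partial sums of an increment sequence -/
def psum (z : ℕ → ℝ) (i : ℕ) : ℝ := ∑ j ∈ Finset.range i, z j

@[simp] lemma psum_zero (z : ℕ → ℝ) : psum z 0 = 0 := by simp [psum]

lemma psum_succ (z : ℕ → ℝ) (i : ℕ) : psum z (i + 1) = psum z i + z i := by
  simp [psum, Finset.sum_range_succ]

/-- last time ≤ n the walk is nonpositive -/
noncomputable def sg (n : ℕ) (z : ℕ → ℝ) : ℕ := sSup {i | i ≤ n ∧ psum z i ≤ 0}

/-- N⁺ statistic -/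
noncomputable def np (n : ℕ) (z : ℕ → ℝ) : ℕ :=
  ∑ i ∈ Finset.Icc 1 (sg n z), if 0 ≤ psum z i then 1 else 0

/-- Ñ⁻ statistic -/
noncomputable def nt (n : ℕ) (z : ℕ → ℝ) : ℕ :=
  ∑ i ∈ Finset.range (sg n z), if psum z i ≤ psum z (sg n z) then 1 else 0

/-- first argmin of the walk on [0,m] -/
noncomputable def am (m : ℕ) (z : ℕ → ℝ) : ℕ :=
  sInf {i | i ≤ m ∧ psum z i = sInf ((fun j => psum z j) '' Set.Iic m)}

/-- last argmax of the walk on [0,m] -/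
noncomputable def aM (m : ℕ) (z : ℕ → ℝ) : ℕ :=
  sSup {i | i ≤ m ∧ psum z i = sSup ((fun j => psum z j) '' Set.Iic m)}

noncomputable def ff (n : ℕ) (z : ℕ → ℝ) : ℕ := sg n z - am (sg n z) z

noncomputable def gg (n : ℕ) (z : ℕ → ℝ) : ℕ := aM (sg n z) z

section sgFacts

variable {n : ℕ} {z : ℕ → ℝ}

lemma sg_set_nonempty : {i | i ≤ n ∧ psum z i ≤ 0}.Nonempty :=
  ⟨0, by simp⟩

lemma sg_set_bdd : BddAbove {i | i ≤ n ∧ psum z i ≤ 0} :=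
  ⟨n, fun i hi => hi.1⟩

lemma sg_mem : sg n z ≤ n ∧ psum z (sg n z) ≤ 0 :=
  Nat.sSup_mem sg_set_nonempty sg_set_bdd

lemma sg_le : sg n z ≤ n := sg_mem.1

lemma psum_sg_nonpos : psum z (sg n z) ≤ 0 := sg_mem.2

lemma lt_of_mem_sg {i : ℕ} (h1 : i ≤ n) (h2 : psum z i ≤ 0) : i ≤ sg n z :=
  le_csSup sg_set_bdd ⟨h1, h2⟩

lemma sg_eq_iff {m : ℕ} :
    sg n z = m ↔ m ≤ n ∧ psum z m ≤ 0 ∧ ∀ i, m < i → i ≤ n → 0 < psum z i := by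
  constructor
  · rintro rfl
    refine ⟨sg_le, psum_sg_nonpos, fun i hi hin => ?_⟩
    by_contra h
    push_neg at h
    exact absurd (lt_of_mem_sg hin h) (by omega)
  · rintro ⟨h1, h2, h3⟩
    have hle : sg n z ≤ m := by
      by_contra h
      push_neg at h
      exact absurd (h3 _ h sg_le) (not_lt.2 psum_sg_nonpos)
    exact le_antisymm hle (lt_of_mem_sg h1 h2)

end sgFacts

section argFacts

variable {m : ℕ} {z : ℕ → ℝ}

private lemma exists_max : ∃ i ≤ m, ∀ j ≤ m, psum z j ≤ psum z i := by
  obtain ⟨i, hi, hmax⟩ := Finset.exists_max_image (Finset.range (m+1)) (fun j => psum z j)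
    ⟨0, by simp⟩
  rw [Finset.mem_range, Nat.lt_succ_iff] at hi
  exact ⟨i, hi, fun j hj => hmax j (Finset.mem_range.2 (by omega))⟩

private lemma exists_min : ∃ i ≤ m, ∀ j ≤ m, psum z i ≤ psum z j := by
  obtain ⟨i, hi, hmin⟩ := Finset.exists_min_image (Finset.range (m+1)) (fun j => psum z j)
    ⟨0, by simp⟩
  rw [Finset.mem_range, Nat.lt_succ_iff] at hi
  exact ⟨i, hi, fun j hj => hmin j (Finset.mem_range.2 (by omega))⟩

lemma csSup_image_eq {i : ℕ} (hi : i ≤ m) (hmax : ∀ j ≤ m, psum z j ≤ psum z i) :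
    sSup ((fun j => psum z j) '' Set.Iic m) = psum z i := by
  apply IsGreatest.csSup_eq
  exact ⟨⟨i, hi, rfl⟩, by rintro _ ⟨j, hj, rfl⟩; exact hmax j hj⟩

lemma csInf_image_eq {i : ℕ} (hi : i ≤ m) (hmin : ∀ j ≤ m, psum z i ≤ psum z j) :
    sInf ((fun j => psum z j) '' Set.Iic m) = psum z i := by
  apply IsLeast.csInf_eq
  exact ⟨⟨i, hi, rfl⟩, by rintro _ ⟨j, hj, rfl⟩; exact hmin j hj⟩

lemma aM_eq_iff {k : ℕ} :
    aM m z = k ↔ k ≤ m ∧ (∀ j ≤ m, psum z j ≤ psum z k) ∧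
      (∀ j ≤ m, k < j → psum z j < psum z k) := by
  obtain ⟨i, hi, hmax⟩ := exists_max (m := m) (z := z)
  have hS : sSup ((fun j => psum z j) '' Set.Iic m) = psum z i := csSup_image_eq hi hmax
  have hAdef : {j | j ≤ m ∧ psum z j = sSup ((fun j => psum z j) '' Set.Iic m)}
      = {j | j ≤ m ∧ psum z j = psum z i} := by rw [hS]
  have hne : ({j | j ≤ m ∧ psum z j = psum z i} : Set ℕ).Nonempty := ⟨i, hi, rfl⟩
  have hbdd : BddAbove {j | j ≤ m ∧ psum z j = psum z i} := ⟨m, fun j hj => hj.1⟩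
  have hmem := Nat.sSup_mem hne hbdd
  have haM : aM m z = sSup {j | j ≤ m ∧ psum z j = psum z i} := by rw [aM, hAdef]
  set K := sSup {j | j ≤ m ∧ psum z j = psum z i} with hK
  have hKm : K ≤ m := hmem.1
  have hKv : psum z K = psum z i := hmem.2
  constructor
  · rintro rfl
    rw [haM, hKv]
    refine ⟨hKm, hmax, fun j hj hlt => ?_⟩
    rcases lt_or_eq_of_le (hmax j hj) with h | h
    · exact h
    · exact absurd (le_csSup hbdd ⟨hj, h⟩) (by rw [← hK]; omega)
  · rintro ⟨h1, h2, h3⟩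
    rw [haM]
    have hik : psum z k = psum z i := le_antisymm (hmax k h1) (h2 i hi)
    apply le_antisymm
    · apply csSup_le hne
      intro j hj
      by_contra h
      push_neg at h
      have := h3 j hj.1 h
      rw [hj.2, hik] at this
      exact lt_irrefl _ this
    · exact le_csSup hbdd ⟨h1, hik⟩

lemma am_eq_iff {k : ℕ} :
    am m z = k ↔ k ≤ m ∧ (∀ j ≤ m, psum z k ≤ psum z j) ∧
      (∀ j < k, psum z k < psum z j) := by
  obtain ⟨i, hi, hmin⟩ := exists_min (m := m) (z := z)
  have hS : sInf ((fun j => psum z j) '' Set.Iic m) = psum z i := csInf_image_eq hi hmin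
  have hAdef : {j | j ≤ m ∧ psum z j = sInf ((fun j => psum z j) '' Set.Iic m)}
      = {j | j ≤ m ∧ psum z j = psum z i} := by rw [hS]
  have hne : ({j | j ≤ m ∧ psum z j = psum z i} : Set ℕ).Nonempty := ⟨i, hi, rfl⟩
  have hmem := Nat.sInf_mem hne
  have ham : am m z = sInf {j | j ≤ m ∧ psum z j = psum z i} := by rw [am, hAdef]
  set K := sInf {j | j ≤ m ∧ psum z j = psum z i} with hK
  have hKm : K ≤ m := hmem.1
  have hKv : psum z K = psum z i := hmem.2
  constructor
  · rintro rfl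
    rw [ham, hKv]
    refine ⟨hKm, hmin, fun j hj => ?_⟩
    have hjm : j ≤ m := le_trans (le_of_lt (lt_of_lt_of_le hj hKm)) le_rfl
    rcases lt_or_eq_of_le (hmin j hjm) with h | h
    · exact h
    · refine absurd (Nat.sInf_le (show j ∈ {j | j ≤ m ∧ psum z j = psum z i} from ⟨hjm, h.symm⟩)) ?_
      rw [← hK]
      omega
  · rintro ⟨h1, h2, h3⟩
    rw [ham]
    have hik : psum z k = psum z i := le_antisymm (h2 i hi) (hmin k h1)
    apply le_antisymm
    · exact Nat.sInf_le ⟨h1, hik⟩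
    · apply le_csInf hne
      intro j hj
      by_contra h
      push_neg at h
      have := h3 j h
      rw [hj.2, hik] at this
      exact lt_irrefl _ this

end argFacts


def buildList {α : Type*} : ℕ → Finset ℕ → (ℕ → α) → List α
  | 0, _, _ => []
  | (m+1), ε, z => if (m+1) ∈ ε then z m :: buildList m ε z else buildList m ε z ++ [z m]

def Pat' (m : ℕ) (ε : Finset ℕ) (z : ℕ → ℝ) : Prop :=
  ∀ i ∈ Finset.Icc 1 m, (0 ≤ psum z i ↔ i ∈ ε)

noncomputable def kk (m : ℕ) (ε : Finset ℕ) : ℕ := ((Finset.Icc 1 m).filter (· ∈ ε)).card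

noncomputable def aS (m : ℕ) (ε : Finset ℕ) (z : ℕ → ℝ) : ℝ :=
  ∑ i ∈ (Finset.Icc 1 m).filter (· ∈ ε), z (i-1)

noncomputable def bS (m : ℕ) (ε : Finset ℕ) (z : ℕ → ℝ) : ℝ :=
  ∑ i ∈ (Finset.Icc 1 m).filter (· ∉ ε), z (i-1)

lemma Icc_succ (m : ℕ) : Finset.Icc 1 (m+1) = insert (m+1) (Finset.Icc 1 m) := by
  ext i; simp [Finset.mem_Icc, Finset.mem_insert]; omega

lemma Pat'_mono {m : ℕ} {ε : Finset ℕ} {z : ℕ → ℝ} (h : Pat' (m+1) ε z) : Pat' m ε z := by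
  intro i hi
  exact h i (by rw [Finset.mem_Icc] at *; omega)

lemma kk_succ_mem {m : ℕ} {ε : Finset ℕ} (h : (m+1) ∈ ε) : kk (m+1) ε = kk m ε + 1 := by
  rw [kk, kk, Icc_succ, Finset.filter_insert, if_pos h, Finset.card_insert_of_notMem]
  simp [Finset.mem_filter, Finset.mem_Icc]

lemma kk_succ_not_mem {m : ℕ} {ε : Finset ℕ} (h : (m+1) ∉ ε) : kk (m+1) ε = kk m ε := by
  rw [kk, kk, Icc_succ, Finset.filter_insert, if_neg h]

lemma aS_succ_mem {m : ℕ} {ε : Finset ℕ} {z : ℕ → ℝ} (h : (m+1) ∈ ε) :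
    aS (m+1) ε z = z m + aS m ε z := by
  rw [aS, aS, Icc_succ, Finset.filter_insert, if_pos h, Finset.sum_insert]
  · simp
  · simp [Finset.mem_filter, Finset.mem_Icc]

lemma aS_succ_not_mem {m : ℕ} {ε : Finset ℕ} {z : ℕ → ℝ} (h : (m+1) ∉ ε) :
    aS (m+1) ε z = aS m ε z := by
  rw [aS, aS, Icc_succ, Finset.filter_insert, if_neg h]

lemma bS_succ_mem {m : ℕ} {ε : Finset ℕ} {z : ℕ → ℝ} (h : (m+1) ∈ ε) :
    bS (m+1) ε z = bS m ε z := by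
  rw [bS, bS, Icc_succ, Finset.filter_insert, if_neg (by simp [h])]

lemma bS_succ_not_mem {m : ℕ} {ε : Finset ℕ} {z : ℕ → ℝ} (h : (m+1) ∉ ε) :
    bS (m+1) ε z = z m + bS m ε z := by
  rw [bS, bS, Icc_succ, Finset.filter_insert, if_pos (by simp [h]), Finset.sum_insert]
  · simp
  · simp [Finset.mem_filter, Finset.mem_Icc]

lemma aS_add_bS (m : ℕ) (ε : Finset ℕ) (z : ℕ → ℝ) : aS m ε z + bS m ε z = psum z m := by
  induction m with
  | zero => simp [aS, bS, psum]
  | succ m ih =>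
    by_cases h : (m+1) ∈ ε
    · rw [aS_succ_mem h, bS_succ_mem h, psum_succ]; linarith
    · rw [aS_succ_not_mem h, bS_succ_not_mem h, psum_succ]; linarith

lemma kk_le (m : ℕ) (ε : Finset ℕ) : kk m ε ≤ m := by
  calc kk m ε ≤ (Finset.Icc 1 m).card := Finset.card_filter_le _ _
  _ = m := by rw [Nat.card_Icc]; omega

lemma buildList_length {α : Type*} (m : ℕ) (ε : Finset ℕ) (z : ℕ → α) :
    (buildList m ε z).length = m := by
  induction m with
  | zero => rfl
  | succ m ih =>
    rw [buildList]
    split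
    · simp [ih]
    · simp [ih]

lemma buildList_sum (m : ℕ) (ε : Finset ℕ) (z : ℕ → ℝ) :
    (buildList m ε z).sum = psum z m := by
  induction m with
  | zero => simp [buildList, psum]
  | succ m ih =>
    rw [buildList, psum_succ]
    split
    · rw [List.sum_cons, ih]; ring
    · rw [List.sum_append, ih]; simp

lemma buildList_congr {α : Type*} {m : ℕ} {ε ε' : Finset ℕ} {z : ℕ → α}
    (h : ∀ i, 1 ≤ i → i ≤ m → (i ∈ ε ↔ i ∈ ε')) :
    buildList m ε z = buildList m ε' z := by
  induction m with
  | zero => rfl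
  | succ m ih =>
    have hm : (m+1) ∈ ε ↔ (m+1) ∈ ε' := h (m+1) (by omega) le_rfl
    have ihm := ih (fun i h1 h2 => h i h1 (by omega))
    rw [buildList, buildList, ihm]
    by_cases hc : (m+1) ∈ ε
    · rw [if_pos hc, if_pos (hm.mp hc)]
    · rw [if_neg hc, if_neg (fun hc' => hc (hm.mpr hc'))]

/-- The main invariant lemma about merged lists. -/
lemma main_inv (m : ℕ) (ε : Finset ℕ) (z : ℕ → ℝ) (hp : Pat' m ε z) :
    0 ≤ aS m ε z ∧ bS m ε z ≤ 0 ∧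
    ((buildList m ε z).take (kk m ε)).sum = aS m ε z ∧
    (∀ r, r ≤ kk m ε → ((buildList m ε z).take r).sum ≤ aS m ε z) ∧
    (∀ r, kk m ε < r → r ≤ m → ((buildList m ε z).take r).sum < aS m ε z) := by
  induction m with
  | zero =>
    have he : Finset.Icc 1 0 = (∅ : Finset ℕ) := Finset.Icc_eq_empty (by omega)
    have ha0 : aS 0 ε z = 0 := by rw [aS, he]; simp
    have hb0 : bS 0 ε z = 0 := by rw [bS, he]; simp
    have hk0 : kk 0 ε = 0 := by rw [kk, he]; simp
    refine ⟨le_of_eq ha0.symm, le_of_eq hb0, ?_, ?_, ?_⟩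
    · rw [ha0, hk0]; simp [buildList]
    · intro r hr; rw [ha0]; simp [buildList]
    · intro r h1 h2; omega
  | succ m ih =>
    obtain ⟨iha, ihb, ihk, ihle, ihlt⟩ := ih (Pat'_mono hp)
    have hmem : 0 ≤ psum z (m+1) ↔ (m+1) ∈ ε :=
      hp (m+1) (by rw [Finset.mem_Icc]; omega)
    have habs := aS_add_bS m ε z
    by_cases h : (m+1) ∈ ε
    · have hps : 0 ≤ psum z (m+1) := hmem.mpr h
      have ha' : aS (m+1) ε z = z m + aS m ε z := aS_succ_mem h
      have hb' : bS (m+1) ε z = bS m ε z := bS_succ_mem h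
      have hk' : kk (m+1) ε = kk m ε + 1 := kk_succ_mem h
      have hBL : buildList (m+1) ε z = z m :: buildList m ε z := by rw [buildList, if_pos h]
      have hA0 : 0 ≤ aS (m+1) ε z := by
        rw [ha']
        have : psum z (m+1) = z m + aS m ε z + bS m ε z := by
          rw [psum_succ, ← habs]; ring
        linarith
      refine ⟨hA0, by rw [hb']; exact ihb, ?_, ?_, ?_⟩
      · rw [hBL, hk', ha', List.take_succ_cons, List.sum_cons, ihk]
      · intro r hr
        cases r with
        | zero => simpa using hA0
        | succ r' =>
          rw [hk'] at hr
          rw [hBL, ha', List.take_succ_cons, List.sum_cons]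
          have := ihle r' (by omega)
          linarith
      · intro r hr1 hr2
        cases r with
        | zero => omega
        | succ r' =>
          rw [hk'] at hr1
          rw [hBL, ha', List.take_succ_cons, List.sum_cons]
          have := ihlt r' (by omega) (by omega)
          linarith
    · have hps : psum z (m+1) < 0 := by
        by_contra hc; push_neg at hc; exact h (hmem.mp hc)
      have ha' : aS (m+1) ε z = aS m ε z := aS_succ_not_mem h
      have hb' : bS (m+1) ε z = z m + bS m ε z := bS_succ_not_mem h
      have hk' : kk (m+1) ε = kk m ε := kk_succ_not_mem h
      have hBL : buildList (m+1) ε z = buildList m ε z ++ [z m] := by rw [buildList, if_neg h]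
      have hbneg : bS (m+1) ε z < 0 := by
        have : psum z (m+1) = aS m ε z + (z m + bS m ε z) := by
          rw [psum_succ, ← habs]; ring
        rw [hb']; linarith
      have hlen : (buildList m ε z).length = m := buildList_length m ε z
      have htake : ∀ r, r ≤ m → ((buildList (m+1) ε z).take r).sum = ((buildList m ε z).take r).sum := by
        intro r hr
        rw [hBL, List.take_append_of_le_length (by rw [hlen]; exact hr)]
      refine ⟨by rw [ha']; exact iha, le_of_lt hbneg, ?_, ?_, ?_⟩
      · rw [hk', htake _ (kk_le m ε), ha']
        exact ihk
      · intro r hr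
        rw [hk'] at hr
        rw [htake r (hr.trans (kk_le m ε)), ha']
        exact ihle r hr
      · intro r hr1 hr2
        rw [hk'] at hr1
        rcases eq_or_lt_of_le hr2 with rfl | hrm
        · have hall : (buildList (m+1) ε z).take (m+1) = buildList (m+1) ε z := by
            apply List.take_of_length_le
            rw [buildList_length]
          rw [hall, buildList_sum, ha']
          have : psum z (m+1) = aS m ε z + bS (m+1) ε z := by
            rw [hb', psum_succ, ← habs]; ring
          linarith
        · have hrm' : r ≤ m := by omega
          rw [htake r hrm', ha']
          exact ihlt r hr1 hrm'

/-- Uniqueness of the pattern/interleaving. -/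
lemma uniq_merge : ∀ (m : ℕ) (ε ε' : Finset ℕ) (z z' : ℕ → ℝ), Pat' m ε z → Pat' m ε' z' →
    buildList m ε z = buildList m ε' z' →
    (∀ j, j < m → z j = z' j) ∧
      ((Finset.Icc 1 m).filter (· ∈ ε) = (Finset.Icc 1 m).filter (· ∈ ε')) := by
  intro m
  induction m with
  | zero =>
    intro ε ε' z z' _ _ _
    refine ⟨fun j hj => absurd hj (by omega), ?_⟩
    rw [Finset.Icc_eq_empty (by omega)]
    simp
  | succ m ih =>
    intro ε ε' z z' hp hp' heq
    have hsum : psum z (m+1) = psum z' (m+1) := by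
      rw [← buildList_sum m.succ ε z, ← buildList_sum m.succ ε' z', heq]
    have hmm : (m+1) ∈ ε ↔ (m+1) ∈ ε' := by
      rw [← hp (m+1) (by rw [Finset.mem_Icc]; omega),
        ← hp' (m+1) (by rw [Finset.mem_Icc]; omega), hsum]
    by_cases h : (m+1) ∈ ε
    · have h' : (m+1) ∈ ε' := hmm.mp h
      rw [buildList, if_pos h, buildList, if_pos h'] at heq
      simp only [List.cons.injEq] at heq
      obtain ⟨hz, htail⟩ := heq
      obtain ⟨hzz, hfil⟩ := ih ε ε' z z' (Pat'_mono hp) (Pat'_mono hp') htail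
      constructor
      · intro j hj
        rcases Nat.lt_succ_iff_lt_or_eq.mp hj with hj' | rfl
        · exact hzz j hj'
        · exact hz
      · rw [Icc_succ, Finset.filter_insert, Finset.filter_insert, if_pos h, if_pos h', hfil]
    · have h' : (m+1) ∉ ε' := fun hc => h (hmm.mpr hc)
      rw [buildList, if_neg h, buildList, if_neg h'] at heq
      have hlen : (buildList m ε z).length = (buildList m ε' z').length := by
        rw [buildList_length, buildList_length]
      obtain ⟨htail, hlast⟩ := List.append_inj heq hlen
      simp only [List.cons.injEq] at hlast
      obtain ⟨hz, -⟩ := hlast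
      obtain ⟨hzz, hfil⟩ := ih ε ε' z z' (Pat'_mono hp) (Pat'_mono hp') htail
      constructor
      · intro j hj
        rcases Nat.lt_succ_iff_lt_or_eq.mp hj with hj' | rfl
        · exact hzz j hj'
        · exact hz
      · rw [Icc_succ, Finset.filter_insert, Finset.filter_insert, if_neg h, if_neg h', hfil]

/-- Existence of the pattern/interleaving (unmerge). -/
lemma exists_merge : ∀ (m : ℕ) (w : List ℝ) (g : ℕ → ℝ), w.length = m →
    ∃ ε z, ε ⊆ Finset.Icc 1 m ∧ Pat' m ε z ∧ buildList m ε z = w ∧ ∀ j, m ≤ j → z j = g j := by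
  intro m
  induction m with
  | zero =>
    intro w g hw
    refine ⟨∅, g, by simp, ?_, ?_, fun j _ => rfl⟩
    · intro i hi
      rw [Finset.Icc_eq_empty (by omega)] at hi
      exact absurd hi (Finset.notMem_empty i)
    · rw [List.length_eq_zero_iff] at hw
      rw [hw]; rfl
  | succ m ih =>
    intro w g hw
    have hne : w ≠ [] := by intro hc; rw [hc] at hw; simp at hw
    by_cases hs : 0 ≤ w.sum
    · obtain ⟨ε₁, z₁, hsub, hp₁, hbl, htl⟩ :=
        ih w.tail (Function.update g m (w.head hne)) (by rw [List.length_tail, hw]; omega)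
      have hz1m : z₁ m = w.head hne := by rw [htl m le_rfl, Function.update_self]
      have hnotmem : (m+1) ∉ ε₁ := fun hc => by
        have := hsub hc; rw [Finset.mem_Icc] at this; omega
      have hps : psum z₁ (m+1) = w.sum := by
        rw [psum_succ, ← buildList_sum m ε₁ z₁, hbl, hz1m]
        conv_rhs => rw [← List.cons_head_tail hne]
        rw [List.sum_cons]; ring
      refine ⟨insert (m+1) ε₁, z₁, ?_, ?_, ?_, ?_⟩
      · intro i hi
        rcases Finset.mem_insert.mp hi with rfl | hi'
        · rw [Finset.mem_Icc]; omega
        · have := hsub hi'; rw [Finset.mem_Icc] at *; omega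
      · intro i hi
        rw [Finset.mem_Icc] at hi
        rcases Nat.lt_succ_iff_lt_or_eq.mp (Nat.lt_succ_of_le hi.2) with hi' | rfl
        · rw [Finset.mem_insert]
          rw [hp₁ i (by rw [Finset.mem_Icc]; omega)]
          have : i ≠ m+1 := by omega
          simp [this]
        · rw [hps]
          simp [hs]
      · rw [buildList, if_pos (Finset.mem_insert_self _ _)]
        rw [buildList_congr (ε' := ε₁) (fun i h1 h2 => by
          rw [Finset.mem_insert]
          have : i ≠ m+1 := by omega
          simp [this]), hbl, hz1m]
        exact List.cons_head_tail hne
      · intro j hj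
        rw [htl j (by omega), Function.update_of_ne (by omega)]
    · push_neg at hs
      obtain ⟨ε₁, z₁, hsub, hp₁, hbl, htl⟩ :=
        ih w.dropLast (Function.update g m (w.getLast hne)) (by rw [List.length_dropLast, hw]; omega)
      have hz1m : z₁ m = w.getLast hne := by rw [htl m le_rfl, Function.update_self]
      have hnotmem : (m+1) ∉ ε₁ := fun hc => by
        have := hsub hc; rw [Finset.mem_Icc] at this; omega
      have hps : psum z₁ (m+1) = w.sum := by
        rw [psum_succ, ← buildList_sum m ε₁ z₁, hbl, hz1m]
        conv_rhs => rw [← List.dropLast_append_getLast hne]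
        rw [List.sum_append, List.sum_cons, List.sum_nil]; ring
      refine ⟨ε₁, z₁, ?_, ?_, ?_, ?_⟩
      · intro i hi
        have := hsub hi; rw [Finset.mem_Icc] at *; omega
      · intro i hi
        rw [Finset.mem_Icc] at hi
        rcases Nat.lt_succ_iff_lt_or_eq.mp (Nat.lt_succ_of_le hi.2) with hi' | rfl
        · exact hp₁ i (by rw [Finset.mem_Icc]; omega)
        · rw [hps]
          constructor
          · intro hc; exact absurd hc (not_le.mpr hs)
          · intro hc; exact absurd hc hnotmem
      · rw [buildList, if_neg hnotmem, hbl, hz1m]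
        exact List.dropLast_append_getLast hne
      · intro j hj
        rw [htl j (by omega), Function.update_of_ne (by omega)]

lemma map_buildList {α β : Type*} (f : α → β) (m : ℕ) (ε : Finset ℕ) (g : ℕ → α) :
    (buildList m ε g).map f = buildList m ε (fun j => f (g j)) := by
  induction m with
  | zero => rfl
  | succ m ih =>
    rw [buildList, buildList]
    split
    · rw [List.map_cons, ih]
    · rw [List.map_append, ih, List.map_singleton]

def idx (m : ℕ) (ε : Finset ℕ) : List ℕ := buildList m ε (fun j => j)

lemma idx_perm (m : ℕ) (ε : Finset ℕ) : (idx m ε).Perm (List.range m) := by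
  induction m with
  | zero => rfl
  | succ m ih =>
    rw [idx, buildList, List.range_succ]
    split
    · exact (ih.cons m).trans (List.perm_append_singleton m (List.range m)).symm
    · exact List.Perm.append_right [m] ih

lemma idx_length (m : ℕ) (ε : Finset ℕ) : (idx m ε).length = m := by
  rw [(idx_perm m ε).length_eq, List.length_range]

lemma idx_nodup (m : ℕ) (ε : Finset ℕ) : (idx m ε).Nodup :=
  ((idx_perm m ε).nodup_iff).mpr (List.nodup_range)

lemma idx_mem {m t : ℕ} {ε : Finset ℕ} : t ∈ idx m ε ↔ t < m := by
  rw [(idx_perm m ε).mem_iff, List.mem_range]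

noncomputable def eFun (m : ℕ) (ε : Finset ℕ) (j : ℕ) : ℕ := (idx m ε).getD j j

lemma eFun_lt {m j : ℕ} {ε : Finset ℕ} (h : j < m) : eFun m ε j < m := by
  have hlen : j < (idx m ε).length := by rw [idx_length]; exact h
  rw [eFun, List.getD_eq_get (i := ⟨j, hlen⟩)]
  exact idx_mem.mp (List.get_mem _ _)

lemma eFun_ge {m j : ℕ} {ε : Finset ℕ} (h : m ≤ j) : eFun m ε j = j := by
  rw [eFun, List.getD_eq_default]
  rw [idx_length]; exact h

lemma eFun_inj (m : ℕ) (ε : Finset ℕ) : Function.Injective (eFun m ε) := by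
  intro a b hab
  by_cases ha : a < m <;> by_cases hb : b < m
  · have ha' : a < (idx m ε).length := by rw [idx_length]; exact ha
    have hb' : b < (idx m ε).length := by rw [idx_length]; exact hb
    rw [eFun, eFun, List.getD_eq_get (i := ⟨a, ha'⟩), List.getD_eq_get (i := ⟨b, hb'⟩)] at hab
    have := ((idx_nodup m ε).get_inj_iff).mp hab
    exact congrArg Fin.val this
  · exfalso
    rw [eFun_ge (by omega : m ≤ b)] at hab
    have := eFun_lt (ε := ε) ha
    omega
  · exfalso
    rw [eFun_ge (by omega : m ≤ a)] at hab
    have := eFun_lt (ε := ε) hb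
    omega
  · rw [eFun_ge (by omega : m ≤ a), eFun_ge (by omega : m ≤ b)] at hab
    exact hab

lemma sum_take_eq (l : List ℝ) (r : ℕ) (h : r ≤ l.length) :
    (l.take r).sum = ∑ j ∈ Finset.range r, l.getD j 0 := by
  induction r with
  | zero => simp
  | succ r ih =>
    have hr : r < l.length := by omega
    rw [Finset.sum_range_succ, ← ih (by omega), List.getD_eq_getElem _ _ hr,
      ← List.take_concat_get hr, List.concat_eq_append, List.sum_append]
    simp

lemma psum_split (f : ℕ → ℝ) {m r : ℕ} (h : m ≤ r) :
    psum f r = psum f m + ∑ j ∈ Finset.Ico m r, f j := by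
  rw [psum, psum, ← Finset.sum_range_add_sum_Ico f h]

lemma psum_comp_eFun_le (m : ℕ) (ε : Finset ℕ) (z : ℕ → ℝ) {r : ℕ} (hr : r ≤ m) :
    psum (fun j => z (eFun m ε j)) r = ((buildList m ε z).take r).sum := by
  have hlen : (buildList m ε z).length = m := buildList_length m ε z
  rw [sum_take_eq _ _ (by rw [hlen]; exact hr), psum]
  apply Finset.sum_congr rfl
  intro j hj
  rw [Finset.mem_range] at hj
  have hj' : j < (idx m ε).length := by rw [idx_length]; omega
  have hj'' : j < (buildList m ε z).length := by rw [hlen]; omega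
  have hmap : (buildList m ε z) = (idx m ε).map z := by
    rw [idx, map_buildList]
  rw [eFun, List.getD_eq_get (i := ⟨j, hj'⟩), List.getD_eq_getElem _ _ hj'']
  simp only [hmap]
  rw [List.getElem_map, List.get_eq_getElem]

lemma psum_comp_eFun_ge (m : ℕ) (ε : Finset ℕ) (z : ℕ → ℝ) {r : ℕ} (hr : m ≤ r) :
    psum (fun j => z (eFun m ε j)) r = psum z r := by
  rw [psum_split _ hr, psum_split z hr,
    psum_comp_eFun_le m ε z le_rfl, List.take_of_length_le (by rw [buildList_length]),
    buildList_sum]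
  congr 1
  apply Finset.sum_congr rfl
  intro j hj
  rw [Finset.mem_Ico] at hj
  rw [eFun_ge hj.1]

/-! ### Part 3: pointwise transfer lemmas -/

lemma sum_ind (s : Finset ℕ) (p : ℕ → Prop) [DecidablePred p] :
    ∑ i ∈ s, (if p i then (1:ℕ) else 0) = (s.filter p).card :=
  (Finset.card_filter p s).symm

/-- sg only depends on partial sums at indices ≥ m, given that it equals m. -/
lemma sg_eq_of_high {n m : ℕ} {z z' : ℕ → ℝ}
    (h : ∀ i, m ≤ i → i ≤ n → psum z' i = psum z i) (hm : sg n z = m) : sg n z' = m := by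
  rw [sg_eq_iff] at hm ⊢
  obtain ⟨h1, h2, h3⟩ := hm
  exact ⟨h1, by rw [h m le_rfl h1]; exact h2,
    fun i hi hin => by rw [h i (by omega) hin]; exact h3 i hi hin⟩

def revFun (m : ℕ) (j : ℕ) : ℕ := if j < m then m - 1 - j else j

lemma revFun_invol (m : ℕ) (j : ℕ) : revFun m (revFun m j) = j := by
  simp only [revFun]
  split_ifs <;> omega

lemma revFun_lt {m j : ℕ} (h : j < m) : revFun m j < m := by
  unfold revFun; rw [if_pos h]; omega

lemma revFun_ge {m j : ℕ} (h : m ≤ j) : revFun m j = j := by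
  unfold revFun; rw [if_neg (by omega)]

lemma psum_revFun_le (m : ℕ) (z : ℕ → ℝ) {i : ℕ} (hi : i ≤ m) :
    psum (fun j => z (revFun m j)) i = psum z m - psum z (m - i) := by
  have key : psum (fun j => z (revFun m j)) i + psum z (m - i) = psum z m := by
    have h1 : psum (fun j => z (revFun m j)) i = ∑ j ∈ Finset.Ico (m-i) m, z j := by
      rw [psum]
      apply Finset.sum_nbij' (i := fun j => m - 1 - j) (j := fun t => m - 1 - t)
      · intro a ha; rw [Finset.mem_range] at ha; rw [Finset.mem_Ico]; omega
      · intro a ha; rw [Finset.mem_Ico] at ha; rw [Finset.mem_range]; omega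
      · intro a ha; rw [Finset.mem_range] at ha; omega
      · intro a ha; rw [Finset.mem_Ico] at ha; omega
      · intro a ha
        rw [Finset.mem_range] at ha
        have : revFun m a = m - 1 - a := by unfold revFun; rw [if_pos (by omega)]
        rw [this]
    rw [h1, psum, psum, add_comm, Finset.sum_range_add_sum_Ico _ (by omega : m - i ≤ m)]
  linarith

lemma psum_revFun_ge (m : ℕ) (z : ℕ → ℝ) {i : ℕ} (hi : m ≤ i) :
    psum (fun j => z (revFun m j)) i = psum z i := by
  rw [psum_split _ hi, psum_split z hi, psum_revFun_le m z le_rfl]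
  have h0 : psum z (m - m) = 0 := by rw [Nat.sub_self, psum_zero]
  rw [h0]
  have : ∑ j ∈ Finset.Ico m i, z (revFun m j) = ∑ j ∈ Finset.Ico m i, z j := by
    apply Finset.sum_congr rfl
    intro j hj
    rw [Finset.mem_Ico] at hj
    rw [revFun_ge hj.1]
  rw [this]
  ring

/-- reversal preserves the event sg = m -/
lemma sg_revFun {n m : ℕ} {z : ℕ → ℝ} (hm : sg n z = m) :
    sg n (fun j => z (revFun m j)) = m :=
  sg_eq_of_high (fun i hi _ => psum_revFun_ge m z hi) hm

/-- Ñ⁻ of z equals N⁺ of the reversal. -/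
lemma nt_eq_np_rev {n m : ℕ} {z : ℕ → ℝ} (hm : sg n z = m) :
    nt n z = np n (fun j => z (revFun m j)) := by
  have hsg' := sg_revFun (n := n) hm
  rw [nt, np, hsg', hm]
  apply Finset.sum_nbij' (i := fun t => m - t) (j := fun i => m - i)
  · intro a ha; rw [Finset.mem_range] at ha; rw [Finset.mem_Icc]; omega
  · intro a ha; rw [Finset.mem_Icc] at ha; rw [Finset.mem_range]; omega
  · intro a ha; rw [Finset.mem_range] at ha; omega
  · intro a ha; rw [Finset.mem_Icc] at ha; omega
  · intro a ha
    rw [Finset.mem_range] at ha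
    have hle : m - a ≤ m := by omega
    rw [psum_revFun_le m z hle]
    have : m - (m - a) = a := by omega
    rw [this]
    by_cases hc : psum z a ≤ psum z m
    · rw [if_pos hc, if_pos (by linarith)]
    · rw [if_neg hc, if_neg (by push_neg at hc ⊢; linarith)]

/-- ←F of z equals →G of the reversal. -/
lemma ff_eq_gg_rev {n m : ℕ} {z : ℕ → ℝ} (hm : sg n z = m) :
    ff n z = gg n (fun j => z (revFun m j)) := by
  have hsg' := sg_revFun (n := n) hm
  rw [ff, gg, hsg', hm]
  obtain ⟨hi1, hi2, hi3⟩ := (am_eq_iff (m := m) (z := z)).mp rfl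
  symm
  rw [aM_eq_iff]
  refine ⟨by omega, ?_, ?_⟩
  · intro j hj
    rw [psum_revFun_le m z hj, psum_revFun_le m z (by omega : m - am m z ≤ m)]
    have : m - (m - am m z) = am m z := by omega
    rw [this]
    have := hi2 (m - j) (by omega)
    linarith
  · intro j hj hgt
    rw [psum_revFun_le m z hj, psum_revFun_le m z (by omega : m - am m z ≤ m)]
    have heq : m - (m - am m z) = am m z := by omega
    rw [heq]
    have := hi3 (m - j) (by omega)
    linarith

/-- the merge permutation preserves the event sg = m -/
lemma sg_eFun {n m : ℕ} {ε : Finset ℕ} {z : ℕ → ℝ} (hm : sg n z = m) :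
    sg n (fun j => z (eFun m ε j)) = m :=
  sg_eq_of_high (fun i hi _ => psum_comp_eFun_ge m ε z hi) hm

/-- →G of the merged sequence equals the pattern cardinality. -/
lemma gg_eFun {n m : ℕ} {ε : Finset ℕ} {z : ℕ → ℝ} (hp : Pat' m ε z) (hm : sg n z = m) :
    gg n (fun j => z (eFun m ε j)) = kk m ε := by
  obtain ⟨ha0, hb0, hk, hle, hlt⟩ := main_inv m ε z hp
  have hsg' := sg_eFun (n := n) (ε := ε) hm
  rw [gg, hsg', aM_eq_iff]
  have hkm := kk_le m ε
  have hpk : psum (fun j => z (eFun m ε j)) (kk m ε) = aS m ε z := by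
    rw [psum_comp_eFun_le m ε z hkm, hk]
  refine ⟨hkm, ?_, ?_⟩
  · intro j hj
    rw [hpk, psum_comp_eFun_le m ε z hj]
    rcases le_or_gt j (kk m ε) with h | h
    · exact hle j h
    · exact le_of_lt (hlt j h hj)
  · intro j hj hgt
    rw [hpk, psum_comp_eFun_le m ε z hj]
    exact hlt j hgt hj

/-- N⁺ equals the cardinality of the pattern. -/
lemma np_eq_kk {n m : ℕ} {z : ℕ → ℝ} (hm : sg n z = m) :
    np n z = kk m ((Finset.Icc 1 m).filter (fun i => 0 ≤ psum z i)) := by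
  classical
  rw [np, hm, sum_ind]
  rw [kk]
  congr 1
  apply Finset.filter_congr
  intro i hi
  simp [Finset.mem_filter, hi]

lemma Pat'_self {m : ℕ} {z : ℕ → ℝ} :
    Pat' m ((Finset.Icc 1 m).filter (fun i => 0 ≤ psum z i)) z := by
  classical
  intro i hi
  simp [Finset.mem_filter, hi]

/-! ### Part 4: the path space and measurability -/

section PathSpace

variable (n : ℕ)

def ext (x : Fin n → ℝ) : ℕ → ℝ := fun j => if h : j < n then x ⟨j, h⟩ else 0

lemma ext_apply_fin (x : Fin n → ℝ) (j : Fin n) : ext n x (j : ℕ) = x j := by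
  simp [ext]

lemma meas_ext_coord (j : ℕ) : Measurable (fun x : Fin n → ℝ => ext n x j) := by
  by_cases h : j < n
  · simp only [ext, dif_pos h]
    exact measurable_pi_apply _
  · simp only [ext, dif_neg h]
    exact measurable_const

lemma meas_psumE (i : ℕ) : Measurable (fun x : Fin n → ℝ => psum (ext n x) i) := by
  simp only [psum]
  exact Finset.measurable_sum _ (fun j _ => meas_ext_coord n j)

lemma meas_SG : Measurable (fun x : Fin n → ℝ => sg n (ext n x)) := by
  apply measurable_to_countable'
  intro m
  have hset : (fun x : Fin n → ℝ => sg n (ext n x)) ⁻¹' {m} =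
      {x : Fin n → ℝ | m ≤ n} ∩ {x | psum (ext n x) m ≤ 0} ∩
        ⋂ i ∈ Finset.Ioc m n, {x | 0 < psum (ext n x) i} := by
    ext x
    simp only [Set.mem_preimage, Set.mem_singleton_iff, Set.mem_inter_iff, Set.mem_setOf_eq,
      Set.mem_iInter, Finset.mem_Ioc, sg_eq_iff]
    constructor
    · rintro ⟨h1, h2, h3⟩
      exact ⟨⟨h1, h2⟩, fun i hi => h3 i hi.1 hi.2⟩
    · rintro ⟨⟨h1, h2⟩, h3⟩
      exact ⟨h1, h2, fun i hi1 hi2 => h3 i ⟨hi1, hi2⟩⟩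
  rw [hset]
  refine MeasurableSet.inter (MeasurableSet.inter ?_ ?_) ?_
  · by_cases h : m ≤ n
    · simp [h]
    · simp [h]
  · exact measurableSet_le (meas_psumE n m) measurable_const
  · exact MeasurableSet.biInter (Finset.Ioc m n).countable_toSet
      (fun i _ => measurableSet_lt measurable_const (meas_psumE n i))

lemma meas_indicator_sum (s : Finset ℕ) (p : ℕ → (Fin n → ℝ) → Prop)
    (hp : ∀ i, MeasurableSet {x | p i x}) [∀ i x, Decidable (p i x)] :
    Measurable (fun x : Fin n → ℝ => ∑ i ∈ s, if p i x then (1:ℕ) else 0) := by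
  apply Finset.measurable_sum
  intro i _
  exact Measurable.ite (hp i) measurable_const measurable_const

lemma meas_NP : Measurable (fun x : Fin n → ℝ => np n (ext n x)) := by
  classical
  apply measurable_to_countable'
  intro k
  have hset : (fun x : Fin n → ℝ => np n (ext n x)) ⁻¹' {k} =
      ⋃ m ∈ Finset.range (n+1), ((fun x : Fin n → ℝ => sg n (ext n x)) ⁻¹' {m} ∩
        {x | ∑ i ∈ Finset.Icc 1 m, (if 0 ≤ psum (ext n x) i then (1:ℕ) else 0) = k}) := by
    ext x
    simp only [Set.mem_preimage, Set.mem_singleton_iff, Set.mem_iUnion, Set.mem_inter_iff,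
      Set.mem_setOf_eq, Finset.mem_range]
    constructor
    · intro h
      exact ⟨sg n (ext n x), by have := sg_le (n := n) (z := ext n x); omega, rfl, by rw [← np]; exact h⟩
    · rintro ⟨m, _, hm, hs⟩
      rw [np, hm]; exact hs
  rw [hset]
  apply MeasurableSet.biUnion (Finset.range (n+1)).countable_toSet
  intro m _
  refine MeasurableSet.inter (meas_SG n (MeasurableSet.singleton m)) ?_
  exact measurable_to_countable' (fun k' => by
    exact (meas_indicator_sum n (Finset.Icc 1 m) (fun i x => 0 ≤ psum (ext n x) i)
      (fun i => measurableSet_le measurable_const (meas_psumE n i))) (MeasurableSet.singleton k')) (MeasurableSet.singleton k)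

lemma meas_NT : Measurable (fun x : Fin n → ℝ => nt n (ext n x)) := by
  classical
  apply measurable_to_countable'
  intro k
  have hset : (fun x : Fin n → ℝ => nt n (ext n x)) ⁻¹' {k} =
      ⋃ m ∈ Finset.range (n+1), ((fun x : Fin n → ℝ => sg n (ext n x)) ⁻¹' {m} ∩
        {x | ∑ i ∈ Finset.range m, (if psum (ext n x) i ≤ psum (ext n x) m then (1:ℕ) else 0) = k}) := by
    ext x
    simp only [Set.mem_preimage, Set.mem_singleton_iff, Set.mem_iUnion, Set.mem_inter_iff,
      Set.mem_setOf_eq, Finset.mem_range]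
    constructor
    · intro h
      exact ⟨sg n (ext n x), by have := sg_le (n := n) (z := ext n x); omega, rfl, by rw [← nt]; exact h⟩
    · rintro ⟨m, _, hm, hs⟩
      rw [nt, hm]; exact hs
  rw [hset]
  apply MeasurableSet.biUnion (Finset.range (n+1)).countable_toSet
  intro m _
  refine MeasurableSet.inter (meas_SG n (MeasurableSet.singleton m)) ?_
  exact measurable_to_countable' (fun k' => by
    exact (meas_indicator_sum n (Finset.range m) (fun i x => psum (ext n x) i ≤ psum (ext n x) m)
      (fun i => measurableSet_le (meas_psumE n i) (meas_psumE n m))) (MeasurableSet.singleton k')) (MeasurableSet.singleton k)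

lemma meas_GG : Measurable (fun x : Fin n → ℝ => gg n (ext n x)) := by
  apply measurable_to_countable'
  intro k
  have hset : (fun x : Fin n → ℝ => gg n (ext n x)) ⁻¹' {k} =
      ⋃ m ∈ Finset.range (n+1), ((fun x : Fin n → ℝ => sg n (ext n x)) ⁻¹' {m} ∩
        ({x : Fin n → ℝ | k ≤ m} ∩ (⋂ j ∈ Finset.Iic m, {x | psum (ext n x) j ≤ psum (ext n x) k}) ∩
          ⋂ j ∈ Finset.Ioc k m, {x | psum (ext n x) j < psum (ext n x) k})) := by
    ext x
    simp only [Set.mem_preimage, Set.mem_singleton_iff, Set.mem_iUnion, Set.mem_inter_iff,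
      Set.mem_setOf_eq, Set.mem_iInter, Finset.mem_Iic, Finset.mem_Ioc, Finset.mem_range]
    constructor
    · intro h
      refine ⟨sg n (ext n x), by have := sg_le (n := n) (z := ext n x); omega, rfl, ?_⟩
      rw [gg, aM_eq_iff] at h
      exact ⟨⟨h.1, fun j hj => h.2.1 j hj⟩, fun j hj => h.2.2 j hj.2 hj.1⟩
    · rintro ⟨m, _, hm, ⟨⟨h1, h2⟩, h3⟩⟩
      rw [gg, hm, aM_eq_iff]
      exact ⟨h1, h2, fun j hj hgt => h3 j ⟨hgt, hj⟩⟩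
  rw [hset]
  apply MeasurableSet.biUnion (Finset.range (n+1)).countable_toSet
  intro m _
  refine MeasurableSet.inter (meas_SG n (MeasurableSet.singleton m)) (MeasurableSet.inter (MeasurableSet.inter ?_ ?_) ?_)
  · by_cases h : k ≤ m
    · simp [h]
    · simp [h]
  · exact MeasurableSet.biInter (Finset.Iic m).countable_toSet
      (fun j _ => measurableSet_le (meas_psumE n j) (meas_psumE n k))
  · exact MeasurableSet.biInter (Finset.Ioc k m).countable_toSet
      (fun j _ => measurableSet_lt (meas_psumE n j) (meas_psumE n k))

lemma meas_AM : Measurable (fun x : Fin n → ℝ => am (sg n (ext n x)) (ext n x)) := by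
  apply measurable_to_countable'
  intro k
  have hset : (fun x : Fin n → ℝ => am (sg n (ext n x)) (ext n x)) ⁻¹' {k} =
      ⋃ m ∈ Finset.range (n+1), ((fun x : Fin n → ℝ => sg n (ext n x)) ⁻¹' {m} ∩
        ({x : Fin n → ℝ | k ≤ m} ∩ (⋂ j ∈ Finset.Iic m, {x | psum (ext n x) k ≤ psum (ext n x) j}) ∩
          ⋂ j ∈ Finset.range k, {x | psum (ext n x) k < psum (ext n x) j})) := by
    ext x
    simp only [Set.mem_preimage, Set.mem_singleton_iff, Set.mem_iUnion, Set.mem_inter_iff,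
      Set.mem_setOf_eq, Set.mem_iInter, Finset.mem_Iic, Finset.mem_range]
    constructor
    · intro h
      refine ⟨sg n (ext n x), by have := sg_le (n := n) (z := ext n x); omega, rfl, ?_⟩
      rw [am_eq_iff] at h
      exact ⟨⟨h.1, fun j hj => h.2.1 j hj⟩, fun j hj => h.2.2 j hj⟩
    · rintro ⟨m, _, hm, ⟨⟨h1, h2⟩, h3⟩⟩
      rw [hm, am_eq_iff]
      exact ⟨h1, h2, h3⟩
  rw [hset]
  apply MeasurableSet.biUnion (Finset.range (n+1)).countable_toSet
  intro m _
  refine MeasurableSet.inter (meas_SG n (MeasurableSet.singleton m)) (MeasurableSet.inter (MeasurableSet.inter ?_ ?_) ?_)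
  · by_cases h : k ≤ m
    · simp [h]
    · simp [h]
  · exact MeasurableSet.biInter (Finset.Iic m).countable_toSet
      (fun j _ => measurableSet_le (meas_psumE n k) (meas_psumE n j))
  · exact MeasurableSet.biInter (Finset.range k).countable_toSet
      (fun j _ => measurableSet_lt (meas_psumE n k) (meas_psumE n j))

lemma meas_FF : Measurable (fun x : Fin n → ℝ => ff n (ext n x)) := by
  simp only [ff]
  exact (meas_SG n).sub (meas_AM n)

end PathSpace

/-! ### Part 5: measure layer -/

section MeasureLayer

variable (n : ℕ) (ν : Measure ℝ) [IsProbabilityMeasure ν]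

lemma map_comp_perm (e : Fin n ≃ Fin n) :
    (Measure.pi (fun _ : Fin n => ν)).map (fun x => x ∘ e) = Measure.pi (fun _ : Fin n => ν) := by
  have hmp := measurePreserving_piCongrLeft (fun _ : Fin n => ν) e.symm
  have hfun : ⇑(MeasurableEquiv.piCongrLeft (fun _ : Fin n => ℝ) e.symm)
      = fun x : Fin n → ℝ => x ∘ e := by
    funext x
    funext j
    rw [MeasurableEquiv.coe_piCongrLeft]
    simp [Equiv.piCongrLeft_apply, eq_rec_constant]
  have := hmp.map_eq
  rwa [hfun] at this

lemma meas_comp_perm (e : Fin n ≃ Fin n) : Measurable (fun x : Fin n → ℝ => x ∘ e) :=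
  measurable_pi_lambda _ (fun j => measurable_pi_apply _)

lemma measure_preimage_perm (e : Fin n ≃ Fin n) {A : Set (Fin n → ℝ)} (hA : MeasurableSet A) :
    Measure.pi (fun _ : Fin n => ν) ((fun x => x ∘ e) ⁻¹' A) = Measure.pi (fun _ : Fin n => ν) A := by
  conv_rhs => rw [← map_comp_perm n ν e]
  rw [Measure.map_apply (meas_comp_perm n e) hA]

/-- Generic: two ℕ-valued random variables with equal fiber measures have equal laws. -/
lemma map_eq_of_fibers {α : Type*} [MeasurableSpace α] (γ : Measure α) (f g : α → ℕ)
    (hf : Measurable f) (hg : Measurable g)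
    (h : ∀ k, γ (f ⁻¹' {k}) = γ (g ⁻¹' {k})) : γ.map f = γ.map g := by
  ext s hs
  rw [Measure.map_apply hf hs, Measure.map_apply hg hs]
  have hsf : f ⁻¹' s = ⋃ k ∈ s, f ⁻¹' {k} := by ext a; simp
  have hsg : g ⁻¹' s = ⋃ k ∈ s, g ⁻¹' {k} := by ext a; simp
  have hdisjf : s.PairwiseDisjoint (fun k => f ⁻¹' {k}) := fun a _ b _ hab =>
    Set.disjoint_left.mpr (fun x hx hx' => hab (hx.symm.trans hx'))
  have hdisjg : s.PairwiseDisjoint (fun k => g ⁻¹' {k}) := fun a _ b _ hab =>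
    Set.disjoint_left.mpr (fun x hx hx' => hab (hx.symm.trans hx'))
  rw [hsf, hsg, measure_biUnion s.to_countable hdisjf (fun k _ => hf (MeasurableSet.singleton k)),
    measure_biUnion s.to_countable hdisjg (fun k _ => hg (MeasurableSet.singleton k))]
  exact tsum_congr (fun k => h k)

/-- fiber decomposition over the value of sg -/
lemma fiber_split (γ : Measure (Fin n → ℝ)) (f : (Fin n → ℝ) → ℕ)
    (hf : Measurable f) (k : ℕ) :
    γ (f ⁻¹' {k}) = ∑ m ∈ Finset.range (n+1),
      γ (f ⁻¹' {k} ∩ (fun x => sg n (ext n x)) ⁻¹' {m}) := by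
  have hun : f ⁻¹' {k} = ⋃ m ∈ Finset.range (n+1),
      (f ⁻¹' {k} ∩ (fun x => sg n (ext n x)) ⁻¹' {m}) := by
    ext x
    simp only [Set.mem_preimage, Set.mem_singleton_iff, Set.mem_iUnion, Set.mem_inter_iff,
      Finset.mem_range]
    constructor
    · intro h
      exact ⟨sg n (ext n x), by have := sg_le (n := n) (z := ext n x); omega, h, rfl⟩
    · rintro ⟨m, _, h, _⟩; exact h
  have hd : (↑(Finset.range (n+1)) : Set ℕ).PairwiseDisjoint
      (fun m => f ⁻¹' {k} ∩ (fun x => sg n (ext n x)) ⁻¹' {m}) := by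
    intro a _ b _ hab
    apply Set.disjoint_left.mpr
    rintro x ⟨-, hx⟩ ⟨-, hx'⟩
    exact hab ((Set.mem_preimage.mp hx).symm.trans (Set.mem_preimage.mp hx'))
  have hm : ∀ m ∈ Finset.range (n+1),
      MeasurableSet (f ⁻¹' {k} ∩ (fun x => sg n (ext n x)) ⁻¹' {m}) := fun m _ =>
    (hf (MeasurableSet.singleton k)).inter (meas_SG n (MeasurableSet.singleton m))
  calc γ (f ⁻¹' {k}) = γ (⋃ m ∈ Finset.range (n+1),
      (f ⁻¹' {k} ∩ (fun x => sg n (ext n x)) ⁻¹' {m})) := by rw [← hun]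
  _ = _ := measure_biUnion_finset hd hm

end MeasureLayer

/-! ### Part 6: permutations of the path space and the key measure identities -/

section Perms

lemma revFun_lt_n {n m j : ℕ} (hm : m ≤ n) (hj : j < n) : revFun m j < n := by
  unfold revFun
  split_ifs with h
  · omega
  · exact hj

noncomputable def revE (n m : ℕ) (hm : m ≤ n) : Fin n ≃ Fin n where
  toFun j := ⟨revFun m j, revFun_lt_n hm j.isLt⟩
  invFun j := ⟨revFun m j, revFun_lt_n hm j.isLt⟩
  left_inv j := Fin.ext (revFun_invol m j)
  right_inv j := Fin.ext (revFun_invol m j)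

lemma ext_comp_revE {n m : ℕ} (hm : m ≤ n) (x : Fin n → ℝ) :
    ext n (x ∘ revE n m hm) = fun j => ext n x (revFun m j) := by
  funext j
  by_cases hj : j < n
  · have h2 : revFun m j < n := revFun_lt_n hm hj
    simp only [ext, dif_pos hj, dif_pos h2]
    rfl
  · have hjm : m ≤ j := by omega
    rw [revFun_ge hjm]
    simp only [ext, dif_neg hj]

lemma eFun_lt_n {n m j : ℕ} {ε : Finset ℕ} (hm : m ≤ n) (hj : j < n) : eFun m ε j < n := by
  by_cases h : j < m
  · have := eFun_lt (ε := ε) h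
    omega
  · rw [eFun_ge (by omega)]
    exact hj

noncomputable def eE (n m : ℕ) (ε : Finset ℕ) (hm : m ≤ n) : Fin n ≃ Fin n :=
  Equiv.ofBijective (fun j => ⟨eFun m ε j, eFun_lt_n hm j.isLt⟩)
    (Finite.injective_iff_bijective.mp
      (fun a b hab => Fin.ext (eFun_inj m ε (congrArg Fin.val hab))))

lemma ext_comp_eE {n m : ℕ} {ε : Finset ℕ} (hm : m ≤ n) (x : Fin n → ℝ) :
    ext n (x ∘ eE n m ε hm) = fun j => ext n x (eFun m ε j) := by
  funext j
  by_cases hj : j < n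
  · have h2 : eFun m ε j < n := eFun_lt_n hm hj
    simp only [ext, dif_pos hj, dif_pos h2]
    rfl
  · have hjm : m ≤ j := by omega
    rw [eFun_ge hjm]
    simp only [ext, dif_neg hj]

lemma kk_eq_card {m : ℕ} {ε : Finset ℕ} (h : ε ⊆ Finset.Icc 1 m) : kk m ε = ε.card := by
  rw [kk, Finset.filter_mem_eq_inter, Finset.inter_eq_right.mpr h]

lemma pattern_unique {m : ℕ} {ε : Finset ℕ} {z : ℕ → ℝ} (hp : Pat' m ε z)
    (hsub : ε ⊆ Finset.Icc 1 m) :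
    (Finset.Icc 1 m).filter (fun i => 0 ≤ psum z i) = ε := by
  classical
  ext i
  rw [Finset.mem_filter]
  constructor
  · rintro ⟨hi, hpi⟩
    exact (hp i hi).mp hpi
  · intro hi
    exact ⟨hsub hi, (hp i (hsub hi)).mpr hi⟩

lemma comp_eFun_eq_get {m j : ℕ} (ε : Finset ℕ) (z : ℕ → ℝ) (hj : j < m) :
    z (eFun m ε j) = (buildList m ε z).get ⟨j, by rw [buildList_length]; exact hj⟩ := by
  have hj' : j < (idx m ε).length := by rw [idx_length]; exact hj
  have hmap : (buildList m ε z) = (idx m ε).map z := by rw [idx, map_buildList]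
  rw [eFun, List.getD_eq_get (i := ⟨j, hj'⟩), List.get_eq_getElem, List.get_eq_getElem]
  simp only [hmap]
  rw [List.getElem_map]

end Perms

section PerM

variable (n : ℕ) (ν : Measure ℝ) [IsProbabilityMeasure ν]

/-- measurability of the pattern event -/
lemma meas_C (m : ℕ) (ε : Finset ℕ) :
    MeasurableSet {x : Fin n → ℝ | sg n (ext n x) = m ∧ Pat' m ε (ext n x)} := by
  have : {x : Fin n → ℝ | sg n (ext n x) = m ∧ Pat' m ε (ext n x)} =
      ((fun x : Fin n → ℝ => sg n (ext n x)) ⁻¹' {m}) ∩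
        ⋂ i ∈ Finset.Icc 1 m, {x : Fin n → ℝ | 0 ≤ psum (ext n x) i ↔ i ∈ ε} := by
    ext x
    simp only [Set.mem_setOf_eq, Set.mem_inter_iff, Set.mem_preimage, Set.mem_singleton_iff,
      Set.mem_iInter, Pat']
  rw [this]
  refine (meas_SG n (MeasurableSet.singleton m)).inter
    (MeasurableSet.biInter (Finset.Icc 1 m).countable_toSet (fun i _ => ?_))
  by_cases hi : i ∈ ε
  · simp only [hi, iff_true]
    exact measurableSet_le measurable_const (meas_psumE n i)
  · simp only [hi, iff_false]
    exact (measurableSet_le measurable_const (meas_psumE n i)).compl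

/-- Reversal identity: Ñ⁻ vs N⁺. -/
lemma rev_measure_nt (m k : ℕ) (hm : m ≤ n) :
    Measure.pi (fun _ : Fin n => ν)
        ({x | nt n (ext n x) = k} ∩ {x | sg n (ext n x) = m}) =
      Measure.pi (fun _ : Fin n => ν)
        ({x | np n (ext n x) = k} ∩ {x | sg n (ext n x) = m}) := by
  have hset : (fun x : Fin n → ℝ => x ∘ revE n m hm) ⁻¹'
      ({x | np n (ext n x) = k} ∩ {x | sg n (ext n x) = m}) =
      {x | nt n (ext n x) = k} ∩ {x | sg n (ext n x) = m} := by
    ext x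
    simp only [Set.mem_preimage, Set.mem_inter_iff, Set.mem_setOf_eq]
    rw [ext_comp_revE hm x]
    have hinvol : (fun j => ext n x (revFun m (revFun m j))) = ext n x := by
      funext j; rw [revFun_invol]
    constructor
    · rintro ⟨h1, h2⟩
      have hsgx : sg n (ext n x) = m := by
        have := sg_revFun (n := n) (z := fun j => ext n x (revFun m j)) h2
        simpa [hinvol] using this
      refine ⟨?_, hsgx⟩
      rw [nt_eq_np_rev hsgx]
      exact h1
    · rintro ⟨h1, h2⟩
      refine ⟨?_, sg_revFun h2⟩
      rw [← nt_eq_np_rev h2]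
      exact h1
  rw [← hset]
  apply measure_preimage_perm
  exact ((measurable_to_countable' (fun k' => by
      exact meas_NP n (MeasurableSet.singleton k'))) (MeasurableSet.singleton k)).inter
    (meas_SG n (MeasurableSet.singleton m))

/-- Reversal identity: ←F vs →G. -/
lemma rev_measure_ff (m k : ℕ) (hm : m ≤ n) :
    Measure.pi (fun _ : Fin n => ν)
        ({x | ff n (ext n x) = k} ∩ {x | sg n (ext n x) = m}) =
      Measure.pi (fun _ : Fin n => ν)
        ({x | gg n (ext n x) = k} ∩ {x | sg n (ext n x) = m}) := by
  have hset : (fun x : Fin n → ℝ => x ∘ revE n m hm) ⁻¹'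
      ({x | gg n (ext n x) = k} ∩ {x | sg n (ext n x) = m}) =
      {x | ff n (ext n x) = k} ∩ {x | sg n (ext n x) = m} := by
    ext x
    simp only [Set.mem_preimage, Set.mem_inter_iff, Set.mem_setOf_eq]
    rw [ext_comp_revE hm x]
    have hinvol : (fun j => ext n x (revFun m (revFun m j))) = ext n x := by
      funext j; rw [revFun_invol]
    constructor
    · rintro ⟨h1, h2⟩
      have hsgx : sg n (ext n x) = m := by
        have := sg_revFun (n := n) (z := fun j => ext n x (revFun m j)) h2
        simpa [hinvol] using this
      refine ⟨?_, hsgx⟩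
      rw [ff_eq_gg_rev hsgx]
      exact h1
    · rintro ⟨h1, h2⟩
      refine ⟨?_, sg_revFun h2⟩
      rw [← ff_eq_gg_rev h2]
      exact h1
  rw [← hset]
  apply measure_preimage_perm
  exact ((measurable_to_countable' (fun k' => by
      exact meas_GG n (MeasurableSet.singleton k'))) (MeasurableSet.singleton k)).inter
    (meas_SG n (MeasurableSet.singleton m))

end PerM

/-! ### Part 7: the Sparre Andersen merge identity -/

section Merge

variable (n : ℕ) (ν : Measure ℝ) [IsProbabilityMeasure ν]

lemma merge_measure (m k : ℕ) (hm : m ≤ n) :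
    Measure.pi (fun _ : Fin n => ν) ({x | np n (ext n x) = k} ∩ {x | sg n (ext n x) = m}) =
    Measure.pi (fun _ : Fin n => ν) ({x | gg n (ext n x) = k} ∩ {x | sg n (ext n x) = m}) := by
  classical
  set γ := Measure.pi (fun _ : Fin n => ν) with hγ
  set P := (Finset.Icc 1 m).powerset.filter (fun ε => ε.card = k) with hP
  set C : Finset ℕ → Set (Fin n → ℝ) :=
    fun ε => {x | sg n (ext n x) = m ∧ Pat' m ε (ext n x)} with hC
  set D : Finset ℕ → Set (Fin n → ℝ) :=
    fun ε => (fun y => y ∘ (eE n m ε hm).symm) ⁻¹' C ε with hD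
  have hPsub : ∀ ε ∈ P, ε ⊆ Finset.Icc 1 m := fun ε hε =>
    Finset.mem_powerset.mp (Finset.mem_filter.mp hε).1
  have hPcard : ∀ ε ∈ P, ε.card = k := fun ε hε => (Finset.mem_filter.mp hε).2
  -- Identity A
  have hA : {x : Fin n → ℝ | np n (ext n x) = k} ∩ {x | sg n (ext n x) = m} = ⋃ ε ∈ P, C ε := by
    ext x
    simp only [Set.mem_inter_iff, Set.mem_setOf_eq, Set.mem_iUnion, hC]
    constructor
    · rintro ⟨hnp, hsg⟩
      refine ⟨(Finset.Icc 1 m).filter (fun i => 0 ≤ psum (ext n x) i), ?_, hsg, Pat'_self⟩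
      rw [hP, Finset.mem_filter, Finset.mem_powerset]
      refine ⟨Finset.filter_subset _ _, ?_⟩
      rw [← kk_eq_card (Finset.filter_subset _ _), ← np_eq_kk hsg]
      exact hnp
    · rintro ⟨ε, hεP, hsg, hpat⟩
      refine ⟨?_, hsg⟩
      rw [np_eq_kk hsg, pattern_unique hpat (hPsub ε hεP), kk_eq_card (hPsub ε hεP)]
      exact hPcard ε hεP
  -- Identity B
  have hB : {x : Fin n → ℝ | gg n (ext n x) = k} ∩ {x | sg n (ext n x) = m} = ⋃ ε ∈ P, D ε := by
    ext y
    simp only [Set.mem_inter_iff, Set.mem_setOf_eq, Set.mem_iUnion, hD, Set.mem_preimage, hC]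
    constructor
    · rintro ⟨hgg, hsg⟩
      obtain ⟨ε, z₀, hsub, hpat, hbl, htl⟩ :=
        exists_merge m ((List.range m).map (ext n y)) (ext n y) (by simp)
      set x : Fin n → ℝ := fun j => if h : (j : ℕ) < m then z₀ (j : ℕ) else y j with hx
      have hextx : ext n x = z₀ := by
        funext j
        by_cases hj : j < n
        · simp only [ext, dif_pos hj, hx]
          by_cases hjm : j < m
          · rw [dif_pos hjm]
          · rw [dif_neg hjm, htl j (by omega)]
            simp [ext, hj]
        · simp only [ext, dif_neg hj]
          rw [htl j (by omega)]
          simp [ext, hj]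
      have hyx : y = x ∘ eE n m ε hm := by
        funext j
        have h1 : (x ∘ eE n m ε hm) j = ext n x (eFun m ε (j : ℕ)) := by
          rw [Function.comp_apply, ← ext_apply_fin n x (eE n m ε hm j)]
          rfl
        rw [h1, hextx]
        by_cases hjm : (j : ℕ) < m
        · rw [comp_eFun_eq_get ε z₀ hjm]
          have hlen1 : (j : ℕ) < (buildList m ε z₀).length := by
            rw [buildList_length]; exact hjm
          have hlen2 : (j : ℕ) < ((List.range m).map (ext n y)).length := by
            simp [hjm]
          rw [List.get_eq_getElem, List.getElem_of_eq hbl hlen1, List.getElem_map,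
            List.getElem_range]
          exact (ext_apply_fin n y j).symm
        · rw [eFun_ge (by omega), htl (j : ℕ) (by omega)]
          exact (ext_apply_fin n y j).symm
      have hxy : y ∘ (eE n m ε hm).symm = x := by
        funext t
        rw [hyx]
        simp only [Function.comp_apply, Equiv.apply_symm_apply]
      have hyext : ext n y = fun t => z₀ (eFun m ε t) := by
        rw [hyx, ext_comp_eE hm x, hextx]
      have hsgx : sg n (ext n x) = m := by
        refine sg_eq_of_high (fun i hi _ => ?_) hsg
        rw [hextx, hyext]
        exact (psum_comp_eFun_ge m ε z₀ hi).symm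
      have hsgz : sg n z₀ = m := by rw [← hextx]; exact hsgx
      have hggy : gg n (ext n y) = kk m ε := by
        rw [hyext]
        exact gg_eFun hpat hsgz
      have hcard : ε.card = k := by
        rw [← kk_eq_card hsub, ← hggy]
        exact hgg
      refine ⟨ε, ?_, ?_⟩
      · rw [hP, Finset.mem_filter, Finset.mem_powerset]
        exact ⟨hsub, hcard⟩
      · rw [hxy]
        exact ⟨hsgx, by rw [hextx]; exact hpat⟩
    · rintro ⟨ε, hεP, hsgx, hpat⟩
      set x := y ∘ (eE n m ε hm).symm with hxdef
      have hyx : y = x ∘ eE n m ε hm := by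
        funext t
        simp only [hxdef, Function.comp_apply, Equiv.symm_apply_apply]
      have hyext : ext n y = fun t => ext n x (eFun m ε t) := by
        rw [hyx, ext_comp_eE hm x]
      constructor
      · rw [hyext, gg_eFun hpat hsgx, kk_eq_card (hPsub ε hεP)]
        exact hPcard ε hεP
      · rw [hyext]
        exact sg_eFun hsgx
  -- Disjointness of the C's
  have hdC : (↑P : Set (Finset ℕ)).PairwiseDisjoint C := by
    intro ε hε ε' hε' hne
    apply Set.disjoint_left.mpr
    rintro x ⟨hsg, hpat⟩ ⟨hsg', hpat'⟩
    exact hne (by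
      rw [← pattern_unique hpat (hPsub ε hε), ← pattern_unique hpat' (hPsub ε' hε')])
  -- Disjointness of the D's
  have hdD : (↑P : Set (Finset ℕ)).PairwiseDisjoint D := by
    intro ε hε ε' hε' hne
    apply Set.disjoint_left.mpr
    rintro y hy hy'
    simp only [hD, Set.mem_preimage, hC, Set.mem_setOf_eq] at hy hy'
    obtain ⟨hsg1, hpat1⟩ := hy
    obtain ⟨hsg2, hpat2⟩ := hy'
    have key : ∀ (εa : Finset ℕ) (j : ℕ) (hj : j < m),
        (buildList m εa (ext n (y ∘ (eE n m εa hm).symm))).get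
          ⟨j, by rw [buildList_length]; exact hj⟩ = ext n y j := by
      intro εa j hj
      have hya : y = (y ∘ (eE n m εa hm).symm) ∘ eE n m εa hm := by
        funext t
        simp only [Function.comp_apply, Equiv.symm_apply_apply]
      rw [← comp_eFun_eq_get εa (ext n (y ∘ (eE n m εa hm).symm)) hj]
      conv_rhs => rw [hya, ext_comp_eE hm]
    have hbe : buildList m ε (ext n (y ∘ (eE n m ε hm).symm)) =
        buildList m ε' (ext n (y ∘ (eE n m ε' hm).symm)) := by
      apply List.ext_get (by rw [buildList_length, buildList_length])
      intro j h1 h2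
      have hj : j < m := by rwa [buildList_length] at h1
      rw [key ε j hj, key ε' j hj]
    obtain ⟨-, hfil⟩ := uniq_merge m ε ε' _ _ hpat1 hpat2 hbe
    apply hne
    rw [← Finset.inter_eq_right.mpr (hPsub ε hε), ← Finset.filter_mem_eq_inter, hfil,
      Finset.filter_mem_eq_inter, Finset.inter_eq_right.mpr (hPsub ε' hε')]
  have hγD : ∀ ε ∈ P, γ (D ε) = γ (C ε) := fun ε hε =>
    measure_preimage_perm n ν (eE n m ε hm).symm (meas_C n m ε)
  rw [hA, hB, measure_biUnion_finset hdC (fun ε _ => meas_C n m ε),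
      measure_biUnion_finset hdD (fun ε _ => (meas_comp_perm n _) (meas_C n m ε))]
  exact (Finset.sum_congr rfl (fun ε hε => (hγD ε hε).symm))

end Merge

/-! ### Part 8: the laws on path space coincide -/

section Elevel

variable (n : ℕ) (ν : Measure ℝ) [IsProbabilityMeasure ν]

lemma preim_inter (f : (Fin n → ℝ) → ℕ) (k m : ℕ) :
    f ⁻¹' {k} ∩ (fun x : Fin n → ℝ => sg n (ext n x)) ⁻¹' {m} =
      {x | f x = k} ∩ {x | sg n (ext n x) = m} := by
  ext x
  simp [Set.mem_preimage]

lemma final_NT : (Measure.pi (fun _ : Fin n => ν)).map (fun x => np n (ext n x)) =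
    (Measure.pi (fun _ : Fin n => ν)).map (fun x => nt n (ext n x)) := by
  apply map_eq_of_fibers _ _ _ (meas_NP n) (meas_NT n)
  intro k
  rw [fiber_split n _ _ (meas_NP n) k, fiber_split n _ _ (meas_NT n) k]
  apply Finset.sum_congr rfl
  intro m hmr
  have hm : m ≤ n := by rw [Finset.mem_range] at hmr; omega
  rw [preim_inter, preim_inter]
  exact (rev_measure_nt n ν m k hm).symm

lemma final_GG : (Measure.pi (fun _ : Fin n => ν)).map (fun x => np n (ext n x)) =
    (Measure.pi (fun _ : Fin n => ν)).map (fun x => gg n (ext n x)) := by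
  apply map_eq_of_fibers _ _ _ (meas_NP n) (meas_GG n)
  intro k
  rw [fiber_split n _ _ (meas_NP n) k, fiber_split n _ _ (meas_GG n) k]
  apply Finset.sum_congr rfl
  intro m hmr
  have hm : m ≤ n := by rw [Finset.mem_range] at hmr; omega
  rw [preim_inter, preim_inter]
  exact merge_measure n ν m k hm

lemma final_FF : (Measure.pi (fun _ : Fin n => ν)).map (fun x => np n (ext n x)) =
    (Measure.pi (fun _ : Fin n => ν)).map (fun x => ff n (ext n x)) := by
  apply map_eq_of_fibers _ _ _ (meas_NP n) (meas_FF n)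
  intro k
  rw [fiber_split n _ _ (meas_NP n) k, fiber_split n _ _ (meas_FF n) k]
  apply Finset.sum_congr rfl
  intro m hmr
  have hm : m ≤ n := by rw [Finset.mem_range] at hmr; omega
  rw [preim_inter, preim_inter, merge_measure n ν m k hm]
  exact (rev_measure_ff n ν m k hm).symm

end Elevel

end SA10

/-- The four random variables N⁺, Ñ⁻, ←F and →G all have the same distribution. -/
theorem stmt_10 {Ω : Type*} [MeasurableSpace Ω] (μ : Measure Ω) [IsProbabilityMeasure μ]
    (n : ℕ) (ζ : ℕ → Ω → ℝ)
    (hmeas : ∀ i, Measurable (ζ i))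
    (hindep : ProbabilityTheory.iIndepFun ζ μ)
    (hident : ∀ i, μ.map (ζ i) = μ.map (ζ 0))
    (S : ℕ → Ω → ℝ) (hS : ∀ i ω, S i ω = ∑ j ∈ Finset.range i, ζ j ω)
    (σ : Ω → ℕ) (hσ : ∀ ω, σ ω = sSup {i | i ≤ n ∧ S i ω ≤ 0})
    (Nplus Ntildeminus F' G : Ω → ℕ)
    (hNplus : ∀ ω, Nplus ω = ∑ i ∈ Finset.Icc 1 (σ ω), if 0 ≤ S i ω then 1 else 0)
    (hNtildeminus : ∀ ω, Ntildeminus ω =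
      ∑ i ∈ Finset.range (σ ω), if S i ω ≤ S (σ ω) ω then 1 else 0)
    (hF' : ∀ ω, F' ω =
      σ ω - sInf {i | i ≤ σ ω ∧ S i ω = sInf ((fun j => S j ω) '' Set.Iic (σ ω))})
    (hG : ∀ ω, G ω = sSup {i | i ≤ σ ω ∧ S i ω = sSup ((fun j => S j ω) '' Set.Iic (σ ω))}) :
    μ.map Nplus = μ.map Ntildeminus ∧ μ.map Nplus = μ.map F' ∧ μ.map Nplus = μ.map G := by
  classical
  set ν := μ.map (ζ 0) with hν
  haveI : IsProbabilityMeasure ν := Measure.isProbabilityMeasure_map (hmeas 0).aemeasurable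
  set V : Ω → (Fin n → ℝ) := fun ω i => ζ i ω with hV
  have hmeasV : Measurable V := measurable_pi_lambda _ (fun i => hmeas i)
  -- the law of V is the product measure
  have hlaw : μ.map V = Measure.pi (fun _ : Fin n => ν) := by
    symm
    apply Measure.pi_eq
    intro s hs
    rw [Measure.map_apply hmeasV (MeasurableSet.univ_pi hs)]
    set s' : ℕ → Set ℝ := fun j => if h : j < n then s ⟨j, h⟩ else Set.univ with hs'
    have hs'm : ∀ j, MeasurableSet (s' j) := by
      intro j
      rw [hs']
      by_cases h : j < n
      · simp only [dif_pos h]; exact hs _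
      · simp only [dif_neg h]; exact MeasurableSet.univ
    have hpre : V ⁻¹' (Set.pi Set.univ s) = ⋂ j ∈ Finset.range n, ζ j ⁻¹' s' j := by
      ext ω
      simp only [Set.mem_preimage, Set.mem_pi, Set.mem_univ, forall_true_left, Set.mem_iInter,
        Finset.mem_range]
      constructor
      · intro h j hj
        rw [hs']
        simp only [dif_pos hj]
        exact h ⟨j, hj⟩
      · intro h i
        have := h i i.isLt
        rw [hs'] at this
        simpa only [dif_pos i.isLt, Fin.eta] using this
    have hfact := hindep.meas_biInter (S := Finset.range n)
      (s := fun j => ζ j ⁻¹' s' j) (fun j _ => ⟨s' j, hs'm j, rfl⟩)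
    rw [hpre, hfact]
    have hterm : ∀ j ∈ Finset.range n, μ (ζ j ⁻¹' s' j) = ν (s' j) := by
      intro j _
      rw [← hident j, Measure.map_apply (hmeas j) (hs'm j)]
    rw [Finset.prod_congr rfl hterm, ← Fin.prod_univ_eq_prod_range (fun j => ν (s' j)) n]
    apply Finset.prod_congr rfl
    intro i _
    congr 1
    rw [hs']
    simp only [dif_pos i.isLt, Fin.eta]
  -- pointwise identification of the walk
  have hSpsum : ∀ ω i, i ≤ n → S i ω = SA10.psum (SA10.ext n (V ω)) i := by
    intro ω i hi
    rw [hS, SA10.psum]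
    apply Finset.sum_congr rfl
    intro j hj
    rw [Finset.mem_range] at hj
    have hjn : j < n := by omega
    simp [SA10.ext, hjn, hV]
  have hσ' : ∀ ω, σ ω = SA10.sg n (SA10.ext n (V ω)) := by
    intro ω
    rw [hσ, SA10.sg]
    congr 1
    ext i
    simp only [Set.mem_setOf_eq]
    constructor
    · rintro ⟨h1, h2⟩
      exact ⟨h1, by rw [← hSpsum ω i h1]; exact h2⟩
    · rintro ⟨h1, h2⟩
      exact ⟨h1, by rw [hSpsum ω i h1]; exact h2⟩
  have hσle : ∀ ω, σ ω ≤ n := by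
    intro ω
    rw [hσ' ω]
    exact SA10.sg_le
  have hNp : Nplus = fun ω => SA10.np n (SA10.ext n (V ω)) := by
    funext ω
    rw [hNplus, SA10.np, ← hσ' ω]
    apply Finset.sum_congr rfl
    intro i hi
    rw [Finset.mem_Icc] at hi
    rw [hSpsum ω i (by have := hσle ω; omega)]
  have hNt : Ntildeminus = fun ω => SA10.nt n (SA10.ext n (V ω)) := by
    funext ω
    rw [hNtildeminus, SA10.nt, ← hσ' ω]
    apply Finset.sum_congr rfl
    intro i hi
    rw [Finset.mem_range] at hi
    rw [hSpsum ω i (by have := hσle ω; omega), hSpsum ω (σ ω) (hσle ω)]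
  have himg : ∀ ω, ((fun j => S j ω) '' Set.Iic (σ ω)) =
      ((fun j => SA10.psum (SA10.ext n (V ω)) j) '' Set.Iic (σ ω)) := by
    intro ω
    apply Set.image_congr
    intro j hj
    rw [Set.mem_Iic] at hj
    exact hSpsum ω j (by have := hσle ω; omega)
  have hargset : ∀ ω, {i | i ≤ σ ω ∧ S i ω = sInf ((fun j => S j ω) '' Set.Iic (σ ω))} =
      {i | i ≤ σ ω ∧ SA10.psum (SA10.ext n (V ω)) i =
        sInf ((fun j => SA10.psum (SA10.ext n (V ω)) j) '' Set.Iic (σ ω))} := by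
    intro ω
    ext i
    simp only [Set.mem_setOf_eq, himg ω]
    constructor
    · rintro ⟨h1, h2⟩
      exact ⟨h1, by rw [← hSpsum ω i (by have := hσle ω; omega)]; exact h2⟩
    · rintro ⟨h1, h2⟩
      exact ⟨h1, by rw [hSpsum ω i (by have := hσle ω; omega)]; exact h2⟩
  have hargsetM : ∀ ω, {i | i ≤ σ ω ∧ S i ω = sSup ((fun j => S j ω) '' Set.Iic (σ ω))} =
      {i | i ≤ σ ω ∧ SA10.psum (SA10.ext n (V ω)) i =
        sSup ((fun j => SA10.psum (SA10.ext n (V ω)) j) '' Set.Iic (σ ω))} := by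
    intro ω
    ext i
    simp only [Set.mem_setOf_eq, himg ω]
    constructor
    · rintro ⟨h1, h2⟩
      exact ⟨h1, by rw [← hSpsum ω i (by have := hσle ω; omega)]; exact h2⟩
    · rintro ⟨h1, h2⟩
      exact ⟨h1, by rw [hSpsum ω i (by have := hσle ω; omega)]; exact h2⟩
  have hF : F' = fun ω => SA10.ff n (SA10.ext n (V ω)) := by
    funext ω
    rw [hF', SA10.ff, SA10.am, ← hσ' ω, hargset ω]
  have hG' : G = fun ω => SA10.gg n (SA10.ext n (V ω)) := by
    funext ω
    rw [hG, SA10.gg, SA10.aM, ← hσ' ω, hargsetM ω]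
  have key : ∀ (f : (Fin n → ℝ) → ℕ), Measurable f →
      μ.map (fun ω => f (V ω)) = (Measure.pi (fun _ : Fin n => ν)).map f := by
    intro f hf
    rw [← hlaw, Measure.map_map hf hmeasV]
    rfl
  rw [hNp, hNt, hF, hG']
  rw [key _ (SA10.meas_NP n), key _ (SA10.meas_NT n), key _ (SA10.meas_FF n),
    key _ (SA10.meas_GG n)]
  exact ⟨SA10.final_NT n ν, SA10.final_FF n ν, SA10.final_GG n ν⟩
end

section
/- Let ζ₁,…,ζₙ be i.i.d. real random variables, S_i the random walk, σ = max{i ≤ n : S_i ≤ 0}, and let B be a Borel set with P(S_n ∈ B) > 0. Then conditionally on {S_n ∈ B}, the time-reversed process Ŝ_i = S_σ − S_{σ−i}, 0 ≤ i ≤ σ, has the same law as (S_i)_{0 ≤ i ≤ σ}. -/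
open MeasureTheory ProbabilityTheory Finset

namespace Stmt12Aux


noncomputable def U (n i : ℕ) (x : Fin n → ℝ) : ℝ :=
  ∑ j : Fin n, if (j : ℕ) < i then x j else 0

noncomputable def tau (n : ℕ) (x : Fin n → ℝ) : ℕ :=
  sSup {i | i ≤ n ∧ U n i x ≤ 0}

lemma U_zero (n : ℕ) (x : Fin n → ℝ) : U n 0 x = 0 := by
  simp [U]

lemma U_sub {n a b : ℕ} (hba : b ≤ a) (x : Fin n → ℝ) :
    U n a x - U n b x = ∑ j : Fin n, if (b ≤ (j : ℕ) ∧ (j : ℕ) < a) then x j else 0 := by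
  rw [U, U, ← Finset.sum_sub_distrib]
  refine Finset.sum_congr rfl fun j _ => ?_
  split_ifs <;> (try (exfalso; omega)) <;> ring

lemma measurable_U_comp {n : ℕ} {g : (Fin n → ℝ) → ℕ} (hg : Measurable g) :
    Measurable (fun x => U n (g x) x) := by
  unfold U
  refine Finset.measurable_sum _ fun j _ => ?_
  refine Measurable.ite ?_ (measurable_pi_apply j) measurable_const
  exact hg (MeasurableSet.of_discrete (s := {i | (j : ℕ) < i}))

lemma measurable_U {n : ℕ} (i : ℕ) : Measurable (U n i) :=
  measurable_U_comp measurable_const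

lemma tau_mem (n : ℕ) (x : Fin n → ℝ) :
    tau n x ≤ n ∧ U n (tau n x) x ≤ 0 := by
  have h : tau n x ∈ {i | i ≤ n ∧ U n i x ≤ 0} :=
    Nat.sSup_mem ⟨0, by simp [U_zero]⟩ ⟨n, fun i hi => hi.1⟩
  exact h

lemma tau_eq_iff {n k : ℕ} {x : Fin n → ℝ} :
    tau n x = k ↔ k ≤ n ∧ U n k x ≤ 0 ∧ ∀ i, k < i → i ≤ n → 0 < U n i x := by
  constructor
  · rintro rfl
    obtain ⟨h1, h2⟩ := tau_mem n x
    refine ⟨h1, h2, fun i hlt hle => ?_⟩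
    by_contra h
    push_neg at h
    have : i ≤ tau n x := le_csSup ⟨n, fun j hj => hj.1⟩ ⟨hle, h⟩
    omega
  · rintro ⟨hk, hU, hpos⟩
    refine le_antisymm ?_ (le_csSup ⟨n, fun j hj => hj.1⟩ ⟨hk, hU⟩)
    refine csSup_le ⟨0, by simp [U_zero]⟩ fun i hi => ?_
    by_contra h
    push_neg at h
    exact absurd hi.2 (not_le.2 (hpos i h hi.1))

lemma measurable_tau (n : ℕ) : Measurable (tau n) := by
  refine measurable_to_countable' fun k => ?_
  have : tau n ⁻¹' {k} =
      {x | k ≤ n ∧ U n k x ≤ 0 ∧ ∀ i, k < i → i ≤ n → 0 < U n i x} := by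
    ext x; simp [tau_eq_iff]
  rw [this]
  by_cases hk : k ≤ n
  · have : {x : Fin n → ℝ | k ≤ n ∧ U n k x ≤ 0 ∧ ∀ i, k < i → i ≤ n → 0 < U n i x}
        = {x | U n k x ≤ 0} ∩ ⋂ (i : ℕ) (_ : k < i) (_ : i ≤ n), {x | 0 < U n i x} := by
      ext x; simp only [Set.mem_setOf_eq, Set.mem_inter_iff, Set.mem_iInter]; tauto
    rw [this]
    refine (measurableSet_le (measurable_U k) measurable_const).inter ?_
    exact MeasurableSet.iInter fun i => MeasurableSet.iInter fun _ =>
      MeasurableSet.iInter fun _ => measurableSet_lt measurable_const (measurable_U i)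
  · have : {x : Fin n → ℝ | k ≤ n ∧ U n k x ≤ 0 ∧ ∀ i, k < i → i ≤ n → 0 < U n i x} = ∅ := by
      ext x; simp [hk]
    rw [this]; exact MeasurableSet.empty



def revFun (n k : ℕ) (hk : k ≤ n) : Fin n → Fin n :=
  fun j => if h : (j : ℕ) < k then ⟨k - 1 - (j : ℕ), by omega⟩ else j

lemma revFun_involutive (n k : ℕ) (hk : k ≤ n) : Function.Involutive (revFun n k hk) := by
  intro j
  unfold revFun
  split_ifs with h1 h2 <;> (try (exfalso; simp_all; omega)) <;> (try rfl)
  · ext; simp; omega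


lemma U_comp_rev {n k : ℕ} (hk : k ≤ n) (x : Fin n → ℝ) (m : ℕ) :
    U n m (x ∘ revFun n k hk) = if m ≤ k then U n k x - U n (k - m) x else U n m x := by
  have key : U n m (x ∘ revFun n k hk)
      = ∑ j : Fin n, if ((revFun n k hk j : ℕ) < m) then x j else 0 := by
    rw [U]
    rw [← Function.Bijective.sum_comp ((revFun_involutive n k hk).bijective)
      (fun j => if ((revFun n k hk j : ℕ) < m) then x j else 0)]
    refine Finset.sum_congr rfl fun j _ => ?_
    rw [revFun_involutive n k hk j]
    rfl
  rw [key]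
  split_ifs with hm
  · rw [U_sub (by omega)]
    refine Finset.sum_congr rfl fun j _ => ?_
    have hj := j.isLt
    congr 1
    unfold revFun
    split_ifs with h <;> simp_all <;> omega
  · rw [U]
    refine Finset.sum_congr rfl fun j _ => ?_
    have hj := j.isLt
    congr 1
    unfold revFun
    split_ifs with h <;> simp_all <;> omega

lemma tau_comp_rev {n k : ℕ} (hk : k ≤ n) {x : Fin n → ℝ} (h : tau n x = k) :
    tau n (x ∘ revFun n k hk) = k := by
  rw [tau_eq_iff] at h ⊢
  obtain ⟨h1, h2, h3⟩ := h
  refine ⟨h1, ?_, fun i hlt hle => ?_⟩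
  · rw [U_comp_rev hk, if_pos le_rfl, Nat.sub_self, U_zero]; linarith
  · rw [U_comp_rev hk, if_neg (by omega)]; exact h3 i hlt hle

noncomputable def Gfwd (n : ℕ) : (Fin n → ℝ) → ℕ × (ℕ → ℝ) :=
  fun x => (tau n x, fun i => U n (min i (tau n x)) x)

noncomputable def Grev (n : ℕ) : (Fin n → ℝ) → ℕ × (ℕ → ℝ) :=
  fun x => (tau n x, fun i => U n (tau n x) x - U n (tau n x - min i (tau n x)) x)

lemma measurable_Gfwd (n : ℕ) : Measurable (Gfwd n) := by
  refine Measurable.prod (measurable_tau n) (measurable_pi_lambda _ fun i => ?_)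
  exact measurable_U_comp ((measurable_from_top (f := fun c => min i c)).comp (measurable_tau n))

lemma measurable_Grev (n : ℕ) : Measurable (Grev n) := by
  refine Measurable.prod (measurable_tau n) (measurable_pi_lambda _ fun i => ?_)
  exact Measurable.sub (measurable_U_comp (measurable_tau n))
    (measurable_U_comp ((measurable_from_top (f := fun c => c - min i c)).comp (measurable_tau n)))

def Ak (n k : ℕ) (B : Set ℝ) : Set (Fin n → ℝ) := {x | tau n x = k ∧ U n n x ∈ B}

lemma measurable_Ak {n k : ℕ} {B : Set ℝ} (hB : MeasurableSet B) :
    MeasurableSet (Ak n k B) :=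
  ((measurable_tau n (MeasurableSet.of_discrete (s := {k}))).inter (measurable_U n hB))

lemma U_n_comp_rev {n k : ℕ} (hk : k ≤ n) (x : Fin n → ℝ) :
    U n n (x ∘ revFun n k hk) = U n n x := by
  rw [U_comp_rev hk]
  split_ifs with h
  · have : k = n := le_antisymm hk h
    subst this; rw [Nat.sub_self, U_zero]; ring
  · rfl

lemma preimage_Ak {n k : ℕ} (hk : k ≤ n) (B : Set ℝ) :
    (fun x => x ∘ revFun n k hk) ⁻¹' (Ak n k B) = Ak n k B := by
  ext x
  simp only [Set.mem_preimage, Ak, Set.mem_setOf_eq, U_n_comp_rev hk]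
  constructor
  · rintro ⟨h1, h2⟩
    refine ⟨?_, h2⟩
    have := tau_comp_rev hk h1
    rwa [Function.comp_assoc, (revFun_involutive n k hk).comp_self, Function.comp_id] at this
  · rintro ⟨h1, h2⟩
    exact ⟨tau_comp_rev hk h1, h2⟩

lemma Gfwd_comp_rev {n k : ℕ} (hk : k ≤ n) {x : Fin n → ℝ} (hx : x ∈ Ak n k B) :
    Gfwd n (x ∘ revFun n k hk) = Grev n x := by
  obtain ⟨h1, -⟩ := hx
  have h2 : tau n (x ∘ revFun n k hk) = k := tau_comp_rev hk h1
  unfold Gfwd Grev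
  rw [h1, h2]
  refine Prod.ext rfl ?_
  funext i
  simp only
  rw [U_comp_rev hk, if_pos (min_le_right i k)]

lemma map_rev_eq {n k : ℕ} (hk : k ≤ n) (m : Measure ℝ) [IsProbabilityMeasure m] :
    (Measure.pi fun _ : Fin n => m).map (fun x => x ∘ revFun n k hk)
      = Measure.pi fun _ : Fin n => m := by
  have hmeasR : Measurable (fun x : Fin n → ℝ => x ∘ revFun n k hk) :=
    measurable_pi_lambda _ fun j => measurable_pi_apply _
  refine (Measure.pi_eq (μ := fun _ : Fin n => m) fun s hs => ?_).symm
  rw [Measure.map_apply hmeasR (MeasurableSet.univ_pi hs)]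
  have hpre : (fun x : Fin n → ℝ => x ∘ revFun n k hk) ⁻¹' (Set.pi Set.univ s)
      = Set.pi Set.univ (fun j => s (revFun n k hk j)) := by
    ext x
    simp only [Set.mem_preimage, Set.mem_pi, Set.mem_univ, forall_true_left, Function.comp]
    constructor
    · intro h j
      have := h (revFun n k hk j)
      rwa [revFun_involutive n k hk j] at this
    · intro h j
      have := h (revFun n k hk j)
      rwa [revFun_involutive n k hk j] at this
  rw [hpre, Measure.pi_pi]
  exact Function.Bijective.prod_comp (revFun_involutive n k hk).bijective (fun j => m (s j))


lemma restrict_map_eq {n k : ℕ} (hk : k ≤ n) (m : Measure ℝ) [IsProbabilityMeasure m]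
    {B : Set ℝ} (hB : MeasurableSet B) :
    ((Measure.pi fun _ : Fin n => m).restrict (Ak n k B)).map (Grev n)
      = ((Measure.pi fun _ : Fin n => m).restrict (Ak n k B)).map (Gfwd n) := by
  set P := Measure.pi fun _ : Fin n => m with hP
  set R := fun x : Fin n → ℝ => x ∘ revFun n k hk with hR
  have hRmeas : Measurable R := measurable_pi_lambda _ fun j => measurable_pi_apply _
  have hAk : MeasurableSet (Ak n k B) := measurable_Ak hB
  calc (P.restrict (Ak n k B)).map (Grev n)
      = (P.restrict (Ak n k B)).map (Gfwd n ∘ R) := by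
        refine Measure.map_congr ?_
        refine (ae_restrict_iff' hAk).2 (Filter.Eventually.of_forall fun x hx => ?_)
        exact (Gfwd_comp_rev hk hx).symm
    _ = ((P.restrict (Ak n k B)).map R).map (Gfwd n) :=
        (Measure.map_map (measurable_Gfwd n) hRmeas).symm
    _ = ((P.map R).restrict (Ak n k B)).map (Gfwd n) := by
        rw [Measure.restrict_map hRmeas hAk, preimage_Ak hk]
    _ = (P.restrict (Ak n k B)).map (Gfwd n) := by
        rw [hR, hP, map_rev_eq hk m]

lemma prod_main (n : ℕ) (m : Measure ℝ) [IsProbabilityMeasure m] {B : Set ℝ}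
    (hB : MeasurableSet B) :
    ((Measure.pi fun _ : Fin n => m).restrict {x | U n n x ∈ B}).map (Grev n)
      = ((Measure.pi fun _ : Fin n => m).restrict {x | U n n x ∈ B}).map (Gfwd n) := by
  set P := Measure.pi fun _ : Fin n => m with hP
  have hC : MeasurableSet {x : Fin n → ℝ | U n n x ∈ B} := measurable_U n hB
  refine Measure.ext fun A hA => ?_
  rw [Measure.map_apply (measurable_Grev n) hA, Measure.map_apply (measurable_Gfwd n) hA,
    Measure.restrict_apply (measurable_Grev n hA), Measure.restrict_apply (measurable_Gfwd n hA)]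
  have hdecomp : ∀ T : Set (Fin n → ℝ),
      T ∩ {x | U n n x ∈ B} = ⋃ k ∈ Finset.range (n + 1), T ∩ Ak n k B := by
    intro T
    ext x
    simp only [Set.mem_inter_iff, Set.mem_setOf_eq, Set.mem_iUnion, Finset.mem_range, Ak]
    constructor
    · rintro ⟨hT, hBx⟩
      exact ⟨tau n x, by have := (tau_mem n x).1; omega, hT, rfl, hBx⟩
    · rintro ⟨k, -, hT, -, hBx⟩
      exact ⟨hT, hBx⟩
  rw [hdecomp, hdecomp]
  have hmeasAk : ∀ k, MeasurableSet (Ak n k B) := fun k => measurable_Ak hB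
  have hdisj : ∀ T : Set (Fin n → ℝ), Set.PairwiseDisjoint ↑(Finset.range (n + 1))
      (fun k => T ∩ Ak n k B) := by
    intro T k _ l _ hkl
    refine Set.disjoint_left.2 fun x hx hx' => hkl ?_
    have h1 : tau n x = k := hx.2.1
    have h2 : tau n x = l := hx'.2.1
    omega
  rw [measure_biUnion_finset (hdisj _) (fun k _ => (measurable_Grev n hA).inter (hmeasAk k)),
    measure_biUnion_finset (hdisj _) (fun k _ => (measurable_Gfwd n hA).inter (hmeasAk k))]
  refine Finset.sum_congr rfl fun k hkmem => ?_
  have hk : k ≤ n := by have := Finset.mem_range.1 hkmem; omega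
  have h1 : P (Grev n ⁻¹' A ∩ Ak n k B) = (P.restrict (Ak n k B)).map (Grev n) A := by
    rw [Measure.map_apply (measurable_Grev n) hA, Measure.restrict_apply (measurable_Grev n hA)]
  have h2 : P (Gfwd n ⁻¹' A ∩ Ak n k B) = (P.restrict (Ak n k B)).map (Gfwd n) A := by
    rw [Measure.map_apply (measurable_Gfwd n) hA, Measure.restrict_apply (measurable_Gfwd n hA)]
  rw [h1, h2, restrict_map_eq hk m hB]


end Stmt12Aux


open Stmt12Aux in
/-- Conditionally on {S_n ∈ B}, the time-reversed stopped walk Ŝ has the same law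
as the stopped walk S (paths encoded together with σ, frozen after σ). -/
theorem stmt_12 {Ω : Type*} [MeasurableSpace Ω] (μ : Measure Ω) [IsProbabilityMeasure μ]
    (n : ℕ) (ζ : ℕ → Ω → ℝ)
    (hmeas : ∀ i, Measurable (ζ i))
    (hindep : ProbabilityTheory.iIndepFun ζ μ)
    (hident : ∀ i, μ.map (ζ i) = μ.map (ζ 0))
    (S : ℕ → Ω → ℝ) (hS : ∀ i ω, S i ω = ∑ j ∈ Finset.range i, ζ j ω)
    (σ : Ω → ℕ) (hσ : ∀ ω, σ ω = sSup {i | i ≤ n ∧ S i ω ≤ 0})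
    (B : Set ℝ) (hB : MeasurableSet B) (hpos : 0 < μ {ω | S n ω ∈ B}) :
    (μ[|{ω | S n ω ∈ B}]).map
        (fun ω => ((σ ω, fun i : ℕ => S (σ ω) ω - S (σ ω - min i (σ ω)) ω) : ℕ × (ℕ → ℝ)))
      = (μ[|{ω | S n ω ∈ B}]).map
        (fun ω => ((σ ω, fun i : ℕ => S (min i (σ ω)) ω) : ℕ × (ℕ → ℝ))) := by
  classical
  set m : Measure ℝ := μ.map (ζ 0) with hm
  haveI : IsProbabilityMeasure m := Measure.isProbabilityMeasure_map (hmeas 0).aemeasurable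
  set V : Ω → (Fin n → ℝ) := fun ω j => ζ (j : ℕ) ω with hV
  have hVmeas : Measurable V := measurable_pi_lambda _ fun j => hmeas j
  set P : Measure (Fin n → ℝ) := Measure.pi fun _ : Fin n => m with hP
  -- the law of V is the product measure
  have hmap : μ.map V = P := by
    refine (Measure.pi_eq (μ := fun _ : Fin n => m) fun s hs => ?_).symm
    rw [Measure.map_apply hVmeas (MeasurableSet.univ_pi hs)]
    set sets : ℕ → Set ℝ := fun j => if h : j < n then s ⟨j, h⟩ else Set.univ with hsets
    have hsetsm : ∀ j, j ∈ Finset.range n → MeasurableSet (sets j) := by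
      intro j hj
      have hj' : j < n := Finset.mem_range.1 hj
      simp only [hsets, dif_pos hj']
      exact hs _
    have hpre : V ⁻¹' Set.pi Set.univ s = ⋂ j ∈ Finset.range n, ζ j ⁻¹' sets j := by
      ext ω
      simp only [Set.mem_preimage, Set.mem_pi, Set.mem_univ, forall_true_left,
        Set.mem_iInter, Finset.mem_range]
      constructor
      · intro h j hj
        simp only [hsets, dif_pos hj]
        exact h ⟨j, hj⟩
      · intro h j
        have := h (j : ℕ) j.isLt
        simpa only [hsets, dif_pos j.isLt] using this
    rw [hpre, hindep.measure_inter_preimage_eq_mul (Finset.range n) hsetsm]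
    rw [← Fin.prod_univ_eq_prod_range (fun j => μ (ζ j ⁻¹' sets j)) n]
    refine Finset.prod_congr rfl fun i _ => ?_
    have h1 : sets (i : ℕ) = s i := by simp only [hsets, dif_pos i.isLt]
    rw [h1, ← Measure.map_apply (hmeas i) (hs i), hident i]
  -- transfer of S, σ
  have hSU : ∀ i, i ≤ n → ∀ ω, S i ω = U n i (V ω) := by
    intro i hi ω
    rw [hS, U]
    have : ∀ j : Fin n, (if (j : ℕ) < i then V ω j else 0)
        = (fun l => if l < i then ζ l ω else 0) (j : ℕ) := fun j => rfl
    rw [Finset.sum_congr rfl fun j _ => this j,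
      Fin.sum_univ_eq_sum_range (fun l => if l < i then ζ l ω else 0) n,
      ← Finset.sum_filter]
    congr 1
    ext j
    simp only [Finset.mem_filter, Finset.mem_range]
    omega
  have hστ : ∀ ω, σ ω = tau n (V ω) := by
    intro ω
    rw [hσ, tau]
    congr 1
    ext i
    simp only [Set.mem_setOf_eq]
    exact and_congr_right fun h1 => by rw [hSU i h1 ω]
  have hEvent : {ω | S n ω ∈ B} = V ⁻¹' {x | U n n x ∈ B} := by
    ext ω; simp only [Set.mem_setOf_eq, Set.mem_preimage, hSU n le_rfl ω]
  have hfrev : (fun ω => ((σ ω, fun i : ℕ => S (σ ω) ω - S (σ ω - min i (σ ω)) ω)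
      : ℕ × (ℕ → ℝ))) = Grev n ∘ V := by
    funext ω
    have h1 := hστ ω
    have hτn := (tau_mem n (V ω)).1
    simp only [Function.comp, Grev, h1]
    congr 1
    funext i
    rw [hSU _ hτn ω, hSU _ (by omega) ω]
  have hffwd : (fun ω => ((σ ω, fun i : ℕ => S (min i (σ ω)) ω)
      : ℕ × (ℕ → ℝ))) = Gfwd n ∘ V := by
    funext ω
    have h1 := hστ ω
    have hτn := (tau_mem n (V ω)).1
    simp only [Function.comp, Gfwd, h1]
    congr 1
    funext i
    rw [hSU _ (by omega) ω]
  have hC : MeasurableSet {x : Fin n → ℝ | U n n x ∈ B} := measurable_U n hB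
  have key : ∀ (G : (Fin n → ℝ) → ℕ × (ℕ → ℝ)), Measurable G →
      (μ[|V ⁻¹' {x | U n n x ∈ B}]).map (G ∘ V)
        = (P {x | U n n x ∈ B})⁻¹ • ((P.restrict {x | U n n x ∈ B}).map G) := by
    intro G hG
    rw [← Measure.map_map hG hVmeas]
    simp only [ProbabilityTheory.cond]
    rw [Measure.map_smul, ← hmap, Measure.restrict_map hVmeas hC,
      ← Measure.map_apply hVmeas hC, Measure.map_smul]
  rw [hEvent, hfrev, hffwd, key _ (measurable_Grev n), key _ (measurable_Gfwd n),
    prod_main n m hB]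
end
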